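/- arXiv:1210.7013 — 8 statements merged into one kernel-verified Lean document; each statement's English description precedes it below -/
import Mathlib

section
/- For the triangle case of the generalized Hölder inequality: for any measurable functions f₁, f₂, f₃ : [0,1]² → ℝ, one has (∫_{[0,1]³} f₁(x,y) f₂(y,z) f₃(x,z) dx dy dz)² ≤ ∏_{i=1}^{3} ∫_{[0,1]²} fᵢ(x,y)² dx dy. -/
open MeasureTheory unitInterval
open scoped ENNReal

private lemma cs_ennreal {α : Type*} [MeasurableSpace α] (μ : Measure α) {f g : α → ℝ≥0∞}
    (hf : AEMeasurable f μ) (hg : AEMeasurable g μ) :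
    (∫⁻ x, f x * g x ∂μ) ^ 2 ≤ (∫⁻ x, f x ^ 2 ∂μ) * (∫⁻ x, g x ^ 2 ∂μ) := by
  have hpq : Real.HolderConjugate 2 2 := Real.holderConjugate_iff.mpr ⟨one_lt_two, by norm_num⟩
  have h := ENNReal.lintegral_mul_le_Lp_mul_Lq μ hpq hf hg
  have h2 : ∀ x : ℝ≥0∞, x ^ (2 : ℝ) = x ^ 2 := fun x => by
    rw [← ENNReal.rpow_natCast x 2]; norm_num
  calc (∫⁻ x, f x * g x ∂μ) ^ 2
      ≤ ((∫⁻ x, f x ^ (2:ℝ) ∂μ) ^ (1/2:ℝ) * (∫⁻ x, g x ^ (2:ℝ) ∂μ) ^ (1/2:ℝ)) ^ 2 :=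
        pow_le_pow_left₀ zero_le h 2
    _ = (∫⁻ x, f x ^ 2 ∂μ) * (∫⁻ x, g x ^ 2 ∂μ) := by
        rw [mul_pow]
        simp_rw [h2]
        rw [← ENNReal.rpow_natCast ((∫⁻ x, f x ^ 2 ∂μ) ^ (1/2:ℝ)) 2,
          ← ENNReal.rpow_natCast ((∫⁻ x, g x ^ 2 ∂μ) ^ (1/2:ℝ)) 2,
          ← ENNReal.rpow_mul, ← ENNReal.rpow_mul]
        norm_num

private lemma key_ennreal (g₁ g₂ g₃ : I → I → ℝ≥0∞)
    (h₁ : Measurable (fun z : I × I => g₁ z.1 z.2))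
    (h₂ : Measurable (fun z : I × I => g₂ z.1 z.2))
    (h₃ : Measurable (fun z : I × I => g₃ z.1 z.2)) :
    (∫⁻ w : I × I × I, g₁ w.1 w.2.1 * g₂ w.2.1 w.2.2 * g₃ w.1 w.2.2) ^ 2
      ≤ (∫⁻ z : I × I, g₁ z.1 z.2 ^ 2) * (∫⁻ z : I × I, g₂ z.1 z.2 ^ 2)
        * (∫⁻ z : I × I, g₃ z.1 z.2 ^ 2) := by
  -- G p = ∫⁻ z, g₂ p.2 z * g₃ p.1 z
  set G : I × I → ℝ≥0∞ := fun p => ∫⁻ z, g₂ p.2 z * g₃ p.1 z with hG_def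
  have hmix : Measurable (fun q : (I × I) × I => g₂ q.1.2 q.2 * g₃ q.1.1 q.2) := by
    exact (h₂.comp ((measurable_snd.comp measurable_fst).prodMk measurable_snd)).mul
      (h₃.comp ((measurable_fst.comp measurable_fst).prodMk measurable_snd))
  have hG : Measurable G := hmix.lintegral_prod_right'
  -- fixed-argument measurability
  have hg₂y : ∀ y : I, Measurable (fun z => g₂ y z) := fun y =>
    h₂.comp (measurable_const.prodMk measurable_id)
  have hg₃x : ∀ x : I, Measurable (fun z => g₃ x z) := fun x =>
    h₃.comp (measurable_const.prodMk measurable_id)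
  -- Step C: rewrite triple integral
  have e1 : (∫⁻ w : I × I × I, g₁ w.1 w.2.1 * g₂ w.2.1 w.2.2 * g₃ w.1 w.2.2)
      = ∫⁻ p : I × I, g₁ p.1 p.2 * G p := by
    have hF : Measurable (fun w : I × I × I => g₁ w.1 w.2.1 * g₂ w.2.1 w.2.2 * g₃ w.1 w.2.2) := by
      exact ((h₁.comp (measurable_fst.prodMk (measurable_fst.comp measurable_snd))).mul
        (h₂.comp ((measurable_fst.comp measurable_snd).prodMk
          (measurable_snd.comp measurable_snd)))).mul
        (h₃.comp (measurable_fst.prodMk (measurable_snd.comp measurable_snd)))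
    have eR : (∫⁻ p : I × I, g₁ p.1 p.2 * G p)
        = ∫⁻ x, ∫⁻ y, g₁ x y * G (x, y) := by
      rw [Measure.volume_eq_prod, lintegral_prod _ (show Measurable (fun p : I × I => g₁ p.1 p.2 * G p) from h₁.mul hG).aemeasurable]
    have eL : (∫⁻ w : I × I × I, g₁ w.1 w.2.1 * g₂ w.2.1 w.2.2 * g₃ w.1 w.2.2)
        = ∫⁻ x, ∫⁻ p : I × I, g₁ x p.1 * g₂ p.1 p.2 * g₃ x p.2 := by
      rw [Measure.volume_eq_prod, lintegral_prod _ hF.aemeasurable]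
    rw [eL, eR]
    refine lintegral_congr fun x => ?_
    have hin : Measurable (fun p : I × I => g₁ x p.1 * g₂ p.1 p.2 * g₃ x p.2) := by
      exact ((h₁.comp (measurable_const.prodMk measurable_fst)).mul h₂).mul
        (h₃.comp (measurable_const.prodMk measurable_snd))
    rw [Measure.volume_eq_prod, lintegral_prod _ hin.aemeasurable]
    refine lintegral_congr fun y => ?_
    simp only [hG_def]
    rw [← lintegral_const_mul _ (show Measurable (fun z => g₂ y z * g₃ x z) from (hg₂y y).mul (hg₃x x))]
    refine lintegral_congr fun z => ?_
    ring
  -- Step B: pointwise Cauchy-Schwarz for G, then Tonelli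
  have hB : (∫⁻ p : I × I, G p ^ 2)
      ≤ (∫⁻ z : I × I, g₂ z.1 z.2 ^ 2) * (∫⁻ z : I × I, g₃ z.1 z.2 ^ 2) := by
    have hp : ∀ p : I × I, G p ^ 2
        ≤ (∫⁻ z, g₂ p.2 z ^ 2) * (∫⁻ z, g₃ p.1 z ^ 2) := fun p =>
      cs_ennreal volume (hg₂y p.2).aemeasurable (hg₃x p.1).aemeasurable
    have hA : Measurable (fun y : I => ∫⁻ z, g₂ y z ^ 2) :=
      (h₂.pow_const 2).lintegral_prod_right
    have hBm : Measurable (fun x : I => ∫⁻ z, g₃ x z ^ 2) :=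
      (h₃.pow_const 2).lintegral_prod_right
    calc (∫⁻ p : I × I, G p ^ 2)
        ≤ ∫⁻ p : I × I, (∫⁻ z, g₂ p.2 z ^ 2) * (∫⁻ z, g₃ p.1 z ^ 2) := lintegral_mono hp
      _ = ∫⁻ p : I × I, (∫⁻ z, g₃ p.1 z ^ 2) * (∫⁻ z, g₂ p.2 z ^ 2) := by
          simp_rw [mul_comm]
      _ = (∫⁻ x, ∫⁻ z, g₃ x z ^ 2) * (∫⁻ y, ∫⁻ z, g₂ y z ^ 2) := by
          rw [Measure.volume_eq_prod]
          exact lintegral_prod_mul hBm.aemeasurable hA.aemeasurable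
      _ = (∫⁻ z : I × I, g₂ z.1 z.2 ^ 2) * (∫⁻ z : I × I, g₃ z.1 z.2 ^ 2) := by
          rw [mul_comm]
          congr 1
          · rw [Measure.volume_eq_prod, lintegral_prod _ (h₂.pow_const 2).aemeasurable]
          · rw [Measure.volume_eq_prod, lintegral_prod _ (h₃.pow_const 2).aemeasurable]
  calc (∫⁻ w : I × I × I, g₁ w.1 w.2.1 * g₂ w.2.1 w.2.2 * g₃ w.1 w.2.2) ^ 2
      = (∫⁻ p : I × I, g₁ p.1 p.2 * G p) ^ 2 := by rw [e1]
    _ ≤ (∫⁻ z : I × I, g₁ z.1 z.2 ^ 2) * (∫⁻ p : I × I, G p ^ 2) :=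
        cs_ennreal volume h₁.aemeasurable hG.aemeasurable
    _ ≤ (∫⁻ z : I × I, g₁ z.1 z.2 ^ 2)
          * ((∫⁻ z : I × I, g₂ z.1 z.2 ^ 2) * (∫⁻ z : I × I, g₃ z.1 z.2 ^ 2)) :=
        mul_le_mul_right hB _
    _ = _ := (mul_assoc _ _ _).symm

/-- **Triangle case of the generalized Hölder inequality**:
`(∫ f₁(x,y) f₂(y,z) f₃(x,z) dx dy dz)² ≤ ∏ᵢ ∫ fᵢ²`. -/
theorem triangle_holder
    (f₁ f₂ f₃ : I → I → ℝ)
    (hm₁ : Measurable (fun z : I × I => f₁ z.1 z.2))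
    (hm₂ : Measurable (fun z : I × I => f₂ z.1 z.2))
    (hm₃ : Measurable (fun z : I × I => f₃ z.1 z.2))
    (hi₁ : Integrable (fun z : I × I => (f₁ z.1 z.2) ^ 2))
    (hi₂ : Integrable (fun z : I × I => (f₂ z.1 z.2) ^ 2))
    (hi₃ : Integrable (fun z : I × I => (f₃ z.1 z.2) ^ 2)) :
    (∫ w : I × I × I, f₁ w.1 w.2.1 * f₂ w.2.1 w.2.2 * f₃ w.1 w.2.2) ^ 2
      ≤ (∫ z : I × I, (f₁ z.1 z.2) ^ 2) * (∫ z : I × I, (f₂ z.1 z.2) ^ 2)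
        * (∫ z : I × I, (f₃ z.1 z.2) ^ 2) := by
  -- ennnorm versions
  have key := key_ennreal (fun x y => (‖f₁ x y‖₊ : ℝ≥0∞)) (fun x y => (‖f₂ x y‖₊ : ℝ≥0∞))
    (fun x y => (‖f₃ x y‖₊ : ℝ≥0∞)) hm₁.enorm hm₂.enorm hm₃.enorm
  -- identify each RHS factor
  have hA : ∀ (f : I → I → ℝ), Measurable (fun z : I × I => f z.1 z.2) →
      Integrable (fun z : I × I => (f z.1 z.2) ^ 2) →
      (∫⁻ z : I × I, ((‖f z.1 z.2‖₊ : ℝ≥0∞)) ^ 2)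
        = ENNReal.ofReal (∫ z : I × I, (f z.1 z.2) ^ 2) := by
    intro f hm hi
    rw [ofReal_integral_eq_lintegral_ofReal hi (ae_of_all _ fun z => sq_nonneg _)]
    refine lintegral_congr fun z => ?_
    rw [← sq_abs, ENNReal.ofReal_pow (abs_nonneg _), ← enorm_eq_nnnorm, Real.enorm_eq_ofReal_abs]
  have hA₁ := hA f₁ hm₁ hi₁
  have hA₂ := hA f₂ hm₂ hi₂
  have hA₃ := hA f₃ hm₃ hi₃
  set A₁ := ∫⁻ z : I × I, ((‖f₁ z.1 z.2‖₊ : ℝ≥0∞)) ^ 2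
  set A₂ := ∫⁻ z : I × I, ((‖f₂ z.1 z.2‖₊ : ℝ≥0∞)) ^ 2
  set A₃ := ∫⁻ z : I × I, ((‖f₃ z.1 z.2‖₊ : ℝ≥0∞)) ^ 2
  have hfin : A₁ * A₂ * A₃ ≠ ∞ := by
    rw [hA₁, hA₂, hA₃]
    exact ENNReal.mul_ne_top (ENNReal.mul_ne_top ENNReal.ofReal_ne_top ENNReal.ofReal_ne_top)
      ENNReal.ofReal_ne_top
  set L := ∫⁻ w : I × I × I, (‖f₁ w.1 w.2.1‖₊ : ℝ≥0∞) * (‖f₂ w.2.1 w.2.2‖₊ : ℝ≥0∞)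
    * (‖f₃ w.1 w.2.2‖₊ : ℝ≥0∞) with hL_def
  have hnorm : ‖∫ w : I × I × I, f₁ w.1 w.2.1 * f₂ w.2.1 w.2.2 * f₃ w.1 w.2.2‖ ≤ L.toReal := by
    refine le_trans (norm_integral_le_lintegral_norm _) ?_
    apply ENNReal.toReal_mono
    · intro h
      rw [h] at key
      have : (⊤ : ℝ≥0∞) ^ 2 ≤ A₁ * A₂ * A₃ := key
      simp [ENNReal.top_pow] at this
      exact hfin (by simp [this])
    · refine le_of_eq (lintegral_congr fun w => ?_)
      rw [← enorm_eq_nnnorm, ← enorm_eq_nnnorm, ← enorm_eq_nnnorm, ← ofReal_norm, ← ofReal_norm, ← ofReal_norm,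
        ← ENNReal.ofReal_mul (norm_nonneg _), ← ENNReal.ofReal_mul (mul_nonneg (norm_nonneg _)
        (norm_nonneg _)), norm_mul, norm_mul]
  calc (∫ w : I × I × I, f₁ w.1 w.2.1 * f₂ w.2.1 w.2.2 * f₃ w.1 w.2.2) ^ 2
      = ‖∫ w : I × I × I, f₁ w.1 w.2.1 * f₂ w.2.1 w.2.2 * f₃ w.1 w.2.2‖ ^ 2 := by
        rw [Real.norm_eq_abs, sq_abs]
    _ ≤ L.toReal ^ 2 := pow_le_pow_left₀ (norm_nonneg _) hnorm 2
    _ = (L ^ 2).toReal := (ENNReal.toReal_pow _ _).symm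
    _ ≤ (A₁ * A₂ * A₃).toReal := ENNReal.toReal_mono hfin key
    _ = (∫ z : I × I, (f₁ z.1 z.2) ^ 2) * (∫ z : I × I, (f₂ z.1 z.2) ^ 2)
        * (∫ z : I × I, (f₃ z.1 z.2) ^ 2) := by
        rw [hA₁, hA₂, hA₃, ENNReal.toReal_mul, ENNReal.toReal_mul,
          ENNReal.toReal_ofReal (integral_nonneg fun z => sq_nonneg _),
          ENNReal.toReal_ofReal (integral_nonneg fun z => sq_nonneg _),
          ENNReal.toReal_ofReal (integral_nonneg fun z => sq_nonneg _)]
end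

section
/- Let H be a finite simple graph with maximum degree at most d (d ≥ 1), and let f : [0,1]² → ℝ be a bounded symmetric measurable function. Then t(H, f) ≤ ‖f‖_d^{e(H)}, where t(H,f) = ∫ ∏_{(i,j)∈E(H)} f(x_i,x_j) dx₁⋯dx_m (m = |V(H)|), e(H) is the number of edges of H, and ‖f‖_d = (∫ |f|^d)^{1/d}. -/
open MeasureTheory unitInterval

/-- The homomorphism density `t(H, f)` of a finite simple graph `H` in a kernel
`f : [0,1]² → ℝ`. -/
noncomputable def homDensity {m : ℕ} (H : SimpleGraph (Fin m)) [DecidableRel H.Adj]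
    (f : I → I → ℝ) : ℝ :=
  ∫ x : Fin m → I,
    ∏ e ∈ Finset.univ.filter (fun e : Fin m × Fin m => e.1 < e.2 ∧ H.Adj e.1 e.2),
      f (x e.1) (x e.2)

namespace FinnerAux

open Finset ENNReal

variable {m : ℕ} (H : SimpleGraph (Fin m)) [DecidableRel H.Adj] (d : ℕ)
  (F : I → I → ℝ≥0∞)

/-- Edges of `H` (as increasing ordered pairs) with both endpoints in `s`. -/
def Es (s : Finset (Fin m)) : Finset (Fin m × Fin m) :=
  Finset.univ.filter fun e : Fin m × Fin m =>
    e.1 < e.2 ∧ H.Adj e.1 e.2 ∧ e.1 ∈ s ∧ e.2 ∈ s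

/-- Number of neighbours of `v` outside `s`. -/
def cdeg (s : Finset (Fin m)) (v : Fin m) : ℕ := (H.neighborFinset v \ s).card

/-- Total weight of the stage `s`. -/
def wt (s : Finset (Fin m)) : ℕ := (Es H s).card + ∑ v ∈ s, cdeg H s v

/-- The `L^d`-marginal of `F` in one variable. -/
noncomputable def Gf : I → ℝ≥0∞ := fun t => (∫⁻ y, F y t ^ (d : ℝ)) ^ ((1 : ℝ) / d)

/-- `‖F‖_d ^ d` as a lower integral. -/
noncomputable def ND : ℝ≥0∞ := ∫⁻ z : I × I, F z.1 z.2 ^ (d : ℝ)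

/-- The integrand at stage `s`. -/
noncomputable def Phi (s : Finset (Fin m)) : (Fin m → I) → ℝ≥0∞ := fun x =>
  (∏ e ∈ Es H s, F (x e.1) (x e.2)) * ∏ v ∈ s, Gf d F (x v) ^ (cdeg H s v : ℝ)

section lemmas

variable {H d F}

lemma measurable_Gf (hF : Measurable fun z : I × I => F z.1 z.2) :
    Measurable (Gf d F) := by
  have h1 : Measurable fun z : I × I => F z.2 z.1 ^ (d : ℝ) :=
    (hF.comp measurable_swap).pow_const _
  exact (h1.lintegral_prod_right').pow_const _

lemma measurable_Phi (hF : Measurable fun z : I × I => F z.1 z.2)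
    (s : Finset (Fin m)) : Measurable (Phi H d F s) := by
  apply Measurable.mul
  · exact Finset.measurable_prod _ fun e _ =>
      hF.comp' (Measurable.prodMk (f := fun x : Fin m → I => x e.1) (g := fun x : Fin m → I => x e.2) (measurable_pi_apply e.1) (measurable_pi_apply e.2))
  · exact Finset.measurable_prod _ fun v _ =>
      ((measurable_Gf hF).comp (measurable_pi_apply v)).pow_const _

lemma lintegral_Gf_pow (hF : Measurable fun z : I × I => F z.1 z.2) (hd : d ≠ 0) :
    ∫⁻ t, Gf d F t ^ (d : ℝ) = ND d F := by
  have hd' : (d : ℝ) ≠ 0 := Nat.cast_ne_zero.mpr hd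
  have h1 : ∀ t : I, Gf d F t ^ (d : ℝ) = ∫⁻ y, F y t ^ (d : ℝ) := by
    intro t
    rw [Gf, ← ENNReal.rpow_mul, one_div, inv_mul_cancel₀ hd', ENNReal.rpow_one]
  simp_rw [h1]
  rw [ND, Measure.volume_eq_prod, lintegral_prod_symm]
  exact (hF.pow_const _).aemeasurable

lemma ND_Gf (hF : Measurable fun z : I × I => F z.1 z.2) (x : I) :
    (∫⁻ t, F t x ^ (d : ℝ)) ^ ((1:ℝ)/d) = Gf d F x := rfl

/-- Hölder step: integrating out one vertex. -/
lemma step_hoelder (hd : 1 ≤ d) (hF : Measurable fun z : I × I => F z.1 z.2)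
    (A : Finset (Fin m)) (c : ℕ) (hcard : A.card + c ≤ d) (x : Fin m → I) :
    ∫⁻ t : I, (∏ u ∈ A, F t (x u)) * Gf d F t ^ (c : ℝ)
      ≤ (∏ u ∈ A, Gf d F (x u)) * ND d F ^ ((c : ℝ) / d) := by
  classical
  have hd0 : (d : ℝ) ≠ 0 := Nat.cast_ne_zero.mpr (by omega)
  set k := A.card with hk
  -- index type for Hölder
  set fam : Bool ⊕ Fin m → I → ℝ≥0∞ :=
    Sum.elim (fun b => if b then (fun t => Gf d F t ^ (d : ℝ)) else fun _ => 1)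
      (fun u t => F t (x u) ^ (d : ℝ)) with hfam
  set p : Bool ⊕ Fin m → ℝ :=
    Sum.elim (fun b => if b then (c : ℝ) / d else 1 - ((k : ℝ) + c) / d)
      (fun _ => (1 : ℝ) / d) with hp
  set S : Finset (Bool ⊕ Fin m) :=
    A.map ⟨Sum.inr, Sum.inr_injective⟩ ∪ {Sum.inl true, Sum.inl false} with hS
  have hdisj : Disjoint (A.map ⟨Sum.inr, Sum.inr_injective⟩)
      ({Sum.inl true, Sum.inl false} : Finset (Bool ⊕ Fin m)) := by
    simp [Finset.disjoint_left]
  have htf : (Sum.inl true : Bool ⊕ Fin m) ≠ Sum.inl false := by simp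
  have hpsum : ∑ i ∈ S, p i = 1 := by
    rw [hS, Finset.sum_union hdisj, Finset.sum_map, Finset.sum_pair htf]
    simp only [hp, Sum.elim_inr, Sum.elim_inl, if_true, if_false,
      Finset.sum_const, nsmul_eq_mul, ← hk, Function.Embedding.coeFn_mk, Bool.false_eq_true, reduceIte]
    field_simp
    ring
  have hcard' : ((k : ℝ) + c) / d ≤ 1 := by
    rw [div_le_one (by positivity)]
    exact_mod_cast hcard
  have hpnonneg : ∀ i ∈ S, 0 ≤ p i := by
    rintro (b | u) _
    · cases b <;> simp only [hp, Sum.elim_inl, reduceIte, Bool.false_eq_true, if_false, if_true]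
      · linarith
      · positivity
    · simp only [hp, Sum.elim_inr]; positivity
  have hmeas : ∀ i ∈ S, AEMeasurable (fam i) (volume : Measure I) := by
    rintro (b | u) _
    · cases b <;> simp only [hfam, Sum.elim_inl, reduceIte, Bool.false_eq_true, if_false, if_true]
      · exact aemeasurable_const
      · exact ((measurable_Gf hF).pow_const _).aemeasurable
    · simp only [hfam, Sum.elim_inr]
      exact ((hF.comp (measurable_id.prodMk measurable_const)).pow_const _).aemeasurable
  have key := ENNReal.lintegral_prod_norm_pow_le (μ := (volume : Measure I))
      S hmeas hpsum hpnonneg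
  -- rewrite LHS
  have hL : ∀ t : I, ∏ i ∈ S, fam i t ^ p i
      = (∏ u ∈ A, F t (x u)) * Gf d F t ^ (c : ℝ) := by
    intro t
    rw [hS, Finset.prod_union hdisj, Finset.prod_map, Finset.prod_pair htf]
    simp only [hfam, hp, Sum.elim_inl, Sum.elim_inr, reduceIte, Bool.false_eq_true, if_false, if_true,
      Function.Embedding.coeFn_mk, ENNReal.one_rpow]
    rw [mul_one]
    congr 1
    · refine Finset.prod_congr rfl fun u _ => ?_
      rw [← ENNReal.rpow_mul, mul_one_div, div_self hd0, ENNReal.rpow_one]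
    · rw [← ENNReal.rpow_mul, mul_div_assoc', mul_comm, mul_div_assoc,
        div_self hd0, mul_one]
  -- rewrite RHS
  have hR : ∏ i ∈ S, (∫⁻ t, fam i t) ^ p i
      = (∏ u ∈ A, Gf d F (x u)) * ND d F ^ ((c : ℝ) / d) := by
    rw [hS, Finset.prod_union hdisj, Finset.prod_map, Finset.prod_pair htf]
    simp only [hfam, hp, Sum.elim_inl, Sum.elim_inr, reduceIte, Bool.false_eq_true, if_false, if_true,
      Function.Embedding.coeFn_mk]
    rw [lintegral_const, measure_univ, mul_one, ENNReal.one_rpow, mul_one,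
      lintegral_Gf_pow hF (by omega)]
    congr 1
  calc ∫⁻ t : I, (∏ u ∈ A, F t (x u)) * Gf d F t ^ (c : ℝ)
      = ∫⁻ t, ∏ i ∈ S, fam i t ^ p i := by simp_rw [hL]
    _ ≤ ∏ i ∈ S, (∫⁻ t, fam i t) ^ p i := key
    _ = _ := hR

lemma Es_empty : Es H (∅ : Finset (Fin m)) = ∅ := by
  ext e; simp [Es]

lemma Es_insert_eq {v : Fin m} {s : Finset (Fin m)} (hv : v ∉ s) :
    Es H (insert v s) = Es H s ∪ (H.neighborFinset v ∩ s).image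
      (fun u => if u < v then (u, v) else (v, u)) := by
  ext ⟨a, b⟩
  simp only [Es, Finset.mem_filter, Finset.mem_univ, true_and, Finset.mem_union,
    Finset.mem_image, Finset.mem_inter, SimpleGraph.mem_neighborFinset, Finset.mem_insert]
  constructor
  · rintro ⟨hlt, hadj, (rfl | h1), (rfl | h2)⟩
    · exact absurd hlt (lt_irrefl _)
    · exact Or.inr ⟨b, ⟨hadj, h2⟩, if_neg (not_lt.mpr hlt.le)⟩
    · exact Or.inr ⟨a, ⟨hadj.symm, h1⟩, if_pos hlt⟩
    · exact Or.inl ⟨hlt, hadj, h1, h2⟩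
  · rintro (⟨hlt, hadj, h1, h2⟩ | ⟨u, ⟨hadj, hu⟩, heq⟩)
    · exact ⟨hlt, hadj, Or.inr h1, Or.inr h2⟩
    · by_cases hlt : u < v
      · rw [if_pos hlt] at heq
        simp only [Prod.mk.injEq] at heq
        obtain ⟨rfl, rfl⟩ := heq
        exact ⟨hlt, hadj.symm, Or.inr hu, Or.inl rfl⟩
      · rw [if_neg hlt] at heq
        simp only [Prod.mk.injEq] at heq
        obtain ⟨rfl, rfl⟩ := heq
        exact ⟨lt_of_le_of_ne (not_lt.mp hlt) hadj.ne, hadj, Or.inl rfl, Or.inr hu⟩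

lemma Es_insert_disjoint {v : Fin m} {s : Finset (Fin m)} (hv : v ∉ s) :
    Disjoint (Es H s) ((H.neighborFinset v ∩ s).image
      (fun u => if u < v then (u, v) else (v, u))) := by
  rw [Finset.disjoint_left]
  rintro ⟨a, b⟩ hmem hmem2
  simp only [Es, Finset.mem_filter, Finset.mem_univ, true_and] at hmem
  obtain ⟨_, _, h1, h2⟩ := hmem
  simp only [Finset.mem_image, Finset.mem_inter, SimpleGraph.mem_neighborFinset] at hmem2
  obtain ⟨u, _, heq⟩ := hmem2
  by_cases hlt : u < v
  · rw [if_pos hlt] at heq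
    simp only [Prod.mk.injEq] at heq
    exact hv (heq.2 ▸ h2)
  · rw [if_neg hlt] at heq
    simp only [Prod.mk.injEq] at heq
    exact hv (heq.1 ▸ h1)

lemma ite_injOn {v : Fin m} {s : Finset (Fin m)} :
    ∀ u1 ∈ H.neighborFinset v ∩ s, ∀ u2 ∈ H.neighborFinset v ∩ s,
      (if u1 < v then (u1, v) else (v, u1)) = (if u2 < v then (u2, v) else (v, u2)) → u1 = u2 := by
  intro u1 h1 u2 h2 heq
  have n1 : u1 ≠ v := by
    simp only [Finset.mem_inter, SimpleGraph.mem_neighborFinset] at h1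
    exact h1.1.ne'
  have n2 : u2 ≠ v := by
    simp only [Finset.mem_inter, SimpleGraph.mem_neighborFinset] at h2
    exact h2.1.ne'
  split_ifs at heq <;> simp only [Prod.mk.injEq] at heq <;> tauto

lemma card_Es_insert {v : Fin m} {s : Finset (Fin m)} (hv : v ∉ s) :
    (Es H (insert v s)).card = (Es H s).card + (H.neighborFinset v ∩ s).card := by
  rw [Es_insert_eq hv, Finset.card_union_of_disjoint (Es_insert_disjoint hv),
    Finset.card_image_of_injOn ite_injOn]

lemma cdeg_insert {v : Fin m} {s : Finset (Fin m)} (hv : v ∉ s) (u : Fin m) :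
    cdeg H s u = cdeg H (insert v s) u + (if H.Adj v u then 1 else 0) := by
  rw [cdeg, cdeg, Finset.sdiff_insert]
  by_cases h : H.Adj v u
  · rw [if_pos h, Finset.card_erase_of_mem, Nat.sub_add_cancel]
    · rw [Nat.one_le_iff_ne_zero, ← Nat.pos_iff_ne_zero, Finset.card_pos]
      exact ⟨v, Finset.mem_sdiff.mpr ⟨SimpleGraph.mem_neighborFinset _ _ _ |>.mpr h.symm, hv⟩⟩
    · exact Finset.mem_sdiff.mpr ⟨SimpleGraph.mem_neighborFinset _ _ _ |>.mpr h.symm, hv⟩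
  · rw [if_neg h, Finset.erase_eq_of_notMem, add_zero]
    intro hmem
    exact h ((SimpleGraph.mem_neighborFinset _ _ _).mp (Finset.mem_sdiff.mp hmem).1).symm

lemma inter_eq_filter {v : Fin m} {s : Finset (Fin m)} :
    H.neighborFinset v ∩ s = s.filter (fun u => H.Adj v u) := by
  ext u; simp [and_comm]

lemma wt_insert {v : Fin m} {s : Finset (Fin m)} (hv : v ∉ s) :
    wt H (insert v s) = cdeg H (insert v s) v + wt H s := by
  have h1 := card_Es_insert (H := H) hv
  have h2 : ∑ u ∈ s, cdeg H s u
      = ∑ u ∈ s, cdeg H (insert v s) u + (H.neighborFinset v ∩ s).card := by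
    rw [Finset.sum_congr rfl (fun u _ => cdeg_insert hv u), Finset.sum_add_distrib,
      inter_eq_filter, Finset.card_filter]
  have h3 : ∑ u ∈ insert v s, cdeg H (insert v s) u
      = cdeg H (insert v s) v + ∑ u ∈ s, cdeg H (insert v s) u := Finset.sum_insert hv
  rw [wt, wt, h1, h3]
  omega

lemma card_A_add_cdeg_le {v : Fin m} {s : Finset (Fin m)} (hv : v ∉ s) (d : ℕ)
    (hdeg : H.degree v ≤ d) :
    (H.neighborFinset v ∩ s).card + cdeg H (insert v s) v ≤ d := by
  have hdisj : Disjoint (H.neighborFinset v ∩ s) (H.neighborFinset v \ insert v s) := by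
    rw [Finset.disjoint_left]
    intro u hu hu2
    rw [Finset.mem_sdiff, Finset.mem_insert] at hu2
    exact hu2.2 (Or.inr (Finset.mem_inter.mp hu).2)
  have hsub : (H.neighborFinset v ∩ s) ∪ (H.neighborFinset v \ insert v s)
      ⊆ H.neighborFinset v := by
    intro u hu
    rcases Finset.mem_union.mp hu with h | h
    · exact (Finset.mem_inter.mp h).1
    · exact (Finset.mem_sdiff.mp h).1
  calc (H.neighborFinset v ∩ s).card + cdeg H (insert v s) v
      = ((H.neighborFinset v ∩ s) ∪ (H.neighborFinset v \ insert v s)).card :=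
        (Finset.card_union_of_disjoint hdisj).symm
    _ ≤ (H.neighborFinset v).card := Finset.card_le_card hsub
    _ = H.degree v := H.card_neighborFinset_eq_degree v
    _ ≤ d := hdeg

/-- The main induction: Finner's inequality for graphs. -/
lemma finner (hd : 1 ≤ d) (hF : Measurable fun z : I × I => F z.1 z.2)
    (hFsymm : ∀ a b, F a b = F b a) (hdeg : ∀ v, H.degree v ≤ d)
    (s : Finset (Fin m)) :
    ∀ x, (∫⋯∫⁻_s, Phi H d F s) x ≤ ND d F ^ ((wt H s : ℝ) / d) := by
  classical
  induction s using Finset.induction_on with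
  | empty =>
    intro x
    rw [lmarginal_empty]
    simp [Phi, Es_empty, wt, ENNReal.rpow_zero]
  | @insert v s hv ih =>
    intro x
    rw [lmarginal_insert' _ (measurable_Phi hF _) hv]
    set A := H.neighborFinset v ∩ s with hA
    set c := cdeg H (insert v s) v with hc
    have hAc : A.card + c ≤ d := card_A_add_cdeg_le hv d (hdeg v)
    have key : ∀ y : Fin m → I,
        (∫⁻ t, Phi H d F (insert v s) (Function.update y v t))
          ≤ ND d F ^ ((c : ℝ) / d) * Phi H d F s y := by
      intro y
      have hsplit : ∀ t : I, Phi H d F (insert v s) (Function.update y v t)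
          = ((∏ e ∈ Es H s, F (y e.1) (y e.2))
              * ∏ u ∈ s, Gf d F (y u) ^ (cdeg H (insert v s) u : ℝ))
            * ((∏ u ∈ A, F t (y u)) * Gf d F t ^ (c : ℝ)) := by
        intro t
        have upd_ne : ∀ w : Fin m, w ∈ s → Function.update y v t w = y w := by
          intro w hw; exact Function.update_of_ne (by rintro rfl; exact hv hw) _ _
        rw [Phi, Es_insert_eq hv, Finset.prod_union (Es_insert_disjoint hv),
          Finset.prod_image ite_injOn, Finset.prod_insert hv, Function.update_self]
        have e1 : ∏ e ∈ Es H s,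
            F (Function.update y v t e.1) (Function.update y v t e.2)
            = ∏ e ∈ Es H s, F (y e.1) (y e.2) := by
          refine Finset.prod_congr rfl fun e he => ?_
          simp only [Es, Finset.mem_filter] at he
          rw [upd_ne _ he.2.2.2.1, upd_ne _ he.2.2.2.2]
        have e2 : ∏ u ∈ A,
            F (Function.update y v t (if u < v then (u, v) else (v, u)).1)
              (Function.update y v t (if u < v then (u, v) else (v, u)).2)
            = ∏ u ∈ A, F t (y u) := by
          refine Finset.prod_congr rfl fun u hu => ?_
          have hus : u ∈ s := (Finset.mem_inter.mp hu).2
          by_cases hlt : u < v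
          · rw [if_pos hlt]
            simp only
            rw [upd_ne _ hus, Function.update_self, hFsymm]
          · rw [if_neg hlt]
            simp only
            rw [upd_ne _ hus, Function.update_self]
        have e3 : ∏ u ∈ s, Gf d F (Function.update y v t u) ^ (cdeg H (insert v s) u : ℝ)
            = ∏ u ∈ s, Gf d F (y u) ^ (cdeg H (insert v s) u : ℝ) := by
          refine Finset.prod_congr rfl fun u hu => ?_
          rw [upd_ne _ hu]
        rw [e1, e2, e3]
        ring
      have hGmeas : Measurable fun t : I => (∏ u ∈ A, F t (y u)) * Gf d F t ^ (c : ℝ) := by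
        apply Measurable.mul
        · exact Finset.measurable_prod _ fun u _ =>
            hF.comp' (measurable_id.prodMk measurable_const)
        · exact (measurable_Gf hF).pow_const _
      calc ∫⁻ t, Phi H d F (insert v s) (Function.update y v t)
          = ∫⁻ t, ((∏ e ∈ Es H s, F (y e.1) (y e.2))
              * ∏ u ∈ s, Gf d F (y u) ^ (cdeg H (insert v s) u : ℝ))
              * ((∏ u ∈ A, F t (y u)) * Gf d F t ^ (c : ℝ)) := by simp_rw [hsplit]
        _ = ((∏ e ∈ Es H s, F (y e.1) (y e.2))
              * ∏ u ∈ s, Gf d F (y u) ^ (cdeg H (insert v s) u : ℝ))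
              * ∫⁻ t, (∏ u ∈ A, F t (y u)) * Gf d F t ^ (c : ℝ) :=
            lintegral_const_mul _ hGmeas
        _ ≤ ((∏ e ∈ Es H s, F (y e.1) (y e.2))
              * ∏ u ∈ s, Gf d F (y u) ^ (cdeg H (insert v s) u : ℝ))
              * ((∏ u ∈ A, Gf d F (y u)) * ND d F ^ ((c : ℝ) / d)) :=
            mul_le_mul_right (step_hoelder hd hF A c hAc y) _
        _ = ND d F ^ ((c : ℝ) / d) * Phi H d F s y := by
            have hmerge : (∏ u ∈ s, Gf d F (y u) ^ (cdeg H (insert v s) u : ℝ))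
                * ∏ u ∈ A, Gf d F (y u)
                = ∏ u ∈ s, Gf d F (y u) ^ (cdeg H s u : ℝ) := by
              have hAsub : s ∩ A = A := by
                rw [Finset.inter_eq_right]
                exact fun u hu => (Finset.mem_inter.mp hu).2
              rw [← hAsub, ← Finset.prod_ite_mem s A (fun u => Gf d F (y u)),
                ← Finset.prod_mul_distrib]
              refine Finset.prod_congr rfl fun u hu => ?_
              by_cases huA : u ∈ A
              · have hadj : H.Adj v u := (SimpleGraph.mem_neighborFinset _ _ _).mp
                  (Finset.mem_inter.mp huA).1
                rw [if_pos huA, cdeg_insert hv u, if_pos hadj]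
                push_cast
                rw [ENNReal.rpow_add_of_nonneg _ _ (by positivity) zero_le_one,
                  ENNReal.rpow_one]
              · have hnadj : ¬ H.Adj v u := by
                  intro hadj
                  exact huA (Finset.mem_inter.mpr
                    ⟨(SimpleGraph.mem_neighborFinset _ _ _).mpr hadj, hu⟩)
                rw [if_neg huA, cdeg_insert hv u, if_neg hnadj, add_zero, mul_one]
            rw [Phi, ← hmerge]
            ring
    calc (∫⋯∫⁻_s, fun y => ∫⁻ t, Phi H d F (insert v s) (Function.update y v t)) x
        ≤ (∫⋯∫⁻_s, fun y => ND d F ^ ((c : ℝ) / d) * Phi H d F s y) x :=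
          lmarginal_mono (fun y => key y) x
      _ = ND d F ^ ((c : ℝ) / d) * (∫⋯∫⁻_s, Phi H d F s) x := by
          simp only [lmarginal]
          exact lintegral_const_mul _ ((measurable_Phi hF s).comp measurable_updateFinset)
      _ ≤ ND d F ^ ((c : ℝ) / d) * ND d F ^ ((wt H s : ℝ) / d) := mul_le_mul_right (ih x) _
      _ = ND d F ^ ((wt H (insert v s) : ℝ) / d) := by
          rw [← ENNReal.rpow_add_of_nonneg _ _ (by positivity) (by positivity)]
          congr 1
          rw [wt_insert hv]
          push_cast
          ring

lemma Es_univ_eq : Es H (Finset.univ : Finset (Fin m))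
    = Finset.univ.filter (fun e : Fin m × Fin m => e.1 < e.2 ∧ H.Adj e.1 e.2) := by
  ext e; simp [Es]

lemma card_Es_univ : (Es H (Finset.univ : Finset (Fin m))).card = H.edgeFinset.card := by
  classical
  apply Finset.card_bij (s := Es H Finset.univ) (t := H.edgeFinset) (fun (e : Fin m × Fin m) _ => s(e.1, e.2))
  · rintro ⟨a, b⟩ ha
    simp only [Es, Finset.mem_filter, Finset.mem_univ, true_and] at ha
    rw [SimpleGraph.mem_edgeFinset]
    exact ha.2.1
  · rintro ⟨a1, a2⟩ ha ⟨b1, b2⟩ hb heq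
    simp only [Es, Finset.mem_filter, Finset.mem_univ, true_and] at ha hb
    rw [Sym2.eq_iff] at heq
    rcases heq with ⟨rfl, rfl⟩ | ⟨rfl, rfl⟩
    · rfl
    · exact absurd (ha.1.trans hb.1) (lt_irrefl _)
  · intro e he
    induction e with
    | _ a b =>
      have hadj : H.Adj a b := by
        rwa [SimpleGraph.mem_edgeFinset, SimpleGraph.mem_edgeSet] at he
      rcases hadj.ne.lt_or_gt with h | h
      · exact ⟨(a, b), by simp [Es, h, hadj], rfl⟩
      · exact ⟨(b, a), by simp [Es, h, hadj.symm], Sym2.eq_swap⟩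

lemma wt_univ : wt H (Finset.univ : Finset (Fin m)) = H.edgeFinset.card := by
  rw [wt, card_Es_univ]
  have : ∀ v : Fin m, cdeg H (Finset.univ : Finset (Fin m)) v = 0 := by
    intro v; simp [cdeg]
  simp [this]

lemma Phi_univ (x : Fin m → I) : Phi H d F (Finset.univ : Finset (Fin m)) x
    = ∏ e ∈ Es H Finset.univ, F (x e.1) (x e.2) := by
  have : ∀ v : Fin m, cdeg H (Finset.univ : Finset (Fin m)) v = 0 := by
    intro v; simp [cdeg]
  simp [Phi, this]

end lemmas

end FinnerAux

open scoped ENNReal in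
/-- If `H` has maximum degree at most `d` and `f` is a bounded symmetric measurable
kernel, then `t(H, f) ≤ ‖f‖_d ^ e(H)`. -/
theorem homDensity_le_Lnorm_pow
    {m : ℕ} (H : SimpleGraph (Fin m)) [DecidableRel H.Adj]
    (d : ℕ) (hd : 1 ≤ d) (hdeg : ∀ v, H.degree v ≤ d)
    (f : I → I → ℝ)
    (hmeas : Measurable (fun z : I × I => f z.1 z.2))
    (hsymm : ∀ x y, f x y = f y x)
    (hbdd : ∃ C : ℝ, ∀ x y, |f x y| ≤ C) :
    homDensity H f
      ≤ ((∫ z : I × I, |f z.1 z.2| ^ (d : ℝ)) ^ ((1 : ℝ) / d)) ^ H.edgeFinset.card := by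
  classical
  obtain ⟨C, hC⟩ := hbdd
  have hC0 : 0 ≤ C := le_trans (abs_nonneg _) (hC 0 0)
  set E : Finset (Fin m × Fin m) :=
    Finset.univ.filter (fun e : Fin m × Fin m => e.1 < e.2 ∧ H.Adj e.1 e.2) with hE
  set F : I → I → ℝ≥0∞ := fun a b => ENNReal.ofReal |f a b| with hFdef
  have hFmeas : Measurable fun z : I × I => F z.1 z.2 := hmeas.abs.ennreal_ofReal
  have hFsymm : ∀ a b : I, F a b = F b a := fun a b => by rw [hFdef]; simp [hsymm a b]
  have hPmeas : Measurable fun x : Fin m → I => ∏ e ∈ E, f (x e.1) (x e.2) :=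
    Finset.measurable_prod _ fun e _ =>
      hmeas.comp' (Measurable.prodMk (f := fun x : Fin m → I => x e.1) (g := fun x : Fin m → I => x e.2) (measurable_pi_apply e.1) (measurable_pi_apply e.2))
  have hQ : ∀ x : Fin m → I,
      |∏ e ∈ E, f (x e.1) (x e.2)| = ∏ e ∈ E, |f (x e.1) (x e.2)| := fun x =>
    Finset.abs_prod E _
  have hPint : Integrable (fun x : Fin m → I => ∏ e ∈ E, f (x e.1) (x e.2)) := by
    apply Integrable.mono' (integrable_const (C ^ E.card)) hPmeas.aestronglyMeasurable
    refine Filter.Eventually.of_forall fun x => ?_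
    rw [Real.norm_eq_abs, hQ x]
    calc ∏ e ∈ E, |f (x e.1) (x e.2)| ≤ ∏ _e ∈ E, C :=
          Finset.prod_le_prod (fun _ _ => abs_nonneg _) (fun e _ => hC _ _)
      _ = C ^ E.card := Finset.prod_const C
  have h1 : homDensity H f ≤ ∫ x : Fin m → I, ∏ e ∈ E, |f (x e.1) (x e.2)| := by
    rw [homDensity]
    have heq : (fun x : Fin m → I => ∏ e ∈ E, |f (x e.1) (x e.2)|)
        = fun x => |∏ e ∈ E, f (x e.1) (x e.2)| := funext fun x => (hQ x).symm
    rw [heq]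
    exact integral_mono hPint hPint.abs (fun x => le_abs_self _)
  have h2 : ∫ x : Fin m → I, ∏ e ∈ E, |f (x e.1) (x e.2)|
      = (∫⁻ x : Fin m → I, FinnerAux.Phi H d F Finset.univ x).toReal := by
    rw [integral_eq_lintegral_of_nonneg_ae
      (Filter.Eventually.of_forall fun x => Finset.prod_nonneg fun e _ => abs_nonneg _)
      ((Finset.measurable_prod E (fun e _ => (hmeas.comp' (Measurable.prodMk (f := fun x : Fin m → I => x e.1) (g := fun x : Fin m → I => x e.2) (measurable_pi_apply e.1) (measurable_pi_apply e.2))).abs : ∀ e ∈ E, Measurable fun x : Fin m → I => |f (x e.1) (x e.2)|)).aestronglyMeasurable)]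
    congr 1
    refine lintegral_congr fun x => ?_
    rw [ENNReal.ofReal_prod_of_nonneg (fun e _ => abs_nonneg _),
      FinnerAux.Phi_univ, FinnerAux.Es_univ_eq]
  have hND : FinnerAux.ND d F ≠ ⊤ := by
    have hle : FinnerAux.ND d F ≤ ENNReal.ofReal C ^ (d : ℝ) := by
      rw [FinnerAux.ND]
      calc ∫⁻ z : I × I, F z.1 z.2 ^ (d : ℝ)
          ≤ ∫⁻ _z : I × I, ENNReal.ofReal C ^ (d : ℝ) := by
            refine lintegral_mono fun z => ?_
            exact ENNReal.rpow_le_rpow (ENNReal.ofReal_le_ofReal (hC _ _)) (by positivity)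
        _ = ENNReal.ofReal C ^ (d : ℝ) := by rw [lintegral_const, measure_univ, mul_one]
    exact ne_top_of_le_ne_top
      (ENNReal.rpow_ne_top_of_nonneg (by positivity) ENNReal.ofReal_ne_top) hle
  have h3 : ∫⁻ x : Fin m → I, FinnerAux.Phi H d F Finset.univ x
      ≤ FinnerAux.ND d F ^ ((H.edgeFinset.card : ℝ) / d) := by
    rw [MeasureTheory.volume_pi,
      lintegral_eq_lmarginal_univ (fun _ => (0 : I))]
    have := FinnerAux.finner (H := H) (d := d) (F := F) hd hFmeas hFsymm hdeg
      Finset.univ (fun _ => (0 : I))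
    rwa [FinnerAux.wt_univ] at this
  have h4 : homDensity H f ≤ (FinnerAux.ND d F ^ ((H.edgeFinset.card : ℝ) / d)).toReal := by
    refine le_trans h1 ?_
    rw [h2]
    exact ENNReal.toReal_mono
      (ENNReal.rpow_ne_top_of_nonneg (by positivity) hND) h3
  have h5 : ∫ z : I × I, |f z.1 z.2| ^ (d : ℝ) = (FinnerAux.ND d F).toReal := by
    rw [integral_eq_lintegral_of_nonneg_ae
      (Filter.Eventually.of_forall fun z => Real.rpow_nonneg (abs_nonneg _) _)
      ((hmeas.abs.pow measurable_const).aestronglyMeasurable)]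
    rw [FinnerAux.ND]
    congr 1
    refine lintegral_congr fun z => ?_
    rw [ENNReal.ofReal_rpow_of_nonneg (abs_nonneg _) (by positivity)]
  rw [h5]
  have h6 : ((FinnerAux.ND d F).toReal ^ ((1 : ℝ) / d)) ^ H.edgeFinset.card
      = (FinnerAux.ND d F ^ ((H.edgeFinset.card : ℝ) / d)).toReal := by
    rw [← Real.rpow_natCast ((FinnerAux.ND d F).toReal ^ ((1 : ℝ) / d)) H.edgeFinset.card,
      ← Real.rpow_mul ENNReal.toReal_nonneg, ENNReal.toReal_rpow]
    congr 2
    ring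
  rw [h6]
  exact h4
end

section
/- Let G be a simple d-regular bipartite graph and H any graph possibly with loops. Then hom(G,H) ≤ hom(K_{d,d}, H)^{|V(G)|/(2d)}, where hom(G,H) is the number of graph homomorphisms from G to H and K_{d,d} is the complete bipartite graph with parts of size d. -/
open Finset
open scoped NNReal

section Aux


lemma holder_pad {W A : Type*} [Fintype W] [Nonempty W] (d : ℕ) (hd : 1 ≤ d)
    (s : Finset A) (hs : s.card ≤ d) (g : A → W → ℝ≥0) :
    ∑ w : W, ∏ a ∈ s, g a w ≤
      (Fintype.card W : ℝ≥0) ^ (1 - (s.card : ℝ) / d) *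
        ∏ a ∈ s, (∑ w : W, g a w ^ d) ^ ((1 : ℝ)/d) := by
  classical
  have hd0 : (d : ℝ) ≠ 0 := by exact_mod_cast Nat.one_le_iff_ne_zero.mp hd
  have hdnn : (0 : ℝ≥0) < (d : ℝ≥0) := by exact_mod_cast Nat.pos_of_ne_zero (Nat.one_le_iff_ne_zero.mp hd)
  by_cases hz : ∃ a ∈ s, (∑ w : W, g a w ^ d) = 0
  · obtain ⟨a, ha, h0⟩ := hz
    have hg : ∀ w, g a w = 0 := by
      intro w
      have h1 := (Finset.sum_eq_zero_iff).1 h0 w (mem_univ w)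
      exact pow_eq_zero_iff (Nat.one_le_iff_ne_zero.mp hd) |>.mp h1
    have hL : ∑ w : W, ∏ a ∈ s, g a w = 0 :=
      Finset.sum_eq_zero fun w _ => Finset.prod_eq_zero ha (hg w)
    rw [hL]; exact zero_le
  · push_neg at hz
    have hcW : (Fintype.card W : ℝ≥0) ≠ 0 := by
      simp [Fintype.card_ne_zero]
    set S : A → ℝ≥0 := fun a => ∑ w : W, g a w ^ d with hSdef
    have hSne : ∀ a ∈ s, S a ≠ 0 := hz
    set θ : ℝ≥0 := 1 - (s.card : ℝ≥0) / d with hθdef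
    have hkd : ((s.card : ℝ≥0)) / d ≤ 1 := by
      rw [div_le_one hdnn]; exact_mod_cast hs
    have hθ' : θ + (s.card : ℝ≥0)/d = 1 := tsub_add_cancel_of_le hkd
    have hθreal : (θ : ℝ) = 1 - (s.card : ℝ)/d := by
      rw [hθdef, NNReal.coe_sub hkd]; push_cast; ring
    -- the normalized functions
    set G : A → W → ℝ≥0 := fun a w => g a w ^ d / S a with hGdef
    have hGsum : ∀ a ∈ s, ∑ w : W, G a w = 1 := by
      intro a ha
      rw [hGdef]
      simp only
      rw [← Finset.sum_div, div_self (hSne a ha)]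
    -- pointwise factorization
    have hfact : ∀ a ∈ s, ∀ w, g a w = S a ^ ((1:ℝ)/d) * G a w ^ ((1:ℝ)/d) := by
      intro a ha w
      have h1 : G a w ^ ((1:ℝ)/d) = g a w / S a ^ ((1:ℝ)/d) := by
        rw [hGdef]
        simp only
        rw [NNReal.div_rpow, ← NNReal.rpow_natCast (g a w) d, ← NNReal.rpow_mul]
        congr 1
        field_simp
        simp
      rw [h1, mul_div_cancel₀]
      rw [Ne, NNReal.rpow_eq_zero_iff]
      push_neg
      intro h; exact absurd h (hSne a ha)
    -- AM-GM over padded index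
    have hnone : (none : Option A) ∉ s.map Function.Embedding.some := by simp
    set t : Finset (Option A) := insert none (s.map Function.Embedding.some) with htdef
    set wgt : Option A → ℝ≥0 := fun o => Option.elim o θ (fun _ => (d:ℝ≥0)⁻¹) with hwgtdef
    have hwsum : ∑ o ∈ t, wgt o = 1 := by
      rw [htdef, Finset.sum_insert hnone, Finset.sum_map]
      simp only [hwgtdef, Option.elim, Function.Embedding.some_apply]
      rw [Finset.sum_const, nsmul_eq_mul]
      rw [← hθ', div_eq_mul_inv]
    have key : ∀ w : W, (Fintype.card W : ℝ≥0)⁻¹ ^ (θ:ℝ) * ∏ a ∈ s, G a w ^ ((1:ℝ)/d) ≤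
        θ * (Fintype.card W : ℝ≥0)⁻¹ + (d:ℝ≥0)⁻¹ * ∑ a ∈ s, G a w := by
      intro w
      have := NNReal.geom_mean_le_arith_mean_weighted t wgt
        (fun o => Option.elim o (Fintype.card W : ℝ≥0)⁻¹ (fun a => G a w)) hwsum
      rw [htdef, Finset.prod_insert hnone, Finset.sum_insert hnone, Finset.prod_map,
        Finset.sum_map] at this
      simp only [hwgtdef, Option.elim, Function.Embedding.some_apply] at this
      calc (Fintype.card W : ℝ≥0)⁻¹ ^ (θ:ℝ) * ∏ a ∈ s, G a w ^ ((1:ℝ)/d)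
          = (Fintype.card W : ℝ≥0)⁻¹ ^ (θ:ℝ) * ∏ a ∈ s, G a w ^ (((d:ℝ≥0)⁻¹ : ℝ≥0) : ℝ) := by
            congr 1
            refine Finset.prod_congr rfl fun a _ => ?_
            congr 1
            push_cast
            rw [one_div]
        _ ≤ θ * (Fintype.card W : ℝ≥0)⁻¹ + ∑ a ∈ s, (d:ℝ≥0)⁻¹ * G a w := this
        _ = θ * (Fintype.card W : ℝ≥0)⁻¹ + (d:ℝ≥0)⁻¹ * ∑ a ∈ s, G a w := by rw [Finset.mul_sum]
    -- sum over w
    have hGbound : ∑ w : W, ∏ a ∈ s, G a w ^ ((1:ℝ)/d) ≤ (Fintype.card W : ℝ≥0) ^ (θ:ℝ) := by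
      have h1 : (Fintype.card W : ℝ≥0)⁻¹ ^ (θ:ℝ) * ∑ w : W, ∏ a ∈ s, G a w ^ ((1:ℝ)/d) ≤ 1 := by
        rw [Finset.mul_sum]
        calc ∑ w : W, (Fintype.card W : ℝ≥0)⁻¹ ^ (θ:ℝ) * ∏ a ∈ s, G a w ^ ((1:ℝ)/d)
            ≤ ∑ w : W, (θ * (Fintype.card W : ℝ≥0)⁻¹ + (d:ℝ≥0)⁻¹ * ∑ a ∈ s, G a w) :=
              Finset.sum_le_sum fun w _ => key w
          _ = θ * ((Fintype.card W : ℝ≥0) * (Fintype.card W : ℝ≥0)⁻¹) + (d:ℝ≥0)⁻¹ * ∑ a ∈ s, ∑ w : W, G a w := by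
              rw [Finset.sum_add_distrib]
              congr 1
              · rw [Finset.sum_const, nsmul_eq_mul, Finset.card_univ]; ring
              · rw [← Finset.mul_sum, Finset.sum_comm]
          _ = θ * 1 + (d:ℝ≥0)⁻¹ * ∑ a ∈ s, (1:ℝ≥0) := by
              rw [mul_inv_cancel₀ hcW]
              congr 1
              rw [Finset.sum_congr rfl hGsum]
          _ = θ + (s.card : ℝ≥0)/d := by
              rw [Finset.sum_const, nsmul_eq_mul, mul_one, mul_one, mul_comm,
                ← div_eq_mul_inv]
          _ = 1 := hθ'
      calc ∑ w : W, ∏ a ∈ s, G a w ^ ((1:ℝ)/d)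
          = (Fintype.card W : ℝ≥0) ^ (θ:ℝ) * ((Fintype.card W : ℝ≥0)⁻¹ ^ (θ:ℝ) * ∑ w : W, ∏ a ∈ s, G a w ^ ((1:ℝ)/d)) := by
            rw [← mul_assoc, ← NNReal.mul_rpow, mul_inv_cancel₀ hcW, NNReal.one_rpow, one_mul]
        _ ≤ (Fintype.card W : ℝ≥0) ^ (θ:ℝ) * 1 := by exact mul_le_mul_right h1 _
        _ = (Fintype.card W : ℝ≥0) ^ (θ:ℝ) := mul_one _
    calc ∑ w : W, ∏ a ∈ s, g a w
        = ∑ w : W, ((∏ a ∈ s, S a ^ ((1:ℝ)/d)) * ∏ a ∈ s, G a w ^ ((1:ℝ)/d)) := by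
          refine Finset.sum_congr rfl fun w _ => ?_
          rw [← Finset.prod_mul_distrib]
          exact Finset.prod_congr rfl fun a ha => hfact a ha w
      _ = (∏ a ∈ s, S a ^ ((1:ℝ)/d)) * ∑ w : W, ∏ a ∈ s, G a w ^ ((1:ℝ)/d) := by
          rw [Finset.mul_sum]
      _ ≤ (∏ a ∈ s, S a ^ ((1:ℝ)/d)) * (Fintype.card W : ℝ≥0) ^ (θ:ℝ) := mul_le_mul_right hGbound _
      _ = (Fintype.card W : ℝ≥0) ^ (1 - (s.card : ℝ)/d) * ∏ a ∈ s, S a ^ ((1:ℝ)/d) := by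
          rw [mul_comm, hθreal]



lemma sum_update {ι W : Type*} [Fintype ι] [Fintype W] [DecidableEq ι]
    (b : ι) (F : (ι → W) → ℝ≥0) :
    ∑ ψ : ι → W, ∑ w : W, F (Function.update ψ b w)
      = (Fintype.card W : ℝ≥0) * ∑ ψ : ι → W, F ψ := by
  have hinv : Function.Involutive
      (fun p : (ι → W) × W => (Function.update p.1 b p.2, p.1 b)) := by
    intro p
    simp [Function.update_idem, Function.update_eq_self, Function.update_self]
  calc ∑ ψ : ι → W, ∑ w : W, F (Function.update ψ b w)
      = ∑ p : (ι → W) × W, F (Function.update p.1 b p.2) := by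
        rw [Fintype.sum_prod_type]
    _ = ∑ p : (ι → W) × W, F p.1 := by
        rw [← Equiv.sum_comp hinv.toPerm (fun p : (ι → W) × W => F p.1)]
        rfl
    _ = ∑ ψ : ι → W, ∑ _w : W, F ψ := by rw [Fintype.sum_prod_type]
    _ = ∑ ψ : ι → W, (Fintype.card W : ℝ≥0) * F ψ := by
        refine Finset.sum_congr rfl fun ψ _ => ?_
        rw [Finset.sum_const, Finset.card_univ, nsmul_eq_mul]
    _ = (Fintype.card W : ℝ≥0) * ∑ ψ : ι → W, F ψ := by rw [← Finset.mul_sum]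

lemma pow_rpow_inv_nat {x : ℝ≥0} {d : ℕ} (hd : d ≠ 0) : (x ^ d) ^ ((1:ℝ)/d) = x := by
  rw [← NNReal.rpow_natCast x d, ← NNReal.rpow_mul]
  rw [mul_one_div, div_self (by exact_mod_cast hd), NNReal.rpow_one]

lemma rpow_inv_nat_pow {x : ℝ≥0} {d : ℕ} (hd : d ≠ 0) : (x ^ ((1:ℝ)/d)) ^ d = x := by
  rw [← NNReal.rpow_natCast (x ^ ((1:ℝ)/d)) d, ← NNReal.rpow_mul, one_div,
    inv_mul_cancel₀ (by exact_mod_cast hd), NNReal.rpow_one]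




lemma finner {ι W A : Type*} [Fintype ι] [Fintype W] [Nonempty W] [Fintype A] [DecidableEq ι]
    [DecidableEq A] (d : ℕ) (hd : 1 ≤ d) (T : Finset ι) :
    ∀ (N : A → Finset ι) (f : A → (ι → W) → ℝ≥0),
    (∀ a, N a ⊆ T) →
    (∀ a (ψ ψ' : ι → W), (∀ b ∈ N a, ψ b = ψ' b) → f a ψ = f a ψ') →
    (∀ b ∈ T, (Finset.univ.filter fun a : A => b ∈ N a).card ≤ d) →
    ∑ ψ : ι → W, ∏ a : A, f a ψ ≤
      (Fintype.card W : ℝ≥0) ^ (Fintype.card ι) *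
        ∏ a : A, ((∑ ψ : ι → W, (f a ψ) ^ d) / (Fintype.card W : ℝ≥0) ^ (Fintype.card ι))
          ^ ((1:ℝ) / d) := by
  have hd0 : d ≠ 0 := Nat.one_le_iff_ne_zero.mp hd
  have hcW : (Fintype.card W : ℝ≥0) ≠ 0 := by simp [Fintype.card_ne_zero]
  have hQ : ((Fintype.card W : ℝ≥0) ^ Fintype.card ι) ≠ 0 := pow_ne_zero _ hcW
  have hsumconst : ∀ (c : ℝ≥0), ∑ _ψ : ι → W, c
      = (Fintype.card W : ℝ≥0) ^ Fintype.card ι * c := by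
    intro c
    rw [Finset.sum_const, Finset.card_univ, nsmul_eq_mul, Fintype.card_fun]
    push_cast
    ring
  induction T using Finset.induction_on with
  | empty =>
    intro N f hNT hdep _hcov
    have hNe : ∀ a, N a = ∅ := fun a => Finset.subset_empty.mp (hNT a)
    obtain ⟨ψ₀⟩ : Nonempty (ι → W) := ⟨fun _ => Classical.arbitrary W⟩
    have hconst : ∀ a ψ, f a ψ = f a ψ₀ := fun a ψ => hdep a ψ ψ₀ (by simp [hNe a])
    calc ∑ ψ : ι → W, ∏ a : A, f a ψ
        = ∑ _ψ : ι → W, ∏ a : A, f a ψ₀ := by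
          refine Finset.sum_congr rfl fun ψ _ => Finset.prod_congr rfl fun a _ => hconst a ψ
      _ = (Fintype.card W : ℝ≥0) ^ Fintype.card ι * ∏ a : A, f a ψ₀ := hsumconst _
      _ ≤ (Fintype.card W : ℝ≥0) ^ Fintype.card ι *
            ∏ a : A, ((∑ ψ : ι → W, (f a ψ) ^ d) /
              (Fintype.card W : ℝ≥0) ^ (Fintype.card ι)) ^ ((1:ℝ) / d) := by
          refine mul_le_mul_right (le_of_eq (Finset.prod_congr rfl fun a _ => ?_)) _
          have : ∑ ψ : ι → W, (f a ψ) ^ d = (Fintype.card W : ℝ≥0) ^ Fintype.card ι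
              * (f a ψ₀) ^ d := by
            rw [← hsumconst]
            exact Finset.sum_congr rfl fun ψ _ => by rw [hconst a ψ]
          rw [this, mul_div_cancel_left₀ _ hQ, pow_rpow_inv_nat hd0]
  | @insert b S hbS ih =>
    intro N f hNT hdep hcov
    set Ab : Finset A := Finset.univ.filter (fun a => b ∈ N a) with hAb
    have hk : Ab.card ≤ d := hcov b (Finset.mem_insert_self b S)
    set g : A → (ι → W) → ℝ≥0 := fun a ψ =>
      if b ∈ N a then
        ((∑ w : W, f a (Function.update ψ b w) ^ d) / (Fintype.card W : ℝ≥0)) ^ ((1:ℝ)/d)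
      else f a ψ with hgdef
    set N' : A → Finset ι := fun a => (N a).erase b with hN'def
    have hdep' : ∀ a (ψ ψ' : ι → W), (∀ b' ∈ N' a, ψ b' = ψ' b') → g a ψ = g a ψ' := by
      intro a ψ ψ' hagree
      by_cases hb : b ∈ N a
      · simp only [hgdef, if_pos hb]
        congr 2
        refine Finset.sum_congr rfl fun w _ => ?_
        congr 1
        apply hdep
        intro b' hb'
        by_cases h : b' = b
        · subst h; simp [Function.update_self]
        · rw [Function.update_of_ne h, Function.update_of_ne h]
          exact hagree b' (Finset.mem_erase.mpr ⟨h, hb'⟩)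
      · simp only [hgdef, if_neg hb]
        apply hdep
        intro b' hb'
        exact hagree b' (Finset.mem_erase.mpr ⟨fun h => hb (h ▸ hb'), hb'⟩)
    have hNT' : ∀ a, N' a ⊆ S := by
      intro a
      have h1 : (N a).erase b ⊆ (insert b S).erase b := Finset.erase_subset_erase b (hNT a)
      rwa [Finset.erase_insert hbS] at h1
    have hcov' : ∀ b' ∈ S, (Finset.univ.filter fun a : A => b' ∈ N' a).card ≤ d := by
      intro b' hb'
      refine le_trans (Finset.card_le_card ?_) (hcov b' (Finset.mem_insert_of_mem hb'))
      exact Finset.monotone_filter_right _ fun a _ ha => Finset.mem_of_mem_erase ha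
    -- pointwise Hölder step
    have step1 : ∀ ψ : ι → W, ∑ w : W, ∏ a : A, f a (Function.update ψ b w)
        ≤ (Fintype.card W : ℝ≥0) * ∏ a : A, g a ψ := by
      intro ψ
      have hsplit : ∀ w, ∏ a : A, f a (Function.update ψ b w)
          = (∏ a ∈ Abᶜ, f a ψ) * ∏ a ∈ Ab, f a (Function.update ψ b w) := by
        intro w
        rw [← Finset.prod_mul_prod_compl Ab (fun a => f a (Function.update ψ b w)), mul_comm]
        congr 1
        refine Finset.prod_congr rfl fun a ha => ?_
        have hba : b ∉ N a := by
          have := Finset.mem_compl.mp ha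
          simpa [hAb] using this
        apply hdep
        intro b' hb'
        have hne : b' ≠ b := by rintro rfl; exact hba hb'
        rw [Function.update_of_ne hne]
      have hgAb : ∀ a ∈ Ab, g a ψ
          = ((∑ w : W, f a (Function.update ψ b w) ^ d) / (Fintype.card W : ℝ≥0))
              ^ ((1:ℝ)/d) := by
        intro a ha
        have hb : b ∈ N a := by simpa [hAb] using ha
        simp only [hgdef, if_pos hb]
      have hgAbc : ∀ a ∈ Abᶜ, g a ψ = f a ψ := by
        intro a ha
        have hb : b ∉ N a := by simpa [hAb] using Finset.mem_compl.mp ha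
        simp only [hgdef, if_neg hb]
      calc ∑ w : W, ∏ a : A, f a (Function.update ψ b w)
          = (∏ a ∈ Abᶜ, f a ψ) * ∑ w : W, ∏ a ∈ Ab, f a (Function.update ψ b w) := by
            rw [Finset.mul_sum]
            exact Finset.sum_congr rfl fun w _ => hsplit w
        _ ≤ (∏ a ∈ Abᶜ, f a ψ) * ((Fintype.card W : ℝ≥0) ^ (1 - (Ab.card : ℝ)/d) *
              ∏ a ∈ Ab, (∑ w : W, f a (Function.update ψ b w) ^ d) ^ ((1:ℝ)/d)) :=
            mul_le_mul_right (holder_pad d hd Ab hk fun a w => f a (Function.update ψ b w)) _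
        _ = (Fintype.card W : ℝ≥0) * ((∏ a ∈ Abᶜ, g a ψ) * ∏ a ∈ Ab, g a ψ) := by
            rw [Finset.prod_congr rfl hgAbc]
            rw [Finset.prod_congr rfl hgAb]
            have hdiv : ∏ a ∈ Ab, ((∑ w : W, f a (Function.update ψ b w) ^ d)
                  / (Fintype.card W : ℝ≥0)) ^ ((1:ℝ)/d)
                = (∏ a ∈ Ab, (∑ w : W, f a (Function.update ψ b w) ^ d) ^ ((1:ℝ)/d))
                  / (Fintype.card W : ℝ≥0) ^ ((Ab.card : ℝ)/d) := by
              have : ∀ a ∈ Ab, ((∑ w : W, f a (Function.update ψ b w) ^ d)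
                    / (Fintype.card W : ℝ≥0)) ^ ((1:ℝ)/d)
                  = (∑ w : W, f a (Function.update ψ b w) ^ d) ^ ((1:ℝ)/d)
                    / (Fintype.card W : ℝ≥0) ^ ((1:ℝ)/d) := fun a _ =>
                NNReal.div_rpow _ _ _
              rw [Finset.prod_congr rfl this, Finset.prod_div_distrib, Finset.prod_const,
                ← NNReal.rpow_natCast ((Fintype.card W : ℝ≥0) ^ ((1:ℝ)/d)) Ab.card,
                ← NNReal.rpow_mul, one_div, inv_mul_eq_div]
            rw [hdiv]
            have hpow : (Fintype.card W : ℝ≥0) ^ (1 - (Ab.card : ℝ)/d)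
                = (Fintype.card W : ℝ≥0) / (Fintype.card W : ℝ≥0) ^ ((Ab.card : ℝ)/d) := by
              rw [NNReal.rpow_sub hcW, NNReal.rpow_one]
            rw [hpow]
            simp only [div_eq_mul_inv]
            ring
        _ = (Fintype.card W : ℝ≥0) * ∏ a : A, g a ψ := by
            rw [mul_comm (∏ a ∈ Abᶜ, g a ψ), Finset.prod_mul_prod_compl]
    have main : ∑ ψ : ι → W, ∏ a : A, f a ψ ≤ ∑ ψ : ι → W, ∏ a : A, g a ψ := by
      have hcWpos : (0:ℝ≥0) < (Fintype.card W : ℝ≥0) := pos_iff_ne_zero.mpr hcW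
      refine le_of_mul_le_mul_left ?_ hcWpos
      calc (Fintype.card W : ℝ≥0) * ∑ ψ : ι → W, ∏ a : A, f a ψ
          = ∑ ψ : ι → W, ∑ w : W, ∏ a : A, f a (Function.update ψ b w) :=
            (sum_update b _).symm
        _ ≤ ∑ ψ : ι → W, (Fintype.card W : ℝ≥0) * ∏ a : A, g a ψ :=
            Finset.sum_le_sum fun ψ _ => step1 ψ
        _ = (Fintype.card W : ℝ≥0) * ∑ ψ : ι → W, ∏ a : A, g a ψ := by
            rw [← Finset.mul_sum]
    have hpowsum : ∀ a : A, ∑ ψ : ι → W, g a ψ ^ d = ∑ ψ : ι → W, f a ψ ^ d := by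
      intro a
      by_cases hb : b ∈ N a
      · have hgd : ∀ ψ : ι → W, g a ψ ^ d
            = (∑ w : W, f a (Function.update ψ b w) ^ d) / (Fintype.card W : ℝ≥0) := by
          intro ψ
          simp only [hgdef, if_pos hb]
          exact rpow_inv_nat_pow hd0
        rw [Finset.sum_congr rfl fun ψ _ => hgd ψ, ← Finset.sum_div,
          sum_update b (fun ψ => f a ψ ^ d), mul_div_cancel_left₀ _ hcW]
      · refine Finset.sum_congr rfl fun ψ _ => ?_
        simp only [hgdef, if_neg hb]
    calc ∑ ψ : ι → W, ∏ a : A, f a ψ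
        ≤ ∑ ψ : ι → W, ∏ a : A, g a ψ := main
      _ ≤ (Fintype.card W : ℝ≥0) ^ (Fintype.card ι) *
            ∏ a : A, ((∑ ψ : ι → W, (g a ψ) ^ d) /
              (Fintype.card W : ℝ≥0) ^ (Fintype.card ι)) ^ ((1:ℝ) / d) :=
          ih N' g hNT' hdep' hcov'
      _ = (Fintype.card W : ℝ≥0) ^ (Fintype.card ι) *
            ∏ a : A, ((∑ ψ : ι → W, (f a ψ) ^ d) /
              (Fintype.card W : ℝ≥0) ^ (Fintype.card ι)) ^ ((1:ℝ) / d) := by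
          congr 1
          exact Finset.prod_congr rfl fun a _ => by rw [hpowsum a]

end Aux

/-- The number of homomorphisms from a simple graph `G` to a (possibly looped)
graph given by a symmetric relation `R` on a vertex type `W`. -/
noncomputable def homCount {V W : Type*} (G : SimpleGraph V) (R : W → W → Prop) : ℕ :=
  Nat.card {φ : V → W // ∀ u v, G.Adj u v → R (φ u) (φ v)}

section Aux2



lemma nat_card_sigma {α : Type*} [Fintype α] (β : α → Type*) [∀ a, Finite (β a)] :
    Nat.card (Σ a, β a) = ∑ a, Nat.card (β a) := by
  classical
  have := fun a => Fintype.ofFinite (β a)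
  rw [Nat.card_eq_fintype_card, Fintype.card_sigma]
  exact Finset.sum_congr rfl fun a _ => (Nat.card_eq_fintype_card).symm

/-- Splitting the hom count of a bipartite graph along the bipartition. -/
lemma homCount_eq_sum_prod {V W : Type*} [Fintype V] [DecidableEq V] [Fintype W]
    (G : SimpleGraph V) (R : W → W → Prop) (hR : Symmetric R)
    (p : V → Prop) [DecidablePred p]
    (hp : ∀ u v, G.Adj u v → (p u ↔ ¬ p v)) :
    homCount G R = ∑ ψ : {v // ¬ p v} → W, ∏ a : {v // p v},
      Nat.card {x : W // ∀ b : {v // ¬ p v}, G.Adj a.1 b.1 → R x (ψ b)} := by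
  classical
  set P' : ({v // p v} → W) × ({v // ¬ p v} → W) → Prop :=
    fun q => ∀ (a : {v // p v}) (b : {v // ¬ p v}), G.Adj a.1 b.1 → R (q.1 a) (q.2 b) with hP'
  have e1 : {φ : V → W // ∀ u v, G.Adj u v → R (φ u) (φ v)} ≃ {q // P' q} := by
    refine (Equiv.piEquivPiSubtypeProd p (fun _ => W)).subtypeEquiv fun φ => ?_
    constructor
    · intro h a b hab
      exact h a.1 b.1 hab
    · intro h u v huv
      by_cases hu : p u
      · have hv : ¬ p v := (hp u v huv).mp hu
        exact h ⟨u, hu⟩ ⟨v, hv⟩ huv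
      · have hv : p v := by
          by_contra hv
          exact hu ((hp u v huv).mpr hv)
        exact hR (h ⟨v, hv⟩ ⟨u, hu⟩ (G.adj_symm huv))
  have e2 : {q // P' q} ≃ Σ ψ : {v // ¬ p v} → W,
      {φA : {v // p v} → W // ∀ (a : {v // p v}) (b : {v // ¬ p v}),
        G.Adj a.1 b.1 → R (φA a) (ψ b)} :=
    { toFun := fun x => ⟨x.1.2, x.1.1, x.2⟩
      invFun := fun s => ⟨(s.2.1, s.1), s.2.2⟩
      left_inv := fun x => rfl
      right_inv := fun s => rfl }
  rw [homCount, Nat.card_congr (e1.trans e2), nat_card_sigma]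
  refine Finset.sum_congr rfl fun ψ _ => ?_
  have e3 : {φA : {v // p v} → W // ∀ (a : {v // p v}) (b : {v // ¬ p v}),
      G.Adj a.1 b.1 → R (φA a) (ψ b)} ≃
      ∀ a : {v // p v}, {x : W // ∀ b : {v // ¬ p v}, G.Adj a.1 b.1 → R x (ψ b)} :=
    Equiv.subtypePiEquivPi (p := fun (a : {v // p v}) (x : W) =>
      ∀ b : {v // ¬ p v}, G.Adj a.1 b.1 → R x (ψ b))
  rw [Nat.card_congr e3, Nat.card_pi]

/-- The hom count of the complete bipartite graph. -/
lemma homCount_Kdd {W : Type*} [Fintype W] (d : ℕ)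
    (R : W → W → Prop) (hR : Symmetric R) :
    homCount (completeBipartiteGraph (Fin d) (Fin d)) R
      = ∑ y : Fin d → W, (Nat.card {x : W // ∀ j : Fin d, R x (y j)}) ^ d := by
  classical
  set P' : (Fin d → W) × (Fin d → W) → Prop :=
    fun q => ∀ i j : Fin d, R (q.1 i) (q.2 j) with hP'
  have e1 : {φ : Fin d ⊕ Fin d → W // ∀ u v,
      (completeBipartiteGraph (Fin d) (Fin d)).Adj u v → R (φ u) (φ v)} ≃ {q // P' q} := by
    refine (Equiv.sumArrowEquivProdArrow (Fin d) (Fin d) W).subtypeEquiv fun φ => ?_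
    constructor
    · intro h i j
      exact h (Sum.inl i) (Sum.inr j) (by simp)
    · intro h u v huv
      rcases u with i | i <;> rcases v with j | j <;> simp at huv
      · exact h i j
      · exact hR (h j i)
  have e2 : {q // P' q} ≃ Σ y : Fin d → W,
      {x : Fin d → W // ∀ i j : Fin d, R (x i) (y j)} :=
    { toFun := fun x => ⟨x.1.2, x.1.1, x.2⟩
      invFun := fun s => ⟨(s.2.1, s.1), s.2.2⟩
      left_inv := fun x => rfl
      right_inv := fun s => rfl }
  rw [homCount, Nat.card_congr (e1.trans e2), nat_card_sigma]
  refine Finset.sum_congr rfl fun y _ => ?_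
  have e3 : {x : Fin d → W // ∀ i j : Fin d, R (x i) (y j)} ≃
      ∀ _i : Fin d, {x : W // ∀ j : Fin d, R x (y j)} :=
    Equiv.subtypePiEquivPi (p := fun (_ : Fin d) (x : W) => ∀ j : Fin d, R x (y j))
  rw [Nat.card_congr e3, Nat.card_pi, Finset.prod_const, Finset.card_univ, Fintype.card_fin]



lemma sum_pow_card {ι W : Type*} [Fintype ι] [DecidableEq ι] [Fintype W] (d : ℕ)
    (R : W → W → Prop) (q : ι → Prop) [DecidablePred q]
    (hcard : (Finset.univ.filter q).card = d) :
    (Fintype.card W) ^ d * ∑ ψ : ι → W, (Nat.card {x : W // ∀ b : ι, q b → R x (ψ b)}) ^ d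
      = (Fintype.card W) ^ (Fintype.card ι) *
        ∑ y : Fin d → W, (Nat.card {x : W // ∀ j : Fin d, R x (y j)}) ^ d := by
  classical
  set F : (ι → W) → ℕ := fun ψ => (Nat.card {x : W // ∀ b : ι, q b → R x (ψ b)}) ^ d with hF
  set M : ({b // q b} → W) → ℕ :=
    fun y => Nat.card {x : W // ∀ b : {b // q b}, R x (y b)} with hM
  set e : (ι → W) ≃ ({b // q b} → W) × ({b // ¬ q b} → W) :=
    Equiv.piEquivPiSubtypeProd q (fun _ => W) with he
  have h1 : ∑ ψ : ι → W, F ψ = ∑ q' : ({b // q b} → W) × ({b // ¬ q b} → W), F (e.symm q') :=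
    (Equiv.sum_comp e.symm F).symm
  have h2 : ∀ (y : {b // q b} → W) (z : {b // ¬ q b} → W), F (e.symm (y, z)) = (M y) ^ d := by
    intro y z
    rw [hF, hM]
    have hiff : ∀ x : W, (∀ b : ι, q b → R x (e.symm (y, z) b))
        ↔ (∀ b' : {b // q b}, R x (y b')) := by
      intro x
      constructor
      · intro h b'
        have h2 := h b'.1 b'.2
        rwa [he, Equiv.piEquivPiSubtypeProd_symm_apply, dif_pos b'.2] at h2
      · intro h b hb
        have h2 := h ⟨b, hb⟩
        rw [he, Equiv.piEquivPiSubtypeProd_symm_apply, dif_pos hb]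
        exact h2
    exact congrArg (fun t => t ^ d) (Nat.card_congr (Equiv.subtypeEquivRight hiff))
  have hqd : Fintype.card {b // q b} = d := by rw [Fintype.card_subtype]; exact hcard
  have hdle : d ≤ Fintype.card ι := by
    rw [← hcard]; exact le_trans (Finset.card_filter_le _ _) (by rw [Finset.card_univ])
  have h3 : ∑ ψ : ι → W, F ψ
      = (Fintype.card W) ^ (Fintype.card ι - d) * ∑ y : {b // q b} → W, (M y) ^ d := by
    rw [h1, Fintype.sum_prod_type]
    calc ∑ y : {b // q b} → W, ∑ z : {b // ¬ q b} → W, F (e.symm (y, z))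
        = ∑ y : {b // q b} → W, ∑ _z : {b // ¬ q b} → W, (M y) ^ d := by
          exact Finset.sum_congr rfl fun y _ => Finset.sum_congr rfl fun z _ => h2 y z
      _ = ∑ y : {b // q b} → W, (Fintype.card W) ^ (Fintype.card ι - d) * (M y) ^ d := by
          refine Finset.sum_congr rfl fun y _ => ?_
          rw [Finset.sum_const, Finset.card_univ, smul_eq_mul, Fintype.card_fun,
            Fintype.card_subtype_compl, hqd]
      _ = (Fintype.card W) ^ (Fintype.card ι - d) * ∑ y : {b // q b} → W, (M y) ^ d := by
          rw [← Finset.mul_sum]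
  have ef : {b // q b} ≃ Fin d := Fintype.equivFinOfCardEq hqd
  have h4 : ∑ y : {b // q b} → W, (M y) ^ d
      = ∑ u : Fin d → W, (Nat.card {x : W // ∀ j : Fin d, R x (u j)}) ^ d := by
    set ec : (Fin d → W) ≃ ({b // q b} → W) := Equiv.arrowCongr ef.symm (Equiv.refl W)
      with hec
    rw [← Equiv.sum_comp ec (fun y => (M y) ^ d)]
    refine Finset.sum_congr rfl fun u _ => ?_
    rw [hM]
    have hiff : ∀ x : W, (∀ b' : {b // q b}, R x (ec u b'))
        ↔ (∀ j : Fin d, R x (u j)) := by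
      intro x
      constructor
      · intro h j
        have h2 := h (ef.symm j)
        simp only [hec, Equiv.arrowCongr_apply, Equiv.coe_refl, Equiv.symm_symm,
          Function.comp_apply, id_eq, Equiv.apply_symm_apply] at h2
        exact h2
      · intro h b'
        have h2 := h (ef b')
        simp only [hec, Equiv.arrowCongr_apply, Equiv.coe_refl, Equiv.symm_symm,
          Function.comp_apply, id_eq]
        exact h2
    exact congrArg (fun t => t ^ d) (Nat.card_congr (Equiv.subtypeEquivRight hiff))
  have hexp : d + (Fintype.card ι - d) = Fintype.card ι := Nat.add_sub_cancel' hdle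
  rw [h3, h4, ← mul_assoc, ← pow_add, hexp]

lemma card_filter_adj_subtype {V : Type*} [Fintype V] (G : SimpleGraph V)
    [DecidableRel G.Adj] (v : V) (q : V → Prop) [DecidablePred q]
    (hq : ∀ u, G.Adj v u → q u) :
    (Finset.univ.filter fun b : {u // q u} => G.Adj v b.1).card = G.degree v := by
  classical
  have h1 : (Finset.univ.filter fun b : {u // q u} => G.Adj v b.1).card
      = Fintype.card {b : {u // q u} // G.Adj v b.1} := (Fintype.card_subtype _).symm
  have e : {b : {u // q u} // G.Adj v b.1} ≃ {u : V // G.Adj v u} :=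
    (Equiv.subtypeSubtypeEquivSubtypeInter q (G.Adj v)).trans
      (Equiv.subtypeEquivRight fun u => ⟨fun h => h.2, fun h => ⟨hq u h, h⟩⟩)
  rw [h1, Fintype.card_congr e, Fintype.card_subtype, ← SimpleGraph.neighborFinset_eq_filter]
  rfl

lemma sum_card_filter_comm {α β : Type*} [Fintype α] [Fintype β]
    (r : α → β → Prop) [∀ a b, Decidable (r a b)] :
    ∑ a : α, (Finset.univ.filter fun b => r a b).card
      = ∑ b : β, (Finset.univ.filter fun a => r a b).card := by
  simp only [Finset.card_filter]
  rw [Finset.sum_comm]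

end Aux2

/-- **Kahn–Galvin–Tetali inequality**: for a simple `d`-regular bipartite graph `G`
and any graph `H` (possibly with loops), `hom(G,H) ≤ hom(K_{d,d},H)^{|V(G)|/(2d)}`. -/
theorem hom_le_hom_Kdd
    {V W : Type*} [Fintype V] [Fintype W]
    (G : SimpleGraph V) [DecidableRel G.Adj]
    (d : ℕ) (hd : 1 ≤ d)
    (hreg : G.IsRegularOfDegree d)
    (hbip : G.Colorable 2)
    (R : W → W → Prop) (hR : Symmetric R) :
    (homCount G R : ℝ)
      ≤ (homCount (completeBipartiteGraph (Fin d) (Fin d)) R : ℝ)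
          ^ ((Fintype.card V : ℝ) / (2 * d)) := by
  classical
  have hd0 : d ≠ 0 := Nat.one_le_iff_ne_zero.mp hd
  have hdR : (d : ℝ) ≠ 0 := Nat.cast_ne_zero.mpr hd0
  by_cases hW : Nonempty W
  case neg =>
    haveI hWe : IsEmpty W := not_nonempty_iff.mp hW
    by_cases hV : Nonempty V
    · haveI : IsEmpty (V → W) := ⟨fun f => hW ⟨f (Classical.arbitrary V)⟩⟩
      have h1 : homCount G R = 0 := by
        rw [homCount, Nat.card_of_isEmpty]
      haveI : IsEmpty (Fin d ⊕ Fin d → W) :=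
        ⟨fun f => hW ⟨f (Sum.inl ⟨0, hd⟩)⟩⟩
      have h2 : homCount (completeBipartiteGraph (Fin d) (Fin d)) R = 0 := by
        rw [homCount, Nat.card_of_isEmpty]
      have hVpos : (0:ℝ) < Fintype.card V := by exact_mod_cast Fintype.card_pos
      rw [h1, h2, Nat.cast_zero, Real.zero_rpow (by positivity)]
    · haveI : IsEmpty V := not_nonempty_iff.mp hV
      have h1 : homCount G R = 1 := by
        rw [homCount]
        haveI : Unique {φ : V → W // ∀ u v, G.Adj u v → R (φ u) (φ v)} :=
          ⟨⟨⟨fun v => isEmptyElim v, fun u => isEmptyElim u⟩⟩,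
            fun x => Subtype.ext (funext fun v => isEmptyElim v)⟩
        exact Nat.card_unique
      have hcV : Fintype.card V = 0 := Fintype.card_eq_zero
      rw [h1, hcV, Nat.cast_zero, zero_div, Real.rpow_zero, Nat.cast_one]
  case pos =>
  haveI := hW
  obtain ⟨c⟩ := hbip
  set p : V → Prop := fun v => c v = 0 with hpdef
  have fin2 : ∀ x y : Fin 2, x ≠ y → (x = 0 ↔ ¬ y = 0) := by decide
  have hpadj : ∀ u v, G.Adj u v → (p u ↔ ¬ p v) :=
    fun u v huv => fin2 (c u) (c v) (c.valid huv)
  -- notation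
  set n : {v // p v} → ({v // ¬ p v} → W) → ℕ := fun a ψ =>
    Nat.card {x : W // ∀ b : {v // ¬ p v}, G.Adj a.1 b.1 → R x (ψ b)} with hndef
  set N : {v // p v} → Finset {v // ¬ p v} := fun a =>
    Finset.univ.filter fun b => G.Adj a.1 b.1 with hNdef
  have hNd : ∀ a : {v // p v},
      (Finset.univ.filter fun b : {v // ¬ p v} => G.Adj a.1 b.1).card = d := by
    intro a
    rw [card_filter_adj_subtype G a.1 (fun v => ¬ p v)
      (fun u hu => (hpadj a.1 u hu).mp a.2)]
    exact hreg a.1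
  have hcov : ∀ b : {v // ¬ p v},
      (Finset.univ.filter fun a : {v // p v} => G.Adj a.1 b.1).card = d := by
    intro b
    have hfe : (Finset.univ.filter fun a : {v // p v} => G.Adj a.1 b.1)
        = Finset.univ.filter fun a : {v // p v} => G.Adj b.1 a.1 :=
      Finset.filter_congr fun a _ => by rw [G.adj_comm]
    rw [hfe, card_filter_adj_subtype G b.1 p
      (fun u hu => (hpadj u b.1 (G.adj_symm hu)).mpr b.2)]
    exact hreg b.1
  have hcovN : ∀ b : {v // ¬ p v},
      (Finset.univ.filter fun a : {v // p v} => b ∈ N a).card = d := by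
    intro b
    rw [show (Finset.univ.filter fun a : {v // p v} => b ∈ N a)
        = Finset.univ.filter fun a : {v // p v} => G.Adj a.1 b.1 from
      Finset.filter_congr fun a _ => by simp [hNdef]]
    exact hcov b
  have h1 : homCount G R = ∑ ψ : {v // ¬ p v} → W, ∏ a : {v // p v}, n a ψ :=
    homCount_eq_sum_prod G R hR p hpadj
  -- the K_{d,d} count
  set K : ℕ := homCount (completeBipartiteGraph (Fin d) (Fin d)) R with hKdef
  have hK : K = ∑ y : Fin d → W, (Nat.card {x : W // ∀ j : Fin d, R x (y j)}) ^ d :=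
    homCount_Kdd d R hR
  set cW : ℝ≥0 := (Fintype.card W : ℝ≥0) with hcWdef
  have hcW : cW ≠ 0 := by simp [hcWdef, Fintype.card_ne_zero]
  set cB : ℕ := Fintype.card {v // ¬ p v} with hcBdef
  set cA : ℕ := Fintype.card {v // p v} with hcAdef
  have hQne : cW ^ cB ≠ 0 := pow_ne_zero _ hcW
  -- power sums
  have hpowsum : ∀ a : {v // p v},
      ∑ ψ : {v // ¬ p v} → W, (n a ψ : ℝ≥0) ^ d = (cW ^ cB * (K : ℝ≥0)) / cW ^ d := by
    intro a
    have hnat := sum_pow_card (ι := {v // ¬ p v}) (W := W) d R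
      (fun b => G.Adj a.1 b.1) (hNd a)
    rw [← hK] at hnat
    have hcast : (cW : ℝ≥0) ^ d * ∑ ψ : {v // ¬ p v} → W, (n a ψ : ℝ≥0) ^ d
        = cW ^ cB * (K : ℝ≥0) := by
      rw [hcWdef, hcBdef]
      exact_mod_cast congrArg (fun t : ℕ => (t : ℝ≥0)) hnat
    rw [eq_div_iff (pow_ne_zero _ hcW), mul_comm _ (cW ^ d), hcast]
  -- apply the Finner-type inequality
  have hfinner := finner (ι := {v // ¬ p v}) (W := W) (A := {v // p v}) d hd
    Finset.univ N (fun a ψ => (n a ψ : ℝ≥0))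
    (fun a => Finset.subset_univ _)
    (by
      intro a ψ ψ' hagree
      have hiff : ∀ x : W,
          (∀ b : {v // ¬ p v}, G.Adj a.1 b.1 → R x (ψ b))
          ↔ (∀ b : {v // ¬ p v}, G.Adj a.1 b.1 → R x (ψ' b)) := by
        intro x
        constructor
        · intro h b hb
          rw [← hagree b (by simp [hNdef, hb])]
          exact h b hb
        · intro h b hb
          rw [hagree b (by simp [hNdef, hb])]
          exact h b hb
      exact congrArg (fun t : ℕ => (t : ℝ≥0))
        (Nat.card_congr (Equiv.subtypeEquivRight hiff)))
    (fun b _ => le_of_eq (hcovN b))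
  -- simplify the right-hand side of finner
  have hrhs : (Fintype.card W : ℝ≥0) ^ cB *
      ∏ a : {v // p v}, ((∑ ψ : {v // ¬ p v} → W, ((n a ψ : ℝ≥0)) ^ d) /
        (Fintype.card W : ℝ≥0) ^ cB) ^ ((1:ℝ) / d)
      = cW ^ cB * (((K : ℝ≥0) ^ ((1:ℝ)/d) / cW) ^ cA) := by
    rw [← hcWdef]
    congr 1
    have hterm : ∀ a : {v // p v},
        ((∑ ψ : {v // ¬ p v} → W, ((n a ψ : ℝ≥0)) ^ d) / cW ^ cB) ^ ((1:ℝ) / d)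
          = (K : ℝ≥0) ^ ((1:ℝ)/d) / cW := by
      intro a
      rw [hpowsum a, div_div, mul_comm (cW ^ d) (cW ^ cB),
        mul_div_mul_left _ _ hQne, NNReal.div_rpow, pow_rpow_inv_nat hd0]
    rw [Finset.prod_congr rfl fun a _ => hterm a, Finset.prod_const,
      Finset.card_univ, ← hcAdef]
  -- balance: cA = cB
  have hbal : cA = cB := by
    have hdc : d * cA = d * cB := by
      have hl : ∑ a : {v // p v}, (Finset.univ.filter fun b : {v // ¬ p v} =>
          G.Adj a.1 b.1).card = d * cA := by
        rw [Finset.sum_congr rfl fun a _ => hNd a]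
        rw [Finset.sum_const, Finset.card_univ, smul_eq_mul, hcAdef, mul_comm]
      have hr : ∑ b : {v // ¬ p v}, (Finset.univ.filter fun a : {v // p v} =>
          G.Adj a.1 b.1).card = d * cB := by
        rw [Finset.sum_congr rfl fun b _ => hcov b]
        rw [Finset.sum_const, Finset.card_univ, smul_eq_mul, hcBdef, mul_comm]
      rw [← hl, ← hr, sum_card_filter_comm]
    exact Nat.eq_of_mul_eq_mul_left (Nat.pos_of_ne_zero hd0) hdc
  -- |V| = cA + cB
  have hVcard : Fintype.card V = cA + cB := by
    rw [hcAdef, hcBdef, ← Fintype.card_sum]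
    exact Fintype.card_congr (Equiv.sumCompl p).symm
  -- combine everything over ℝ≥0
  have hmain : (homCount G R : ℝ≥0) ≤ (K : ℝ≥0) ^ ((cB : ℝ) / d) := by
    calc (homCount G R : ℝ≥0)
        = ∑ ψ : {v // ¬ p v} → W, ∏ a : {v // p v}, (n a ψ : ℝ≥0) := by
          rw [h1]; push_cast; rfl
      _ ≤ (Fintype.card W : ℝ≥0) ^ cB *
            ∏ a : {v // p v}, ((∑ ψ : {v // ¬ p v} → W, ((n a ψ : ℝ≥0)) ^ d) /
              (Fintype.card W : ℝ≥0) ^ cB) ^ ((1:ℝ) / d) := by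
          rw [hcBdef]; exact hfinner
      _ = cW ^ cB * (((K : ℝ≥0) ^ ((1:ℝ)/d) / cW) ^ cA) := hrhs
      _ = (K : ℝ≥0) ^ ((cB : ℝ) / d) := by
          rw [hbal, div_pow, ← mul_div_assoc, mul_comm (cW ^ cB), mul_div_assoc,
            div_self hQne, mul_one, ← NNReal.rpow_natCast ((K : ℝ≥0) ^ ((1:ℝ)/d)) cB,
            ← NNReal.rpow_mul, one_div, inv_mul_eq_div]
  -- pass to ℝ
  have hexp : (Fintype.card V : ℝ) / (2 * d) = (cB : ℝ) / d := by
    rw [hVcard, hbal]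
    push_cast
    field_simp
    ring
  rw [hexp]
  have := NNReal.coe_le_coe.mpr hmain
  rw [NNReal.coe_rpow] at this
  exact_mod_cast this
end

section
/- Let G be a d-regular bipartite graph and f : [0,1]² → [0,1] a symmetric measurable function (graphon). Then t(G, f) ≤ t(K_{d,d}, f)^{|V(G)|/(2d)}. -/
open MeasureTheory unitInterval

open Finset Function
open scoped ENNReal

/-- Finner-type inequality for the unit interval. -/
theorem finner_aux {n d : ℕ} (hd : 1 ≤ d) {β : Type} (T : Finset (Fin n)) :
    ∀ (B : Finset β) (S : β → Finset (Fin n)) (g : β → (Fin n → I) → ℝ≥0∞),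
    (∀ b ∈ B, Measurable (g b)) →
    (∀ b ∈ B, S b ⊆ T) →
    (∀ b ∈ B, ∀ (x : Fin n → I) (i : Fin n) (y : I), i ∉ S b → g b (update x i y) = g b x) →
    (∀ i ∈ T, (B.filter (fun b => i ∈ S b)).card ≤ d) →
    ∀ x : Fin n → I,
      (∫⋯∫⁻_T, fun z => ∏ b ∈ B, g b z) x ≤
        ∏ b ∈ B, ((∫⋯∫⁻_(S b), fun z => g b z ^ (d : ℝ)) x) ^ (1 / (d : ℝ)) := by
  have hd0 : (d : ℝ) ≠ 0 := by positivity
  have rpow_cancel : ∀ a : ℝ≥0∞, (a ^ (d : ℝ)) ^ (1 / (d : ℝ)) = a := by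
    intro a
    rw [← ENNReal.rpow_mul, mul_one_div_cancel hd0, ENNReal.rpow_one]
  induction T using Finset.induction with
  | empty =>
    intro B S g hmeas hsub hdep hcount x
    refine le_of_eq ?_
    have hB : ∀ b ∈ B, ((∫⋯∫⁻_(S b), fun z => g b z ^ (d : ℝ)) x) ^ (1 / (d : ℝ)) = g b x := by
      intro b hb
      rw [Finset.subset_empty.mp (hsub b hb), lmarginal_empty]
      exact rpow_cancel _
    rw [Finset.prod_congr rfl hB, lmarginal_empty]
  | @insert i T₀ hi ih =>
    intro B S g hmeas hsub hdep hcount x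
    have hPmeas : Measurable fun z : Fin n → I => ∏ b ∈ B, g b z :=
      Finset.measurable_prod _ hmeas
    rw [lmarginal_insert' _ hPmeas hi]
    -- the new family after integrating out coordinate `i`
    set h : β → (Fin n → I) → ℝ≥0∞ := fun b =>
      if i ∈ S b then
        fun z => ((∫⋯∫⁻_{i}, fun w => g b w ^ (d : ℝ)) z) ^ (1 / (d : ℝ))
      else g b with hh
    -- Step 1: pointwise Hölder bound for the inner integral
    have claimA : ∀ z : Fin n → I,
        (∫⁻ t, (∏ b ∈ B, g b (update z i t))) ≤ ∏ b ∈ B, h b z := by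
      intro z
      have hsplit : ∀ t : I, ∏ b ∈ B, g b (update z i t) =
          (∏ b ∈ B.filter (fun b => i ∈ S b), g b (update z i t)) *
            ∏ b ∈ B.filter (fun b => ¬ i ∈ S b), g b z := by
        intro t
        rw [← Finset.prod_filter_mul_prod_filter_not B (fun b => i ∈ S b)]
        congr 1
        refine Finset.prod_congr rfl fun b hb => ?_
        exact hdep b (Finset.mem_filter.mp hb).1 z i t (Finset.mem_filter.mp hb).2
      simp_rw [hsplit]
      have hmeas1 : Measurable fun t : I =>
          ∏ b ∈ B.filter (fun b => i ∈ S b), g b (update z i t) :=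
        Finset.measurable_prod _ fun b hb =>
          (hmeas b (Finset.filter_subset _ _ hb)).comp (measurable_update z)
      rw [lintegral_mul_const _ hmeas1]
      have hB1card : ((B.filter (fun b => i ∈ S b)).card : ℝ) ≤ (d : ℝ) := by
        exact_mod_cast hcount i (Finset.mem_insert_self i T₀)
      set q : ℝ := 1 - ((B.filter (fun b => i ∈ S b)).card : ℝ) / d with hq
      have hq0 : 0 ≤ q := by
        rw [hq, sub_nonneg, div_le_one (by positivity)]
        exact hB1card
      have holder := ENNReal.lintegral_mul_prod_norm_pow_le
        (μ := (volume : Measure I)) (B.filter (fun b => i ∈ S b))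
        (g := fun _ => 1) (f := fun b t => g b (update z i t) ^ (d : ℝ))
        aemeasurable_const
        (fun b hb => (((hmeas b (Finset.filter_subset _ _ hb)).comp
          (measurable_update z)).pow_const (d : ℝ)).aemeasurable)
        q (p := fun _ => 1 / (d : ℝ))
        (by
          rw [Finset.sum_const, nsmul_eq_mul, hq]
          ring)
        hq0 (fun _ _ => by positivity)
      have hL : (∫⁻ t : I, (1 : ℝ≥0∞) ^ q *
            ∏ b ∈ B.filter (fun b => i ∈ S b), (g b (update z i t) ^ (d : ℝ)) ^ (1 / (d : ℝ)))
          = ∫⁻ t : I, ∏ b ∈ B.filter (fun b => i ∈ S b), g b (update z i t) := by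
        simp_rw [ENNReal.one_rpow, one_mul, rpow_cancel]
      have hR : ((∫⁻ _ : I, (1 : ℝ≥0∞)) ^ q *
            ∏ b ∈ B.filter (fun b => i ∈ S b),
              (∫⁻ t : I, g b (update z i t) ^ (d : ℝ)) ^ (1 / (d : ℝ)))
          = ∏ b ∈ B.filter (fun b => i ∈ S b), h b z := by
        rw [lintegral_one, measure_univ, ENNReal.one_rpow, one_mul]
        refine Finset.prod_congr rfl fun b hb => ?_
        have hib : i ∈ S b := (Finset.mem_filter.mp hb).2
        simp only [hh, if_pos hib, lmarginal_singleton]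
      rw [hL, hR] at holder
      calc (∫⁻ t : I, ∏ b ∈ B.filter (fun b => i ∈ S b), g b (update z i t)) *
            ∏ b ∈ B.filter (fun b => ¬ i ∈ S b), g b z
          ≤ (∏ b ∈ B.filter (fun b => i ∈ S b), h b z) *
            ∏ b ∈ B.filter (fun b => ¬ i ∈ S b), g b z := by
            exact mul_le_mul_left holder _
        _ = ∏ b ∈ B, h b z := by
            rw [← Finset.prod_filter_mul_prod_filter_not B (fun b => i ∈ S b)]
            congr 1
            refine Finset.prod_congr rfl fun b hb => ?_
            simp only [hh, if_neg (Finset.mem_filter.mp hb).2]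
    have hmeas' : ∀ b ∈ B, Measurable (h b) := by
      intro b hb
      by_cases hib : i ∈ S b
      · simp only [hh, if_pos hib]
        exact (Measurable.lmarginal _ ((hmeas b hb).pow_const _)).pow_const _
      · simpa only [hh, if_neg hib] using hmeas b hb
    have hsub' : ∀ b ∈ B, (S b).erase i ⊆ T₀ := by
      intro b hb a ha
      have h1 := Finset.mem_erase.mp ha
      rcases Finset.mem_insert.mp (hsub b hb h1.2) with h2 | h2
      · exact absurd h2 h1.1
      · exact h2
    have hdep' : ∀ b ∈ B, ∀ (x : Fin n → I) (j : Fin n) (y : I),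
        j ∉ (S b).erase i → h b (update x j y) = h b x := by
      intro b hb x j y hj
      by_cases hib : i ∈ S b
      · simp only [hh, if_pos hib]
        by_cases hji : j = i
        · subst hji
          congr 1
          exact lmarginal_update_of_mem (μ := fun _ => (volume : Measure I))
            (Finset.mem_singleton_self j) (fun w => g b w ^ (d : ℝ)) x y
        · have hjs : j ∉ S b := fun hmem => hj (Finset.mem_erase.mpr ⟨hji, hmem⟩)
          congr 1
          rw [lmarginal_update_of_notMem ((hmeas b hb).pow_const _)
            (by simp [hji]) x y]
          congr 1
          funext w
          simp only [comp_apply]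
          rw [hdep b hb w j y hjs]
      · simp only [hh, if_neg hib]
        refine hdep b hb x j y ?_
        rwa [Finset.erase_eq_of_notMem hib] at hj
    have hcount' : ∀ j ∈ T₀, (B.filter (fun b => j ∈ (S b).erase i)).card ≤ d := by
      intro j hj
      have hji : j ≠ i := fun hji => hi (hji ▸ hj)
      have : B.filter (fun b => j ∈ (S b).erase i) = B.filter (fun b => j ∈ S b) :=
        Finset.filter_congr fun b _ => by simp [Finset.mem_erase, hji]
      rw [this]
      exact hcount j (Finset.mem_insert_of_mem hj)
    calc (∫⋯∫⁻_T₀, fun z => ∫⁻ t, (fun w => ∏ b ∈ B, g b w) (update z i t)) x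
        ≤ (∫⋯∫⁻_T₀, fun z => ∏ b ∈ B, h b z) x := by
          refine lmarginal_mono (fun z => ?_) x
          exact claimA z
      _ ≤ ∏ b ∈ B, ((∫⋯∫⁻_((S b).erase i), fun z => h b z ^ (d : ℝ)) x) ^ (1 / (d : ℝ)) :=
          ih B (fun b => (S b).erase i) h hmeas' hsub' hdep' hcount' x
      _ = ∏ b ∈ B, ((∫⋯∫⁻_(S b), fun z => g b z ^ (d : ℝ)) x) ^ (1 / (d : ℝ)) := by
          refine Finset.prod_congr rfl fun b hb => ?_
          by_cases hib : i ∈ S b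
          · have h1 : (fun z => h b z ^ (d : ℝ))
                = (∫⋯∫⁻_{i}, fun w => g b w ^ (d : ℝ)) := by
              funext z
              simp only [hh, if_pos hib]
              rw [← ENNReal.rpow_mul, one_div, inv_mul_cancel₀ hd0, ENNReal.rpow_one]
            rw [h1]
            have h2 : (S b).erase i ∪ {i} = S b := by
              rw [Finset.union_comm, ← Finset.insert_eq]
              exact Finset.insert_erase hib
            conv_rhs => rw [← h2, lmarginal_union (fun _ => (volume : Measure I)) _
              ((hmeas b hb).pow_const _)
              (Finset.disjoint_singleton_right.mpr (Finset.notMem_erase i _))]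
          · simp only [hh, if_neg hib, Finset.erase_eq_of_notMem hib]



/-- Integrating out a set of coordinates, each of which appears in exactly one factor. -/
theorem factor_aux {n : ℕ} (T : Finset (Fin n)) :
    ∀ (Bs : Finset (Fin n)), T ⊆ Bs →
    ∀ (F : Fin n → (Fin n → I) → ℝ≥0∞),
    (∀ b ∈ Bs, Measurable (F b)) →
    (∀ b ∈ Bs, ∀ j ∈ Bs, j ≠ b → ∀ (x : Fin n → I) (y : I), F b (update x j y) = F b x) →
    ∀ (R : (Fin n → I) → ℝ≥0∞), Measurable R →
    (∀ j ∈ Bs, ∀ (x : Fin n → I) (y : I), R (update x j y) = R x) →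
    (∫⋯∫⁻_T, fun z => R z * ∏ b ∈ Bs, F b z) =
      fun z => R z * (∏ b ∈ T, (∫⋯∫⁻_{b}, F b) z) * ∏ b ∈ Bs \ T, F b z := by
  induction T using Finset.induction with
  | empty =>
    intro Bs _ F _ _ R _ _
    funext z
    simp [lmarginal_empty, mul_assoc]
  | @insert b₀ T₀ hb₀ ih =>
    intro Bs hTBs F hF hdep R hR hdepR
    have hb₀Bs : b₀ ∈ Bs := hTBs (Finset.mem_insert_self _ _)
    have hT₀ : T₀ ⊆ Bs.erase b₀ := fun a ha =>
      Finset.mem_erase.mpr ⟨fun hab => hb₀ (hab ▸ ha), hTBs (Finset.mem_insert_of_mem ha)⟩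
    have hint : Measurable fun z : Fin n → I => R z * ∏ b ∈ Bs, F b z :=
      hR.mul (Finset.measurable_prod _ fun b hb => hF b hb)
    rw [lmarginal_insert' _ hint hb₀]
    have key : (fun z : Fin n → I =>
          ∫⁻ t, (fun w => R w * ∏ b ∈ Bs, F b w) (update z b₀ t))
        = fun z => (R z * (∫⋯∫⁻_{b₀}, F b₀) z) * ∏ b ∈ Bs.erase b₀, F b z := by
      funext z
      have h1 : ∀ t : I, (fun w => R w * ∏ b ∈ Bs, F b w) (update z b₀ t)
          = (R z * ∏ b ∈ Bs.erase b₀, F b z) * F b₀ (update z b₀ t) := by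
        intro t
        simp only
        rw [hdepR b₀ hb₀Bs z t]
        rw [← Finset.mul_prod_erase Bs _ hb₀Bs]
        have : ∏ b ∈ Bs.erase b₀, F b (update z b₀ t) = ∏ b ∈ Bs.erase b₀, F b z :=
          Finset.prod_congr rfl fun b hb =>
            hdep b (Finset.mem_of_mem_erase hb) b₀ hb₀Bs
              (fun h => (Finset.mem_erase.mp hb).1 h.symm) z t
        rw [this]
        ring
      simp_rw [h1]
      rw [lintegral_const_mul _ (show Measurable fun t : I => F b₀ (update z b₀ t) from
        (hF b₀ hb₀Bs).comp (measurable_update z))]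
      rw [lmarginal_singleton]
      ring
    rw [key]
    have := ih (Bs.erase b₀) hT₀ F
      (fun b hb => hF b (Finset.mem_of_mem_erase hb))
      (fun b hb j hj hne x y =>
        hdep b (Finset.mem_of_mem_erase hb) j (Finset.mem_of_mem_erase hj) hne x y)
      (fun z => R z * (∫⋯∫⁻_{b₀}, F b₀) z)
      (hR.mul (Measurable.lmarginal _ (hF b₀ hb₀Bs)))
      (by
        intro j hj x y
        have hjBs : j ∈ Bs := Finset.mem_of_mem_erase hj
        have hjb₀ : j ≠ b₀ := (Finset.mem_erase.mp hj).1
        beta_reduce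
        rw [hdepR j hjBs x y]
        congr 1
        rw [lmarginal_update_of_notMem (hF b₀ hb₀Bs) (by simp [hjb₀]) x y]
        congr 1
        funext w
        simp only [comp_apply]
        exact hdep b₀ hb₀Bs j hjBs hjb₀ w y)
    rw [this]
    funext z
    have hsd : Bs.erase b₀ \ T₀ = Bs \ insert b₀ T₀ := by
      ext a
      simp only [Finset.mem_sdiff, Finset.mem_erase, Finset.mem_insert]
      tauto
    rw [hsd, Finset.prod_insert hb₀]
    ring



theorem reindex_aux {n d : ℕ} (F : I → I → ℝ≥0∞) (s : Finset (Fin n)) (hs : s.card = d)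
    (x₀ : Fin n → I) :
    (∫⋯∫⁻_s, fun z => (∫⁻ t, ∏ a ∈ s, F (z a) t) ^ (d : ℝ)) x₀
      = ∫⁻ z : Fin d → I, (∫⁻ t, ∏ i, F (z i) t) ^ (d : ℝ) := by
  have e : Fin d ≃ {x // x ∈ s} := ((s.equivFin).trans (finCongr hs)).symm
  have mp := MeasureTheory.measurePreserving_piCongrLeft
    (fun _ : {x // x ∈ s} => (volume : Measure I)) e
  rw [lmarginal]
  rw [MeasurePreserving.lintegral_map_equiv _ _ mp]
  rw [volume_pi]
  refine lintegral_congr fun z => ?_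
  congr 1
  refine lintegral_congr fun t => ?_
  rw [← Finset.prod_attach s (fun a => F (updateFinset x₀ s ((MeasurableEquiv.piCongrLeft
    (fun _ : {x // x ∈ s} => I) e) z) a) t)]
  rw [← Finset.univ_eq_attach]
  rw [← Equiv.prod_comp e (fun a => F (updateFinset x₀ s ((MeasurableEquiv.piCongrLeft
    (fun _ : {x // x ∈ s} => I) e) z) a.1) t)]
  refine Finset.prod_congr rfl fun i _ => ?_
  congr 1
  have h1 : updateFinset x₀ s ((MeasurableEquiv.piCongrLeft
      (fun _ : {x // x ∈ s} => I) e) z) (e i).1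
      = (MeasurableEquiv.piCongrLeft (fun _ : {x // x ∈ s} => I) e) z (e i) := by
    simp [updateFinset, (e i).2]
  rw [h1]
  show (Equiv.piCongrLeft (fun _ : {x // x ∈ s} => I) e) z (e i) = z i
  rw [Equiv.piCongrLeft_apply_apply]



theorem homDensity_eq_toReal {m : ℕ} (H : SimpleGraph (Fin m)) [DecidableRel H.Adj]
    (f : I → I → ℝ) (hrange : ∀ x y, f x y ∈ Set.Icc (0:ℝ) 1)
    (hmeas : Measurable (fun z : I × I => f z.1 z.2)) :
    homDensity H f = (∫⁻ x : Fin m → I,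
      ∏ e ∈ Finset.univ.filter (fun e : Fin m × Fin m => e.1 < e.2 ∧ H.Adj e.1 e.2),
        ENNReal.ofReal (f (x e.1) (x e.2))).toReal := by
  rw [homDensity, MeasureTheory.integral_eq_lintegral_of_nonneg_ae]
  · congr 1
    refine lintegral_congr fun x => ?_
    exact ENNReal.ofReal_prod_of_nonneg fun e _ => (hrange _ _).1
  · filter_upwards with x
    exact Finset.prod_nonneg fun e _ => (hrange _ _).1
  · refine (Finset.measurable_prod _ fun e _ => ?_).aestronglyMeasurable
    exact hmeas.comp (((measurable_pi_apply (a := e.1)).prodMk (measurable_pi_apply (a := e.2))) :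
      Measurable fun x : Fin m → I => (x e.1, x e.2))

theorem edge_prod_eq {m : ℕ} (G : SimpleGraph (Fin m)) [DecidableRel G.Adj]
    (c : Fin m → Fin 2) (hc : ∀ {u v}, G.Adj u v → c u ≠ c v)
    (F : I → I → ℝ≥0∞) (hFsymm : ∀ a b, F a b = F b a) (x : Fin m → I) :
    ∏ e ∈ Finset.univ.filter (fun e : Fin m × Fin m => e.1 < e.2 ∧ G.Adj e.1 e.2),
        F (x e.1) (x e.2)
      = ∏ b ∈ Finset.univ.filter (fun b => c b = 1),
          ∏ a ∈ G.neighborFinset b, F (x a) (x b) := by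
  have fin2 : ∀ u v : Fin 2, u ≠ v → v ≠ 1 → u = 1 := by decide
  have step1 : ∏ e ∈ Finset.univ.filter (fun e : Fin m × Fin m => e.1 < e.2 ∧ G.Adj e.1 e.2),
        F (x e.1) (x e.2)
      = ∏ p ∈ Finset.univ.filter (fun p : Fin m × Fin m => c p.1 = 1 ∧ G.Adj p.2 p.1),
        F (x p.2) (x p.1) := by
    refine Finset.prod_bij' (i := fun e _ => if c e.2 = 1 then (e.2, e.1) else e)
      (j := fun p _ => if p.2 < p.1 then (p.2, p.1) else p) ?_ ?_ ?_ ?_ ?_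
    · intro e he
      obtain ⟨-, he1, he2⟩ := Finset.mem_filter.mp he
      by_cases h : c e.2 = 1
      · simp only [if_pos h, Finset.mem_filter, Finset.mem_univ, true_and]
        exact ⟨h, he2⟩
      · simp only [if_neg h, Finset.mem_filter, Finset.mem_univ, true_and]
        exact ⟨fin2 _ _ (hc he2) h, he2.symm⟩
    · intro p hp
      obtain ⟨-, hp1, hp2⟩ := Finset.mem_filter.mp hp
      by_cases h : p.2 < p.1
      · simp only [if_pos h, Finset.mem_filter, Finset.mem_univ, true_and]
        exact ⟨h, hp2⟩
      · simp only [if_neg h, Finset.mem_filter, Finset.mem_univ, true_and]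
        refine ⟨lt_of_le_of_ne (not_lt.mp h) hp2.ne', hp2.symm⟩
    · intro e he
      obtain ⟨-, he1, he2⟩ := Finset.mem_filter.mp he
      by_cases h : c e.2 = 1
      · simp only [if_pos h]
        rw [if_pos he1]
      · simp only [if_neg h]
        rw [if_neg (asymm he1)]
    · intro p hp
      obtain ⟨-, hp1, hp2⟩ := Finset.mem_filter.mp hp
      by_cases h : p.2 < p.1
      · simp only [if_pos h]
        rw [if_pos hp1]
      · simp only [if_neg h]
        have hne : c p.2 ≠ 1 := fun h1 => hc hp2 (h1.trans hp1.symm)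
        rw [if_neg hne]
    · intro e he
      obtain ⟨-, he1, he2⟩ := Finset.mem_filter.mp he
      by_cases h : c e.2 = 1
      · simp only [if_pos h]
      · simp only [if_neg h]
        exact hFsymm _ _
  rw [step1, ← Finset.univ_product_univ, Finset.prod_filter, Finset.prod_product]
  have inner : ∀ b : Fin m, (∏ a : Fin m,
        if c b = 1 ∧ G.Adj a b then F (x a) (x b) else 1)
      = if c b = 1 then ∏ a ∈ G.neighborFinset b, F (x a) (x b) else 1 := by
    intro b
    by_cases hb : c b = 1
    · rw [if_pos hb]
      have : G.neighborFinset b = Finset.univ.filter (fun a => G.Adj a b) := by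
        ext a
        simp [SimpleGraph.mem_neighborFinset, G.adj_comm]
      rw [this, Finset.prod_filter]
      refine Finset.prod_congr rfl fun a _ => by simp [hb]
    · simp [hb]
  simp_rw [inner]
  exact (Finset.prod_filter _ _).symm

/-- The complete bipartite graph `K_{d,d}` on the vertex set `Fin (2*d)`,
with parts `{0,…,d-1}` and `{d,…,2d-1}`. -/
def Kdd (d : ℕ) : SimpleGraph (Fin (2 * d)) where
  Adj i j := Xor (i.val < d) (j.val < d)
  symm := ⟨fun i j h => h.symm⟩
  loopless := ⟨fun i h => h.elim (fun ⟨h1, h2⟩ => h2 h1) (fun ⟨h1, h2⟩ => h2 h1)⟩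

instance (d : ℕ) : DecidableRel (Kdd d).Adj := fun i j =>
  inferInstanceAs (Decidable (Xor _ _))

theorem card_low (d : ℕ) :
    (Finset.univ.filter (fun j : Fin (2*d) => (j : ℕ) < d)).card = d := by
  have h2d : d ≤ 2 * d := by omega
  have : (Finset.univ.filter (fun j : Fin (2*d) => (j : ℕ) < d))
      = (Finset.univ : Finset (Fin d)).map ⟨Fin.castLE h2d, Fin.castLE_injective h2d⟩ := by
    ext j
    simp only [Finset.mem_filter, Finset.mem_univ, true_and, Finset.mem_map,
      Function.Embedding.coeFn_mk]
    constructor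
    · intro hj
      exact ⟨⟨(j : ℕ), hj⟩, by ext; simp⟩
    · rintro ⟨i, rfl⟩
      simpa using i.isLt
  rw [this, Finset.card_map, Finset.card_univ, Fintype.card_fin]

theorem card_high (d : ℕ) :
    (Finset.univ.filter (fun j : Fin (2*d) => ¬ (j : ℕ) < d)).card = d := by
  have h1 := Finset.card_filter_add_card_filter_not
    (s := (Finset.univ : Finset (Fin (2*d)))) (p := fun j => (j : ℕ) < d)
  have h2 := card_low d
  have h3 : (Finset.univ : Finset (Fin (2*d))).card = 2 * d := by
    rw [Finset.card_univ, Fintype.card_fin]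
  omega

theorem kdd_eq (d : ℕ) (hd : 1 ≤ d) (F : I → I → ℝ≥0∞)
    (hF : Measurable fun z : I × I => F z.1 z.2) :
    (∫⁻ x : Fin (2*d) → I, ∏ e ∈ Finset.univ.filter
        (fun e : Fin (2*d) × Fin (2*d) => e.1 < e.2 ∧ (Kdd d).Adj e.1 e.2),
        F (x e.1) (x e.2))
      = ∫⁻ z : Fin d → I, (∫⁻ t, ∏ i, F (z i) t) ^ (d : ℝ) := by
  classical
  set low := Finset.univ.filter (fun j : Fin (2*d) => (j : ℕ) < d) with hlow
  set Bs := Finset.univ.filter (fun j : Fin (2*d) => ¬ (j : ℕ) < d) with hBs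
  set Fb : Fin (2*d) → (Fin (2*d) → I) → ℝ≥0∞ :=
    fun b z => ∏ a ∈ low, F (z a) (z b) with hFb
  have hlowBs : ∀ a ∈ low, ∀ b ∈ Bs, a ≠ b := by
    intro a ha b hb hab
    have h1 := (Finset.mem_filter.mp ha).2
    have h2 := (Finset.mem_filter.mp hb).2
    exact h2 (hab ▸ h1)
  have hprod : ∀ x : Fin (2*d) → I,
      (∏ e ∈ Finset.univ.filter
        (fun e : Fin (2*d) × Fin (2*d) => e.1 < e.2 ∧ (Kdd d).Adj e.1 e.2),
        F (x e.1) (x e.2))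
      = ∏ b ∈ Bs, Fb b x := by
    intro x
    have hfilt : Finset.univ.filter
        (fun e : Fin (2*d) × Fin (2*d) => e.1 < e.2 ∧ (Kdd d).Adj e.1 e.2)
        = Finset.univ.filter
          (fun e : Fin (2*d) × Fin (2*d) => ((e.1 : ℕ) < d) ∧ ¬ ((e.2 : ℕ) < d)) := by
      refine Finset.filter_congr fun e _ => ?_
      have hAdj : (Kdd d).Adj e.1 e.2 ↔ Xor ((e.1 : ℕ) < d) ((e.2 : ℕ) < d) := Iff.rfl
      rw [hAdj, Fin.lt_def]
      unfold Xor
      constructor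
      · rintro ⟨h1, h2⟩
        rcases h2 with ⟨h3, h4⟩ | ⟨h3, h4⟩
        · exact ⟨h3, h4⟩
        · omega
      · rintro ⟨h1, h2⟩
        exact ⟨by omega, Or.inl ⟨h1, h2⟩⟩
    rw [hfilt, ← Finset.univ_product_univ, Finset.prod_filter, Finset.prod_product,
      Finset.prod_comm]
    have inner : ∀ b : Fin (2*d),
        (∏ a : Fin (2*d), if ((a : ℕ) < d) ∧ ¬ ((b : ℕ) < d) then F (x a) (x b) else 1)
        = if ¬ (b : ℕ) < d then Fb b x else 1 := by
      intro b
      by_cases hb : (b : ℕ) < d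
      · simp [hb]
      · rw [if_pos hb, hFb]
        simp only [hlow, Finset.prod_filter]
        exact Finset.prod_congr rfl fun a _ => by simp [hb]
    simp_rw [inner]
    rw [hBs]
    exact (Finset.prod_filter _ _).symm
  have hFbmeas : ∀ b ∈ Bs, Measurable (Fb b) := by
    intro b _
    exact Finset.measurable_prod _ fun a _ =>
      hF.comp (((measurable_pi_apply (a := a)).prodMk (measurable_pi_apply (a := b))) :
        Measurable fun x : Fin (2*d) → I => (x a, x b))
  have hFbdep : ∀ b ∈ Bs, ∀ j ∈ Bs, j ≠ b →
      ∀ (x : Fin (2*d) → I) (y : I), Fb b (update x j y) = Fb b x := by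
    intro b hb j hj hne x y
    refine Finset.prod_congr rfl fun a ha => ?_
    rw [update_of_ne (hlowBs a ha j hj), update_of_ne (Ne.symm hne)]
  set x₀ : Fin (2*d) → I := fun _ => 0 with hx₀
  rw [lintegral_congr hprod, volume_pi,
    lintegral_eq_lmarginal_univ (μ := fun _ : Fin (2*d) => (volume : Measure I)) x₀]
  have huniv : (Finset.univ : Finset (Fin (2*d))) = (Finset.univ \ Bs) ∪ Bs :=
    (Finset.sdiff_union_of_subset (Finset.subset_univ Bs)).symm
  rw [huniv, lmarginal_union _ _ (Finset.measurable_prod _ hFbmeas) Finset.sdiff_disjoint]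
  have hfac : (∫⋯∫⁻_Bs, fun z => ∏ b ∈ Bs, Fb b z)
      = fun z => ∏ b ∈ Bs, (∫⋯∫⁻_{b}, Fb b) z := by
    have h1 : (fun z : Fin (2*d) → I => ∏ b ∈ Bs, Fb b z)
        = fun z => (1 : ℝ≥0∞) * ∏ b ∈ Bs, Fb b z := by
      funext z; rw [one_mul]
    rw [h1, factor_aux Bs Bs (le_refl Bs) Fb hFbmeas hFbdep (fun _ => 1) measurable_const
      (fun _ _ _ _ => rfl)]
    funext z
    simp
  rw [hfac]
  have hsingle : ∀ b ∈ Bs, ∀ z : Fin (2*d) → I,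
      (∫⋯∫⁻_{b}, Fb b) z = ∫⁻ t, ∏ a ∈ low, F (z a) t := by
    intro b hb z
    rw [lmarginal_singleton]
    refine lintegral_congr fun t => ?_
    refine Finset.prod_congr rfl fun a ha => ?_
    rw [update_of_ne (hlowBs a ha b hb), update_self]
  have hpow : (fun z : Fin (2*d) → I => ∏ b ∈ Bs, (∫⋯∫⁻_{b}, Fb b) z)
      = fun z => (∫⁻ t, ∏ a ∈ low, F (z a) t) ^ (d : ℝ) := by
    funext z
    rw [Finset.prod_congr rfl (fun b hb => hsingle b hb z), Finset.prod_const, card_high d,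
      ← ENNReal.rpow_natCast]
  rw [hpow]
  have hsd : Finset.univ \ Bs = low := by
    ext j
    simp [hBs, hlow]
  rw [hsd]
  exact reindex_aux F low (card_low d) x₀

/-- For a `d`-regular bipartite graph `G` and a graphon `f`,
`t(G, f) ≤ t(K_{d,d}, f)^{|V(G)|/(2d)}`. -/
theorem homDensity_le_homDensity_Kdd
    {m : ℕ} (G : SimpleGraph (Fin m)) [DecidableRel G.Adj]
    (d : ℕ) (hd : 1 ≤ d)
    (hreg : G.IsRegularOfDegree d)
    (hbip : G.Colorable 2)
    (f : I → I → ℝ)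
    (hrange : ∀ x y, f x y ∈ Set.Icc (0 : ℝ) 1)
    (hsymm : ∀ x y, f x y = f y x)
    (hmeas : Measurable (fun z : I × I => f z.1 z.2)) :
    homDensity G f ≤ (homDensity (Kdd d) f) ^ ((m : ℝ) / (2 * d)) := by
  classical
  obtain ⟨C⟩ := hbip
  set c : Fin m → Fin 2 := ⇑C with hcdef
  have hc : ∀ {u v}, G.Adj u v → c u ≠ c v := fun h => C.valid h
  set F : I → I → ℝ≥0∞ := fun a b => ENNReal.ofReal (f a b) with hFdef
  have hFmeas : Measurable fun z : I × I => F z.1 z.2 := ENNReal.measurable_ofReal.comp hmeas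
  have hFsymm : ∀ a b, F a b = F b a := fun a b => by rw [hFdef]; simp only [hsymm a b]
  have hFle1 : ∀ a b, F a b ≤ 1 := fun a b => ENNReal.ofReal_le_one.mpr (hrange a b).2
  set Bs := Finset.univ.filter (fun v : Fin m => c v = 1) with hBs
  have fin2 : ∀ u v : Fin 2, u ≠ v → u ≠ 1 → v = 1 := by decide
  have hdeg : ∀ v : Fin m, (G.neighborFinset v).card = d := fun v => hreg v
  have hnbrBs : ∀ b ∈ Bs, ∀ a ∈ G.neighborFinset b, a ∉ Bs := by
    intro b hb a ha hamem
    have h1 : G.Adj b a := (SimpleGraph.mem_neighborFinset _ _ _).mp ha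
    exact hc h1 (((Finset.mem_filter.mp hb).2).trans ((Finset.mem_filter.mp hamem).2).symm)
  -- cardinality: m = 2 * Bs.card
  have hm : m = 2 * Bs.card := by
    set A := Finset.univ.filter (fun v : Fin m => ¬ c v = 1) with hA
    have e1 : ∀ a ∈ A, G.neighborFinset a = Bs.filter (fun b => G.Adj a b) := by
      intro a ha
      ext b
      simp only [SimpleGraph.mem_neighborFinset, hBs, Finset.mem_filter, Finset.mem_univ,
        true_and]
      exact ⟨fun hab => ⟨fin2 _ _ (hc hab) ((Finset.mem_filter.mp ha).2), hab⟩, And.right⟩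
    have e2 : ∀ b ∈ Bs, G.neighborFinset b = A.filter (fun a => G.Adj a b) := by
      intro b hb
      ext a
      simp only [SimpleGraph.mem_neighborFinset, hA, Finset.mem_filter, Finset.mem_univ,
        true_and]
      constructor
      · intro hba
        exact ⟨fun h1 => hc hba (((Finset.mem_filter.mp hb).2).trans h1.symm), hba.symm⟩
      · exact fun h => h.2.symm
    have count : ∑ a ∈ A, (Bs.filter (fun b => G.Adj a b)).card
        = ∑ b ∈ Bs, (A.filter (fun a => G.Adj a b)).card := by
      simp_rw [Finset.card_filter]
      exact Finset.sum_comm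
    have hAd : ∑ a ∈ A, (G.neighborFinset a).card = A.card * d := by
      rw [Finset.sum_congr rfl fun a _ => hdeg a, Finset.sum_const, smul_eq_mul]
    have hBd : ∑ b ∈ Bs, (G.neighborFinset b).card = Bs.card * d := by
      rw [Finset.sum_congr rfl fun b _ => hdeg b, Finset.sum_const, smul_eq_mul]
    have key : A.card * d = Bs.card * d := by
      rw [← hAd, ← hBd]
      calc ∑ a ∈ A, (G.neighborFinset a).card
          = ∑ a ∈ A, (Bs.filter (fun b => G.Adj a b)).card :=
            Finset.sum_congr rfl fun a ha => by rw [e1 a ha]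
        _ = ∑ b ∈ Bs, (A.filter (fun a => G.Adj a b)).card := count
        _ = ∑ b ∈ Bs, (G.neighborFinset b).card :=
            Finset.sum_congr rfl fun b hb => by rw [e2 b hb]
    have hcardAB : A.card = Bs.card := Nat.eq_of_mul_eq_mul_right (by omega) key
    have htot := Finset.card_filter_add_card_filter_not
      (s := (Finset.univ : Finset (Fin m))) (p := fun v => c v = 1)
    rw [Finset.card_univ, Fintype.card_fin] at htot
    rw [← hBs] at htot
    rw [← hA] at htot
    omega
  set K : ℝ≥0∞ := ∫⁻ z : Fin d → I, (∫⁻ t, ∏ i, F (z i) t) ^ (d : ℝ) with hK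
  set x₀ : Fin m → I := fun _ => 0 with hx₀
  set Fb : Fin m → (Fin m → I) → ℝ≥0∞ :=
    fun b z => ∏ a ∈ G.neighborFinset b, F (z a) (z b) with hFb
  set g : Fin m → (Fin m → I) → ℝ≥0∞ :=
    fun b z => ∫⁻ t, ∏ a ∈ G.neighborFinset b, F (z a) t with hg
  have hFbmeas : ∀ b : Fin m, Measurable (Fb b) := by
    intro b
    exact Finset.measurable_prod _ fun a _ =>
      hFmeas.comp (((measurable_pi_apply (a := a)).prodMk (measurable_pi_apply (a := b))) :
        Measurable fun x : Fin m → I => (x a, x b))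
  have hgmeas : ∀ b : Fin m, Measurable (g b) := by
    intro b
    refine Measurable.lintegral_prod_right' (f := fun p : (Fin m → I) × I =>
      ∏ a ∈ G.neighborFinset b, F (p.1 a) p.2) ?_
    exact Finset.measurable_prod _ fun a _ =>
      hFmeas.comp ((((measurable_pi_apply (a := a)).comp measurable_fst).prodMk
        measurable_snd) : Measurable fun p : (Fin m → I) × I => (p.1 a, p.2))
  have main : (∫⁻ x : Fin m → I,
      ∏ e ∈ Finset.univ.filter (fun e : Fin m × Fin m => e.1 < e.2 ∧ G.Adj e.1 e.2),
        F (x e.1) (x e.2)) ≤ K ^ ((Bs.card : ℝ) / d) := by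
    have h1 : ∀ x : Fin m → I,
        (∏ e ∈ Finset.univ.filter (fun e : Fin m × Fin m => e.1 < e.2 ∧ G.Adj e.1 e.2),
          F (x e.1) (x e.2)) = ∏ b ∈ Bs, Fb b x := fun x =>
      edge_prod_eq G c hc F hFsymm x
    rw [lintegral_congr h1, volume_pi,
      lintegral_eq_lmarginal_univ (μ := fun _ : Fin m => (volume : Measure I)) x₀]
    have huniv : (Finset.univ : Finset (Fin m)) = (Finset.univ \ Bs) ∪ Bs :=
      (Finset.sdiff_union_of_subset (Finset.subset_univ Bs)).symm
    rw [huniv, lmarginal_union _ _ (Finset.measurable_prod _ fun b _ => hFbmeas b)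
      Finset.sdiff_disjoint]
    have hFbdep : ∀ b ∈ Bs, ∀ j ∈ Bs, j ≠ b →
        ∀ (x : Fin m → I) (y : I), Fb b (update x j y) = Fb b x := by
      intro b hb j hj hne x y
      refine Finset.prod_congr rfl fun a ha => ?_
      have haj : a ≠ j := fun haj => (hnbrBs b hb a ha) (haj ▸ hj)
      rw [update_of_ne haj, update_of_ne (Ne.symm hne)]
    have hfac : (∫⋯∫⁻_Bs, fun z => ∏ b ∈ Bs, Fb b z)
        = fun z => ∏ b ∈ Bs, g b z := by
      have h2 : (fun z : Fin m → I => ∏ b ∈ Bs, Fb b z)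
          = fun z => (1 : ℝ≥0∞) * ∏ b ∈ Bs, Fb b z := by
        funext z; rw [one_mul]
      rw [h2, factor_aux Bs Bs (le_refl Bs) Fb (fun b _ => hFbmeas b) hFbdep (fun _ => 1)
        measurable_const (fun _ _ _ _ => rfl)]
      funext z
      simp only [Finset.sdiff_self, Finset.prod_empty, mul_one, one_mul]
      refine Finset.prod_congr rfl fun b hb => ?_
      rw [lmarginal_singleton]
      refine lintegral_congr fun t => ?_
      refine Finset.prod_congr rfl fun a ha => ?_
      have hab : a ≠ b :=
        (G.ne_of_adj ((SimpleGraph.mem_neighborFinset _ _ _).mp ha)).symm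
      rw [update_of_ne hab, update_self]
    rw [hfac]
    have hsub : ∀ b ∈ Bs, G.neighborFinset b ⊆ Finset.univ \ Bs := by
      intro b hb a ha
      exact Finset.mem_sdiff.mpr ⟨Finset.mem_univ a, hnbrBs b hb a ha⟩
    have hdepg : ∀ b ∈ Bs, ∀ (x : Fin m → I) (i : Fin m) (y : I),
        i ∉ G.neighborFinset b → g b (update x i y) = g b x := by
      intro b _ x i y hi
      refine lintegral_congr fun t => Finset.prod_congr rfl fun a ha => ?_
      have hne : a ≠ i := by rintro rfl; exact hi ha
      rw [update_of_ne hne]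
    have hcount : ∀ i ∈ Finset.univ \ Bs,
        (Bs.filter (fun b => i ∈ G.neighborFinset b)).card ≤ d := by
      intro i _
      refine le_trans (Finset.card_le_card ?_) (le_of_eq (hdeg i))
      intro b hb
      have h1 := (Finset.mem_filter.mp hb).2
      rw [SimpleGraph.mem_neighborFinset] at h1 ⊢
      exact h1.symm
    have hbound := finner_aux (n := m) hd (Finset.univ \ Bs) Bs
      (fun b => G.neighborFinset b) g (fun b _ => hgmeas b) hsub hdepg hcount x₀
    refine le_trans hbound ?_
    have hrew : ∀ b ∈ Bs,
        ((∫⋯∫⁻_(G.neighborFinset b), fun z => g b z ^ (d : ℝ)) x₀) = K :=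
      fun b _ => reindex_aux F (G.neighborFinset b) (hdeg b) x₀
    rw [Finset.prod_congr rfl (fun b hb => by rw [hrew b hb]), Finset.prod_const,
      ← ENNReal.rpow_natCast (K ^ (1 / (d : ℝ))) Bs.card, ← ENNReal.rpow_mul]
    refine le_of_eq ?_
    congr 1
    rw [one_div, inv_mul_eq_div]
  -- pass to real numbers
  have hK1 : K ≤ 1 := by
    rw [hK]
    calc (∫⁻ z : Fin d → I, (∫⁻ t, ∏ i, F (z i) t) ^ (d : ℝ))
        ≤ ∫⁻ _ : Fin d → I, 1 := by
          refine lintegral_mono fun z => ?_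
          refine ENNReal.rpow_le_one ?_ (by positivity)
          calc (∫⁻ t, ∏ i, F (z i) t)
              ≤ ∫⁻ _ : I, 1 :=
                lintegral_mono fun t => Finset.prod_le_one (fun _ _ => zero_le)
                  (fun i _ => hFle1 _ _)
            _ = 1 := by rw [lintegral_one, measure_univ]
      _ = 1 := by rw [lintegral_one, measure_univ]
  have hKdd : homDensity (Kdd d) f = K.toReal := by
    rw [homDensity_eq_toReal (Kdd d) f hrange hmeas]
    congr 1
    exact kdd_eq d hd F hFmeas
  have hG : homDensity G f = (∫⁻ x : Fin m → I,
      ∏ e ∈ Finset.univ.filter (fun e : Fin m × Fin m => e.1 < e.2 ∧ G.Adj e.1 e.2),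
        F (x e.1) (x e.2)).toReal := homDensity_eq_toReal G f hrange hmeas
  rw [hG, hKdd]
  have hm' : (m : ℝ) = 2 * (Bs.card : ℝ) := by exact_mod_cast hm
  have hexp : (m : ℝ) / (2 * d) = (Bs.card : ℝ) / d := by
    rw [hm', mul_div_mul_left _ _ (by norm_num : (2:ℝ) ≠ 0)]
  calc (∫⁻ x : Fin m → I,
      ∏ e ∈ Finset.univ.filter (fun e : Fin m × Fin m => e.1 < e.2 ∧ G.Adj e.1 e.2),
        F (x e.1) (x e.2)).toReal
      ≤ (K ^ ((Bs.card : ℝ) / d)).toReal :=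
        ENNReal.toReal_mono (ne_top_of_le_ne_top ENNReal.one_ne_top
          (ENNReal.rpow_le_one hK1 (by positivity))) main
    _ = K.toReal ^ ((Bs.card : ℝ) / d) := (ENNReal.toReal_rpow _ _).symm
    _ = K.toReal ^ ((m : ℝ) / (2 * d)) := by
        congr 1
        exact hexp.symm
end

section
/- For every symmetric measurable f : [0,1]² → [−1,1], the operator norm and cut norm satisfy ‖f‖_op⁴ ≤ 4‖f‖_□, where ‖f‖_□ = sup_{S,T ⊆ [0,1]} |∫_{S×T} f(x,y) dx dy| is the cut norm and ‖f‖_op is the operator norm of the integral operator T_f on L²([0,1]). -/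
open MeasureTheory unitInterval

section Helpers

variable {α : Type*} [MeasurableSpace α] {μ : Measure α} [IsFiniteMeasure μ]

private lemma integrable_of_bdd {g : α → ℝ} (hg : AEStronglyMeasurable g μ) (C : ℝ)
    (h : ∀ z, ‖g z‖ ≤ C) : Integrable g μ :=
  (integrable_const C).mono' hg (Filter.Eventually.of_forall h)

omit [IsFiniteMeasure μ] in
private lemma myCS {u w : α → ℝ} (hu : MemLp u 2 μ) (hw : MemLp w 2 μ) :
    ∫ x, |u x| * |w x| ∂μ ≤
      Real.sqrt (∫ x, (u x) ^ 2 ∂μ) * Real.sqrt (∫ x, (w x) ^ 2 ∂μ) := by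
  have hpq : Real.HolderConjugate 2 2 := Real.HolderConjugate.two_two
  have h2 : (ENNReal.ofReal (2 : ℝ)) = 2 := by norm_num
  have key := integral_mul_norm_le_Lp_mul_Lq (μ := μ) hpq (h2 ▸ hu) (h2 ▸ hw)
  have e1 : ∀ v : α → ℝ, (∫ x, ‖v x‖ ^ (2:ℝ) ∂μ) = ∫ x, (v x) ^ 2 ∂μ := by
    intro v
    refine integral_congr_ae (Filter.Eventually.of_forall fun x => ?_)
    show ‖v x‖ ^ (2:ℝ) = v x ^ 2
    rw [show ((2:ℝ)) = ((2:ℕ):ℝ) by norm_num, Real.rpow_natCast]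
    simp [sq_abs]
  calc ∫ x, |u x| * |w x| ∂μ = ∫ x, ‖u x‖ * ‖w x‖ ∂μ := by simp [Real.norm_eq_abs]
    _ ≤ (∫ x, ‖u x‖ ^ (2:ℝ) ∂μ) ^ ((1:ℝ)/2) * (∫ x, ‖w x‖ ^ (2:ℝ) ∂μ) ^ ((1:ℝ)/2) := key
    _ = Real.sqrt (∫ x, (u x) ^ 2 ∂μ) * Real.sqrt (∫ x, (w x) ^ 2 ∂μ) := by
        rw [e1, e1, Real.sqrt_eq_rpow, Real.sqrt_eq_rpow]

end Helpers

noncomputable def opNorm (f : I → I → ℝ) : ℝ :=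
  sSup { c : ℝ | ∃ u : I → ℝ, MemLp u 2 ∧ (∫ y : I, (u y) ^ 2) ≤ 1 ∧
    c = Real.sqrt (∫ x : I, (∫ y : I, f x y * u y) ^ 2) }

noncomputable def cutNorm (f : I → I → ℝ) : ℝ :=
  sSup { c : ℝ | ∃ S T : Set I, MeasurableSet S ∧ MeasurableSet T ∧
    c = |∫ z : I × I, Set.indicator (S ×ˢ T) (fun z : I × I => f z.1 z.2) z| }

section Main

private lemma habs {f : I → I → ℝ} (hrange : ∀ x y, f x y ∈ Set.Icc (-1 : ℝ) 1) :
    ∀ x y, |f x y| ≤ 1 := fun x y => abs_le.2 ⟨(hrange x y).1, (hrange x y).2⟩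

private lemma cut_mem_le_one {f : I → I → ℝ}
    (hrange : ∀ x y, f x y ∈ Set.Icc (-1 : ℝ) 1)
    (hmeas : Measurable (fun z : I × I => f z.1 z.2)) :
    ∀ c ∈ { c : ℝ | ∃ S T : Set I, MeasurableSet S ∧ MeasurableSet T ∧
      c = |∫ z : I × I, Set.indicator (S ×ˢ T) (fun z : I × I => f z.1 z.2) z| }, c ≤ 1 := by
  rintro c ⟨S, T, hS, hT, rfl⟩
  have hb : ∀ z : I × I, ‖Set.indicator (S ×ˢ T) (fun z : I × I => f z.1 z.2) z‖ ≤ 1 := by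
    intro z
    classical
    rw [Real.norm_eq_abs, Set.indicator_apply]
    by_cases h : z ∈ S ×ˢ T
    · simpa [h] using habs hrange z.1 z.2
    · simp [h]
  calc |∫ z : I × I, Set.indicator (S ×ˢ T) (fun z : I × I => f z.1 z.2) z|
      = ‖∫ z : I × I, Set.indicator (S ×ˢ T) (fun z : I × I => f z.1 z.2) z‖ :=
        (Real.norm_eq_abs _).symm
    _ ≤ ∫ z : I × I, ‖Set.indicator (S ×ˢ T) (fun z : I × I => f z.1 z.2) z‖ :=
        norm_integral_le_integral_norm _
    _ ≤ ∫ _z : I × I, (1:ℝ) := by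
        refine integral_mono ?_ (integrable_const 1) hb
        exact (integrable_of_bdd (hmeas.indicator (hS.prod hT)).aestronglyMeasurable 1 hb).norm
    _ = 1 := by simp

private lemma cut_bddAbove {f : I → I → ℝ}
    (hrange : ∀ x y, f x y ∈ Set.Icc (-1 : ℝ) 1)
    (hmeas : Measurable (fun z : I × I => f z.1 z.2)) :
    BddAbove { c : ℝ | ∃ S T : Set I, MeasurableSet S ∧ MeasurableSet T ∧
      c = |∫ z : I × I, Set.indicator (S ×ˢ T) (fun z : I × I => f z.1 z.2) z| } :=
  ⟨1, fun c hc => cut_mem_le_one hrange hmeas c hc⟩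

private lemma cutNorm_nonneg {f : I → I → ℝ}
    (hrange : ∀ x y, f x y ∈ Set.Icc (-1 : ℝ) 1)
    (hmeas : Measurable (fun z : I × I => f z.1 z.2)) : 0 ≤ cutNorm f := by
  have h0 : (0:ℝ) ∈ { c : ℝ | ∃ S T : Set I, MeasurableSet S ∧ MeasurableSet T ∧
      c = |∫ z : I × I, Set.indicator (S ×ˢ T) (fun z : I × I => f z.1 z.2) z| } := by
    refine ⟨∅, ∅, MeasurableSet.empty, MeasurableSet.empty, ?_⟩
    simp
  exact le_csSup (cut_bddAbove hrange hmeas) h0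

/-- The layer-cake measure. -/
noncomputable def Pm : Measure ℝ := volume.restrict (Set.Icc (0:ℝ) 1)

instance : IsProbabilityMeasure Pm :=
  ⟨by simp [Pm, Real.volume_Icc]⟩

private lemma layer {c : ℝ} (h0 : 0 ≤ c) (h1 : c ≤ 1) :
    ∫ s, (if s < c then (1:ℝ) else 0) ∂Pm = c := by
  have heq : (fun s => if s < c then (1:ℝ) else 0)
      = Set.indicator (Set.Iio c) (fun _ => (1:ℝ)) := by
    funext s; rw [Set.indicator_apply]; simp [Set.mem_Iio]
  rw [heq, integral_indicator_const (1:ℝ) measurableSet_Iio]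
  have hP : Pm (Set.Iio c) = ENNReal.ofReal c := by
    rw [Pm, Measure.restrict_apply measurableSet_Iio]
    have : Set.Iio c ∩ Set.Icc (0:ℝ) 1 = Set.Ico 0 c := by
      ext s
      constructor
      · rintro ⟨hs, hs0, _⟩; exact ⟨hs0, hs⟩
      · rintro ⟨hs0, hs⟩; exact ⟨hs, hs0, le_trans (le_of_lt hs) h1⟩
    rw [this, Real.volume_Ico, sub_zero]
  rw [measureReal_def, hP]
  simp [ENNReal.toReal_ofReal h0]

/-- Key lemma: bilinear form against [0,1]-valued functions is bounded by the cut norm. -/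
private lemma bilinear_nonneg_le {f : I → I → ℝ}
    (hrange : ∀ x y, f x y ∈ Set.Icc (-1 : ℝ) 1)
    (hmeas : Measurable (fun z : I × I => f z.1 z.2))
    (a b : I → ℝ) (ha : Measurable a) (hb : Measurable b)
    (ha01 : ∀ x, a x ∈ Set.Icc (0:ℝ) 1) (hb01 : ∀ x, b x ∈ Set.Icc (0:ℝ) 1) :
    |∫ z : I × I, f z.1 z.2 * a z.1 * b z.2| ≤ cutNorm f := by
  classical
  set F : (I × I) → (ℝ × ℝ) → ℝ := fun z st =>
    f z.1 z.2 * (if st.1 < a z.1 then 1 else 0) * (if st.2 < b z.2 then 1 else 0) with hF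
  have hFmeas : Measurable (Function.uncurry F) := by
    apply Measurable.mul
    apply Measurable.mul
    · exact hmeas.comp measurable_fst
    · exact Measurable.ite
        (measurableSet_lt (measurable_fst.comp measurable_snd)
          (ha.comp (measurable_fst.comp measurable_fst)))
        measurable_const measurable_const
    · exact Measurable.ite
        (measurableSet_lt (measurable_snd.comp measurable_snd)
          (hb.comp (measurable_snd.comp measurable_fst)))
        measurable_const measurable_const
  have hFbdd : ∀ p : (I × I) × (ℝ × ℝ), ‖Function.uncurry F p‖ ≤ 1 := by
    rintro ⟨z, st⟩
    simp only [Function.uncurry, hF, Real.norm_eq_abs, abs_mul]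
    have h1 : |f z.1 z.2| ≤ 1 := habs hrange z.1 z.2
    have h2 : |if st.1 < a z.1 then (1:ℝ) else 0| ≤ 1 := by split <;> simp
    have h3 : |if st.2 < b z.2 then (1:ℝ) else 0| ≤ 1 := by split <;> simp
    exact mul_le_one₀ (mul_le_one₀ h1 (abs_nonneg _) h2) (abs_nonneg _) h3
  have hFint : Integrable (Function.uncurry F) (volume.prod (Pm.prod Pm)) :=
    integrable_of_bdd hFmeas.aestronglyMeasurable 1 hFbdd
  have hpt : ∀ z : I × I, ∫ st, F z st ∂(Pm.prod Pm) = f z.1 z.2 * a z.1 * b z.2 := by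
    intro z
    have h0 : ∫ st, F z st ∂(Pm.prod Pm)
        = (∫ s, f z.1 z.2 * (if s < a z.1 then 1 else 0) ∂Pm)
          * ∫ t, (if t < b z.2 then (1:ℝ) else 0) ∂Pm :=
      integral_prod_mul (L := ℝ) (fun s => f z.1 z.2 * (if s < a z.1 then 1 else 0))
        (fun t => (if t < b z.2 then (1:ℝ) else 0))
    rw [h0, integral_const_mul, layer (ha01 z.1).1 (ha01 z.1).2, layer (hb01 z.2).1 (hb01 z.2).2]
  have hswap : ∫ z : I × I, f z.1 z.2 * a z.1 * b z.2
      = ∫ st, (∫ z : I × I, F z st) ∂(Pm.prod Pm) := by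
    rw [← integral_congr_ae (Filter.Eventually.of_forall hpt)]
    exact integral_integral_swap hFint
  have hinner : ∀ st : ℝ × ℝ, (∫ z : I × I, F z st)
      = ∫ z : I × I, Set.indicator ({x | st.1 < a x} ×ˢ {y | st.2 < b y})
          (fun z : I × I => f z.1 z.2) z := by
    intro st
    refine integral_congr_ae (Filter.Eventually.of_forall fun z => ?_)
    rw [Set.indicator_apply]
    by_cases h1 : st.1 < a z.1 <;> by_cases h2 : st.2 < b z.2 <;>
      simp [hF, Set.mem_prod, h1, h2]
  have hbound : ∀ st : ℝ × ℝ, |∫ z : I × I, F z st| ≤ cutNorm f := by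
    intro st
    rw [hinner st]
    exact le_csSup (cut_bddAbove hrange hmeas)
      ⟨{x | st.1 < a x}, {y | st.2 < b y},
        measurableSet_lt measurable_const ha, measurableSet_lt measurable_const hb, rfl⟩
  have hgint : Integrable (fun st : ℝ × ℝ => ∫ z : I × I, F z st) (Pm.prod Pm) := by
    have := hFint.swap.integral_prod_left
    simpa [Function.uncurry] using this
  calc |∫ z : I × I, f z.1 z.2 * a z.1 * b z.2|
      = |∫ st, (∫ z : I × I, F z st) ∂(Pm.prod Pm)| := by rw [hswap]
    _ ≤ ∫ st, |∫ z : I × I, F z st| ∂(Pm.prod Pm) := by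
        rw [← Real.norm_eq_abs (∫ st, _ ∂(Pm.prod Pm))]
        exact (norm_integral_le_integral_norm _).trans_eq
          (integral_congr_ae (Filter.Eventually.of_forall fun st => Real.norm_eq_abs _))
    _ ≤ ∫ _st, cutNorm f ∂(Pm.prod Pm) := integral_mono hgint.abs (integrable_const _) hbound
    _ = cutNorm f := by simp

/-- Bilinear form against [-1,1]-valued functions is bounded by 4 times the cut norm. -/
private lemma bilinear_le {f : I → I → ℝ}
    (hrange : ∀ x y, f x y ∈ Set.Icc (-1 : ℝ) 1)
    (hmeas : Measurable (fun z : I × I => f z.1 z.2))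
    (w v : I → ℝ) (hw : Measurable w) (hv : Measurable v)
    (hw1 : ∀ x, |w x| ≤ 1) (hv1 : ∀ x, |v x| ≤ 1) :
    |∫ z : I × I, f z.1 z.2 * w z.1 * v z.2| ≤ 4 * cutNorm f := by
  set wp : I → ℝ := fun x => max (w x) 0 with hwp
  set wm : I → ℝ := fun x => max (-(w x)) 0 with hwm
  set vp : I → ℝ := fun x => max (v x) 0 with hvp
  set vm : I → ℝ := fun x => max (-(v x)) 0 with hvm
  have hwpm : Measurable wp := hw.max measurable_const
  have hwmm : Measurable wm := hw.neg.max measurable_const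
  have hvpm : Measurable vp := hv.max measurable_const
  have hvmm : Measurable vm := hv.neg.max measurable_const
  have mem01 : ∀ (g : I → ℝ), (∀ x, |g x| ≤ 1) → ∀ x, (max (g x) 0) ∈ Set.Icc (0:ℝ) 1 := by
    intro g hg x
    exact ⟨le_max_right _ _, max_le (le_of_abs_le (hg x)) zero_le_one⟩
  have hwp01 : ∀ x, wp x ∈ Set.Icc (0:ℝ) 1 := mem01 w hw1
  have hwm01 : ∀ x, wm x ∈ Set.Icc (0:ℝ) 1 := mem01 (fun x => -(w x)) (by simpa using hw1)
  have hvp01 : ∀ x, vp x ∈ Set.Icc (0:ℝ) 1 := mem01 v hv1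
  have hvm01 : ∀ x, vm x ∈ Set.Icc (0:ℝ) 1 := mem01 (fun x => -(v x)) (by simpa using hv1)
  have hsplit : ∀ x, w x = wp x - wm x := fun x => by
    simp [hwp, hwm, max_zero_sub_max_neg_zero_eq_self]
  have hsplitv : ∀ x, v x = vp x - vm x := fun x => by
    simp [hvp, hvm, max_zero_sub_max_neg_zero_eq_self]
  have hint : ∀ (aa bb : I → ℝ), Measurable aa → Measurable bb →
      (∀ x, aa x ∈ Set.Icc (0:ℝ) 1) → (∀ x, bb x ∈ Set.Icc (0:ℝ) 1) →
      Integrable (fun z : I × I => f z.1 z.2 * aa z.1 * bb z.2) := by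
    intro aa bb haa hbb haa1 hbb1
    refine integrable_of_bdd
      (((hmeas.mul (haa.comp measurable_fst)).mul (hbb.comp measurable_snd)).aestronglyMeasurable)
      1 ?_
    intro z
    rw [Real.norm_eq_abs, abs_mul, abs_mul]
    have h2 : |aa z.1| ≤ 1 := abs_le.2 ⟨le_trans (by norm_num) (haa1 z.1).1, (haa1 z.1).2⟩
    have h3 : |bb z.2| ≤ 1 := abs_le.2 ⟨le_trans (by norm_num) (hbb1 z.2).1, (hbb1 z.2).2⟩
    exact mul_le_one₀ (mul_le_one₀ (habs hrange z.1 z.2) (abs_nonneg _) h2) (abs_nonneg _) h3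
  have h1 := bilinear_nonneg_le hrange hmeas wp vp hwpm hvpm hwp01 hvp01
  have h2 := bilinear_nonneg_le hrange hmeas wp vm hwpm hvmm hwp01 hvm01
  have h3 := bilinear_nonneg_le hrange hmeas wm vp hwmm hvpm hwm01 hvp01
  have h4 := bilinear_nonneg_le hrange hmeas wm vm hwmm hvmm hwm01 hvm01
  have hexp : ∫ z : I × I, f z.1 z.2 * w z.1 * v z.2
      = (∫ z : I × I, f z.1 z.2 * wp z.1 * vp z.2) - (∫ z : I × I, f z.1 z.2 * wp z.1 * vm z.2)
        - (∫ z : I × I, f z.1 z.2 * wm z.1 * vp z.2)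
        + (∫ z : I × I, f z.1 z.2 * wm z.1 * vm z.2) := by
    have hptw : ∀ z : I × I, f z.1 z.2 * w z.1 * v z.2
        = f z.1 z.2 * wp z.1 * vp z.2 - f z.1 z.2 * wp z.1 * vm z.2
          - f z.1 z.2 * wm z.1 * vp z.2 + f z.1 z.2 * wm z.1 * vm z.2 := by
      intro z
      rw [hsplit z.1, hsplitv z.2]; ring
    rw [integral_congr_ae (Filter.Eventually.of_forall hptw)]
    rw [integral_add, integral_sub, integral_sub]
    · exact hint wp vp hwpm hvpm hwp01 hvp01
    · exact hint wp vm hwpm hvmm hwp01 hvm01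
    · exact (hint wp vp hwpm hvpm hwp01 hvp01).sub (hint wp vm hwpm hvmm hwp01 hvm01)
    · exact hint wm vp hwmm hvpm hwm01 hvp01
    · exact ((hint wp vp hwpm hvpm hwp01 hvp01).sub (hint wp vm hwpm hvmm hwp01 hvm01)).sub
        (hint wm vp hwmm hvpm hwm01 hvp01)
    · exact hint wm vm hwmm hvmm hwm01 hvm01
  rw [hexp]
  calc |(∫ z : I × I, f z.1 z.2 * wp z.1 * vp z.2) - (∫ z : I × I, f z.1 z.2 * wp z.1 * vm z.2)
        - (∫ z : I × I, f z.1 z.2 * wm z.1 * vp z.2)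
        + (∫ z : I × I, f z.1 z.2 * wm z.1 * vm z.2)|
      ≤ |(∫ z : I × I, f z.1 z.2 * wp z.1 * vp z.2)| + |(∫ z : I × I, f z.1 z.2 * wp z.1 * vm z.2)|
        + |(∫ z : I × I, f z.1 z.2 * wm z.1 * vp z.2)|
        + |(∫ z : I × I, f z.1 z.2 * wm z.1 * vm z.2)| := by
        refine (abs_add_le _ _).trans ?_
        gcongr
        refine (abs_sub _ _).trans ?_
        gcongr
        exact abs_sub _ _
    _ ≤ cutNorm f + cutNorm f + cutNorm f + cutNorm f := by gcongr
    _ = 4 * cutNorm f := by ring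

end Main

/-- For a symmetric measurable `f : [0,1]² → [−1,1]`, `‖f‖_op⁴ ≤ 4 ‖f‖_□`. -/
theorem opNorm_pow_four_le_cutNorm
    (f : I → I → ℝ)
    (hrange : ∀ x y, f x y ∈ Set.Icc (-1 : ℝ) 1)
    (hsymm : ∀ x y, f x y = f y x)
    (hmeas : Measurable (fun z : I × I => f z.1 z.2)) :
    (opNorm f) ^ 4 ≤ 4 * cutNorm f := by
  classical
  have hc0 : 0 ≤ cutNorm f := cutNorm_nonneg hrange hmeas
  have h4c : (0:ℝ) ≤ 4 * cutNorm f := by linarith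
  set B := Real.sqrt (Real.sqrt (4 * cutNorm f)) with hBdef
  have hB0 : 0 ≤ B := Real.sqrt_nonneg _
  have hsec : ∀ x : I, Measurable (fun y => f x y) := fun x =>
    hmeas.comp (measurable_const.prodMk measurable_id)
  have hker : ∀ (g : I → ℝ), Measurable g → Measurable (fun x => ∫ y, f x y * g y) := by
    intro g hg
    have : StronglyMeasurable (fun z : I × I => f z.1 z.2 * g z.2) :=
      (hmeas.mul (hg.comp measurable_snd)).stronglyMeasurable
    exact this.integral_prod_right'.measurable
  have hintker : ∀ (g : I → ℝ), Integrable g volume → ∀ x : I, Measurable g →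
      Integrable (fun y => f x y * g y) volume := by
    intro g hgint x hg
    refine hgint.abs.mono' ((hsec x).mul hg).aestronglyMeasurable
      (Filter.Eventually.of_forall fun y => ?_)
    rw [Real.norm_eq_abs, abs_mul]
    exact mul_le_of_le_one_left (abs_nonneg _) (habs hrange x y)
  have hTbdd : ∀ (g : I → ℝ), Measurable g → Integrable g volume → (∫ y, |g y|) ≤ 1 →
      ∀ x, |∫ y, f x y * g y| ≤ 1 := by
    intro g hg hgint hgabs x
    calc |∫ y, f x y * g y| ≤ ∫ y, |f x y * g y| := by
          rw [← Real.norm_eq_abs (∫ y, f x y * g y)]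
          exact (norm_integral_le_integral_norm _).trans_eq
            (integral_congr_ae (Filter.Eventually.of_forall fun y => Real.norm_eq_abs _))
      _ ≤ ∫ y, |g y| := by
          refine integral_mono (hintker g hgint x hg).abs hgint.abs fun y => ?_
          rw [abs_mul]
          exact mul_le_of_le_one_left (abs_nonneg _) (habs hrange x y)
      _ ≤ 1 := hgabs
  -- Fubini identities
  have hfub : ∀ (g h : I → ℝ), Measurable g → Measurable h →
      (∀ x, |g x| ≤ 1) → Integrable h volume →
      ((∫ z : I × I, f z.1 z.2 * g z.1 * h z.2) = ∫ x, g x * (∫ y, f x y * h y))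
      ∧ ((∫ z : I × I, f z.1 z.2 * g z.1 * h z.2) = ∫ y, h y * (∫ x, f y x * g x)) := by
    intro g h hg hh hg1 hhint
    have hGmeas : Measurable (fun z : I × I => f z.1 z.2 * g z.1 * h z.2) :=
      (hmeas.mul (hg.comp measurable_fst)).mul (hh.comp measurable_snd)
    have hbint : Integrable (fun z : I × I => |h z.2|) (volume.prod volume) :=
      ((integrable_const (1:ℝ)).mul_prod hhint.abs).congr
        (Filter.Eventually.of_forall fun z => one_mul _)
    have hGint : Integrable (fun z : I × I => f z.1 z.2 * g z.1 * h z.2)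
        (volume.prod volume) := by
      refine hbint.mono' hGmeas.aestronglyMeasurable
        (Filter.Eventually.of_forall fun z => ?_)
      rw [Real.norm_eq_abs, abs_mul]
      refine mul_le_of_le_one_left (abs_nonneg _) ?_
      rw [abs_mul]
      exact mul_le_one₀ (habs hrange z.1 z.2) (abs_nonneg _) (hg1 z.1)
    constructor
    · rw [Measure.volume_eq_prod, integral_prod _ hGint]
      refine integral_congr_ae (Filter.Eventually.of_forall fun x => ?_)
      calc (∫ y, (fun z : I × I => f z.1 z.2 * g z.1 * h z.2) (x, y))
          = ∫ y, g x * (f x y * h y) := by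
            refine integral_congr_ae (Filter.Eventually.of_forall fun y => ?_)
            show f x y * g x * h y = g x * (f x y * h y)
            ring
        _ = g x * ∫ y, f x y * h y := integral_const_mul _ _
    · rw [Measure.volume_eq_prod, integral_prod_symm _ hGint]
      refine integral_congr_ae (Filter.Eventually.of_forall fun y => ?_)
      calc (∫ x, (fun z : I × I => f z.1 z.2 * g z.1 * h z.2) (x, y))
          = ∫ x, h y * (f y x * g x) := by
            refine integral_congr_ae (Filter.Eventually.of_forall fun x => ?_)
            show f x y * g x * h y = h y * (f y x * g x)
            rw [hsymm x y]; ring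
        _ = h y * ∫ x, f y x * g x := integral_const_mul _ _
  -- the key bound for each element of the opNorm set
  have key : ∀ r ∈ { c : ℝ | ∃ u : I → ℝ, MemLp u 2 ∧ (∫ y : I, (u y) ^ 2) ≤ 1 ∧
      c = Real.sqrt (∫ x : I, (∫ y : I, f x y * u y) ^ 2) }, r ≤ B := by
    rintro r ⟨u, hu, hu1, rfl⟩
    set u' : I → ℝ := hu.1.mk u with hu'def
    have hu'meas : Measurable u' := hu.1.stronglyMeasurable_mk.measurable
    have hu'ae : u =ᵐ[volume] u' := hu.1.ae_eq_mk
    have hu' : MemLp u' 2 := hu.ae_eq hu'ae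
    have hu'sq : (∫ y : I, (u' y)^2) ≤ 1 := by
      have he : (∫ y : I, (u y)^2) = ∫ y : I, (u' y)^2 :=
        integral_congr_ae (hu'ae.mono fun y hy => by simp only [hy])
      linarith
    have hu'int : Integrable u' volume := hu'.integrable one_le_two
    have hrw : (∫ x : I, (∫ y : I, f x y * u y) ^ 2)
        = ∫ x : I, (∫ y : I, f x y * u' y) ^ 2 := by
      refine integral_congr_ae (Filter.Eventually.of_forall fun x => ?_)
      show (∫ y : I, f x y * u y)^2 = (∫ y : I, f x y * u' y)^2
      congr 1
      refine integral_congr_ae (hu'ae.mono fun y hy => ?_)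
      show f x y * u y = f x y * u' y
      rw [hy]
    rw [hrw]
    set v : I → ℝ := fun x => ∫ y, f x y * u' y with hvdef
    have hvmeas : Measurable v := hker u' hu'meas
    have hu'abs : (∫ y, |u' y|) ≤ 1 := by
      have hone : MemLp (fun _ : I => (1:ℝ)) 2 volume := memLp_const 1
      have hCS := myCS hu' hone
      have e2 : (∫ _y : I, ((1:ℝ))^2) = (1:ℝ) := by simp
      have e3 : Real.sqrt (∫ y, (u' y)^2) ≤ 1 := by
        calc Real.sqrt (∫ y, (u' y)^2) ≤ Real.sqrt 1 := Real.sqrt_le_sqrt hu'sq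
          _ = 1 := Real.sqrt_one
      calc (∫ y, |u' y|) = ∫ y, |u' y| * |(1:ℝ)| := by simp
        _ ≤ Real.sqrt (∫ y, (u' y)^2) * Real.sqrt (∫ _y : I, ((1:ℝ))^2) := hCS
        _ ≤ 1 := by
            refine mul_le_one₀ e3 (Real.sqrt_nonneg _) ?_
            rw [e2, Real.sqrt_one]
    have hvb : ∀ x, |v x| ≤ 1 := hTbdd u' hu'meas hu'int hu'abs
    have hvint : Integrable v volume := integrable_of_bdd hvmeas.aestronglyMeasurable 1
      (fun x => by rw [Real.norm_eq_abs]; exact hvb x)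
    have hvabs : (∫ x, |v x|) ≤ 1 := by
      calc (∫ x, |v x|) ≤ ∫ _x : I, (1:ℝ) := integral_mono hvint.abs (integrable_const 1) hvb
        _ = 1 := by simp
    set Tv : I → ℝ := fun x => ∫ y, f x y * v y with hTvdef
    have hTvmeas : Measurable Tv := hker v hvmeas
    have hTvb : ∀ x, |Tv x| ≤ 1 := hTbdd v hvmeas hvint hvabs
    have hTvL2 : MemLp Tv 2 volume := MemLp.of_bound hTvmeas.aestronglyMeasurable 1
      (Filter.Eventually.of_forall fun x => by rw [Real.norm_eq_abs]; exact hTvb x)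
    have hA : (∫ x, (v x)^2) = ∫ y, u' y * Tv y := by
      obtain ⟨h1, h2⟩ := hfub v u' hvmeas hu'meas hvb hu'int
      calc (∫ x, (v x)^2) = ∫ x, v x * v x := by
            refine integral_congr_ae (Filter.Eventually.of_forall fun x => ?_)
            exact sq (v x)
        _ = ∫ z : I × I, f z.1 z.2 * v z.1 * u' z.2 := h1.symm
        _ = ∫ y, u' y * Tv y := h2
    have hTv2nonneg : 0 ≤ ∫ x, (Tv x)^2 := integral_nonneg fun x => sq_nonneg _
    have hB1 : |∫ y, u' y * Tv y| ≤ Real.sqrt (∫ x, (Tv x)^2) := by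
      calc |∫ y, u' y * Tv y| ≤ ∫ y, |u' y * Tv y| := by
            rw [← Real.norm_eq_abs (∫ y, u' y * Tv y)]
            exact (norm_integral_le_integral_norm _).trans_eq
              (integral_congr_ae (Filter.Eventually.of_forall fun y => Real.norm_eq_abs _))
        _ = ∫ y, |u' y| * |Tv y| := integral_congr_ae
            (Filter.Eventually.of_forall fun y => abs_mul _ _)
        _ ≤ Real.sqrt (∫ y, (u' y)^2) * Real.sqrt (∫ x, (Tv x)^2) := myCS hu' hTvL2
        _ ≤ 1 * Real.sqrt (∫ x, (Tv x)^2) := by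
            refine mul_le_mul_of_nonneg_right ?_ (Real.sqrt_nonneg _)
            calc Real.sqrt (∫ y, (u' y)^2) ≤ Real.sqrt 1 := Real.sqrt_le_sqrt hu'sq
              _ = 1 := Real.sqrt_one
        _ = Real.sqrt (∫ x, (Tv x)^2) := one_mul _
    have hB2 : (∫ x, (v x)^2)^2 ≤ ∫ x, (Tv x)^2 := by
      rw [hA]
      calc (∫ y, u' y * Tv y)^2 = |∫ y, u' y * Tv y|^2 := (sq_abs _).symm
        _ ≤ (Real.sqrt (∫ x, (Tv x)^2))^2 := by
            exact pow_le_pow_left₀ (abs_nonneg _) hB1 2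
        _ = ∫ x, (Tv x)^2 := Real.sq_sqrt hTv2nonneg
    have hC : (∫ x, (Tv x)^2) ≤ 4 * cutNorm f := by
      obtain ⟨h1, _⟩ := hfub Tv v hTvmeas hvmeas hTvb hvint
      have he : (∫ x, (Tv x)^2) = ∫ z : I × I, f z.1 z.2 * Tv z.1 * v z.2 := by
        rw [h1]
        refine integral_congr_ae (Filter.Eventually.of_forall fun x => ?_)
        show Tv x ^ 2 = Tv x * Tv x
        ring
      rw [he]
      exact le_trans (le_abs_self _) (bilinear_le hrange hmeas Tv v hTvmeas hvmeas hTvb hvb)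
    have hv2nonneg : 0 ≤ ∫ x, (v x)^2 := integral_nonneg fun x => sq_nonneg _
    have hfinal : (∫ x, (v x)^2) ≤ Real.sqrt (4 * cutNorm f) :=
      (Real.le_sqrt hv2nonneg h4c).2 (hB2.trans hC)
    exact Real.sqrt_le_sqrt hfinal
  have hople : opNorm f ≤ B := by
    rw [opNorm]
    exact Real.sSup_le key hB0
  have hop0 : 0 ≤ opNorm f := by
    rw [opNorm]
    refine le_csSup ⟨B, key⟩ ?_
    exact ⟨fun _ => 0, memLp_const 0, by simp, by simp⟩
  calc opNorm f ^ 4 ≤ B ^ 4 := pow_le_pow_left₀ hop0 hople 4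
    _ = 4 * cutNorm f := by
      have hBsq : B ^ 2 = Real.sqrt (4 * cutNorm f) := Real.sq_sqrt (Real.sqrt_nonneg _)
      calc B ^ 4 = (B ^ 2) ^ 2 := by ring
        _ = 4 * cutNorm f := by rw [hBsq, Real.sq_sqrt h4c]
end

section
/- For any symmetric measurable f : [0,1]² → [0,1] and any u ∈ L²([0,1]) with ‖u‖₂ = 1, one has ‖T_f u‖₂⁴ ≤ ∫_{[0,1]⁴} f(x,y) f(x,y') f(x',y) f(x',y') dx dx' dy dy', i.e., the fourth power of the operator norm of T_f is at most the homomorphism density t(C₄, f) of the 4-cycle. -/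
open MeasureTheory unitInterval

private lemma bdd_integrable {α : Type*} [MeasurableSpace α] {μ : Measure α}
    [IsFiniteMeasure μ] {g : α → ℝ} (hm : AEStronglyMeasurable g μ)
    (hb : ∀ a, ‖g a‖ ≤ 1) : Integrable g μ :=
  (integrable_const (1 : ℝ)).mono' hm (Filter.Eventually.of_forall hb)

private lemma integral_cauchy_schwarz {α : Type*} [MeasurableSpace α] {μ : Measure α}
    {g h : α → ℝ} (hg : Integrable (fun a => g a ^ 2) μ)
    (hh : Integrable (fun a => h a ^ 2) μ) (hgh : Integrable (fun a => g a * h a) μ) :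
    (∫ a, g a * h a ∂μ) ^ 2 ≤ (∫ a, g a ^ 2 ∂μ) * (∫ a, h a ^ 2 ∂μ) := by
  have key : ∀ t : ℝ,
      0 ≤ (∫ a, h a ^ 2 ∂μ) * (t * t) + (2 * ∫ a, g a * h a ∂μ) * t + ∫ a, g a ^ 2 ∂μ := by
    intro t
    have h0 : 0 ≤ ∫ a, (g a + t * h a) ^ 2 ∂μ := integral_nonneg fun a => sq_nonneg _
    have e : (fun a => (g a + t * h a) ^ 2)
        = fun a => g a ^ 2 + (2 * t) * (g a * h a) + (t * t) * h a ^ 2 := by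
      funext a; ring
    have i1 : Integrable (fun a => g a ^ 2 + (2 * t) * (g a * h a)) μ :=
      hg.add (hgh.const_mul _)
    have i2 : Integrable (fun a => (t * t) * h a ^ 2) μ := hh.const_mul _
    rw [e, integral_add i1 i2, integral_add hg (hgh.const_mul _),
      integral_const_mul, integral_const_mul] at h0
    linarith
  have hd := discrim_le_zero key
  rw [discrim] at hd
  nlinarith [hd]

/-- For a graphon `f : [0,1]² → [0,1]` and `u ∈ L²([0,1])` with `‖u‖₂ = 1`,
`‖T_f u‖₂⁴ ≤ t(C₄, f)`, the homomorphism density of the four-cycle. -/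
theorem Tf_norm_four_le_C4_density
    (f : I → I → ℝ)
    (hrange : ∀ x y, f x y ∈ Set.Icc (0 : ℝ) 1)
    (hsymm : ∀ x y, f x y = f y x)
    (hmeas : Measurable (fun z : I × I => f z.1 z.2))
    (u : I → ℝ) (hu : MemLp u 2) (hunorm : (∫ y : I, (u y) ^ 2) = 1) :
    (∫ x : I, (∫ y : I, f x y * u y) ^ 2) ^ 2
      ≤ ∫ w : (I × I) × I × I,
          f w.1.1 w.2.1 * f w.1.1 w.2.2 * f w.1.2 w.2.1 * f w.1.2 w.2.2 := by
  have hf0 : ∀ x y, 0 ≤ f x y := fun x y => (hrange x y).1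
  have hf1 : ∀ x y, f x y ≤ 1 := fun x y => (hrange x y).2
  have hfn : ∀ x y, ‖f x y‖ ≤ 1 := fun x y => by
    rw [Real.norm_eq_abs, abs_of_nonneg (hf0 x y)]; exact hf1 x y
  have hum : AEStronglyMeasurable u (volume : Measure I) := hu.1
  have hu1 : Integrable u (volume : Measure I) := hu.integrable one_le_two
  have hu2 : Integrable (fun y => u y ^ 2) (volume : Measure I) := hu.integrable_sq
  -- the kernel of T_f²
  set g : I × I → ℝ := fun p => ∫ x : I, f x p.1 * f x p.2 with hgdef
  -- measurability facts
  have hm1 : Measurable (fun z : I × (I × I) => f z.1 z.2.1) :=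
    hmeas.comp (measurable_fst.prodMk (measurable_snd.fst))
  have hm2 : Measurable (fun z : I × (I × I) => f z.1 z.2.2) :=
    hmeas.comp (measurable_fst.prodMk (measurable_snd.snd))
  have hgm : StronglyMeasurable g := by
    have : StronglyMeasurable (fun z : I × (I × I) => f z.1 z.2.1 * f z.1 z.2.2) :=
      (hm1.mul hm2).stronglyMeasurable
    exact this.integral_prod_left'
  have hgb : ∀ p : I × I, ‖g p‖ ≤ 1 := by
    intro p
    have := norm_integral_le_of_norm_le_const (C := 1)
      (μ := (volume : Measure I)) (f := fun x => f x p.1 * f x p.2)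
      (Filter.Eventually.of_forall fun x => by
        rw [norm_mul]
        exact mul_le_one₀ (hfn x p.1) (norm_nonneg _) (hfn x p.2))
    simpa using this
  -- abbreviation for u ⊗ u
  have huu : Integrable (fun p : I × I => |u p.1| * |u p.2|) ((volume : Measure I).prod volume) :=
    hu1.abs.mul_prod hu1.abs
  -- Step 1 : ∫ (T_f u)² = ∫∫ g(y,y') u(y) u(y')
  have hFm : AEStronglyMeasurable
      (fun z : I × (I × I) => (f z.1 z.2.1 * u z.2.1) * (f z.1 z.2.2 * u z.2.2))
      ((volume : Measure I).prod ((volume : Measure I).prod volume)) := by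
    exact (hm1.aestronglyMeasurable.mul (hum.comp_fst.comp_snd)).mul
      (hm2.aestronglyMeasurable.mul (hum.comp_snd.comp_snd))
  have hFint : Integrable
      (fun z : I × (I × I) => (f z.1 z.2.1 * u z.2.1) * (f z.1 z.2.2 * u z.2.2))
      ((volume : Measure I).prod ((volume : Measure I).prod volume)) := by
    have hbint : Integrable (fun z : I × (I × I) => |u z.2.1| * |u z.2.2|)
        ((volume : Measure I).prod ((volume : Measure I).prod volume)) := by
      have := ((integrable_const (1 : ℝ) : Integrable _ (volume : Measure I))).mul_prod huu
      simpa using this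
    refine hbint.mono' hFm (Filter.Eventually.of_forall fun z => ?_)
    have h1 := hfn z.1 z.2.1
    have h2 := hfn z.1 z.2.2
    have n1 : (0:ℝ) ≤ ‖f z.1 z.2.1‖ := norm_nonneg _
    have n2 : (0:ℝ) ≤ ‖f z.1 z.2.2‖ := norm_nonneg _
    have nu1 : (0:ℝ) ≤ ‖u z.2.1‖ := norm_nonneg _
    have nu2 : (0:ℝ) ≤ ‖u z.2.2‖ := norm_nonneg _
    calc ‖(f z.1 z.2.1 * u z.2.1) * (f z.1 z.2.2 * u z.2.2)‖
        = (‖f z.1 z.2.1‖ * ‖u z.2.1‖) * (‖f z.1 z.2.2‖ * ‖u z.2.2‖) := by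
          simp [norm_mul]
      _ ≤ (1 * ‖u z.2.1‖) * (1 * ‖u z.2.2‖) := by
          apply mul_le_mul
          · exact mul_le_mul_of_nonneg_right h1 nu1
          · exact mul_le_mul_of_nonneg_right h2 nu2
          · positivity
          · positivity
      _ = |u z.2.1| * |u z.2.2| := by simp [Real.norm_eq_abs]
  have step1 : (∫ x : I, (∫ y : I, f x y * u y) ^ 2)
      = ∫ p : I × I, g p * (u p.1 * u p.2) := by
    have e1 : ∀ x : I, (∫ y : I, f x y * u y) ^ 2
        = ∫ p : I × I, (f x p.1 * u p.1) * (f x p.2 * u p.2) := by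
      intro x
      rw [sq]
      exact (integral_prod_mul (fun y => f x y * u y) (fun y => f x y * u y)).symm
    calc (∫ x : I, (∫ y : I, f x y * u y) ^ 2)
        = ∫ x : I, ∫ p : I × I, (f x p.1 * u p.1) * (f x p.2 * u p.2) := by
          exact integral_congr_ae (Filter.Eventually.of_forall e1)
      _ = ∫ p : I × I, ∫ x : I, (f x p.1 * u p.1) * (f x p.2 * u p.2) := by
          exact integral_integral_swap hFint
      _ = ∫ p : I × I, g p * (u p.1 * u p.2) := by
          refine integral_congr_ae (Filter.Eventually.of_forall fun p => ?_)
          dsimp only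
          rw [show (fun x : I => f x p.1 * u p.1 * (f x p.2 * u p.2))
              = fun x : I => (f x p.1 * f x p.2) * (u p.1 * u p.2) from
            funext fun x => by ring, integral_mul_const]
  -- ingredients for Cauchy-Schwarz
  have hg2int : Integrable (fun p : I × I => g p ^ 2) (volume : Measure (I × I)) := by
    refine bdd_integrable ((hgm.measurable.pow_const 2).aestronglyMeasurable) fun p => ?_
    have := hgb p
    rw [Real.norm_eq_abs] at this ⊢
    rw [abs_pow]
    nlinarith [abs_nonneg (g p)]
  have hw2int : Integrable (fun p : I × I => (u p.1 * u p.2) ^ 2) (volume : Measure (I × I)) := by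
    have h := hu2.mul_prod hu2
    rw [Measure.volume_eq_prod]
    exact h.congr (Filter.Eventually.of_forall fun z => (mul_pow _ _ _).symm)
  have hgwint : Integrable (fun p : I × I => g p * (u p.1 * u p.2))
      (volume : Measure (I × I)) := by
    rw [Measure.volume_eq_prod]
    refine huu.mono' (hgm.aestronglyMeasurable.mul (hum.comp_fst.mul hum.comp_snd))
      (Filter.Eventually.of_forall fun p => ?_)
    calc ‖g p * (u p.1 * u p.2)‖ = ‖g p‖ * ‖u p.1 * u p.2‖ := norm_mul _ _
      _ ≤ 1 * ‖u p.1 * u p.2‖ := mul_le_mul_of_nonneg_right (hgb p) (norm_nonneg _)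
      _ = |u p.1| * |u p.2| := by simp [Real.norm_eq_abs, abs_mul]
  have hCS := integral_cauchy_schwarz hg2int hw2int hgwint
  -- Step 3 : the u ⊗ u term has norm one
  have step3 : (∫ p : I × I, (u p.1 * u p.2) ^ 2) = 1 := by
    have e : ∀ p : I × I, (u p.1 * u p.2) ^ 2 = u p.1 ^ 2 * u p.2 ^ 2 := fun p => mul_pow _ _ _
    have e' : (∫ p : I × I, u p.1 ^ 2 * u p.2 ^ 2)
        = (∫ y : I, u y ^ 2) * (∫ y : I, u y ^ 2) :=
      integral_prod_mul (fun y => u y ^ 2) (fun y => u y ^ 2)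
    rw [integral_congr_ae (Filter.Eventually.of_forall e), e', hunorm, mul_one]
  -- Step 4 : ∫∫ g² = t(C₄, f)
  have hGm : Measurable (fun z : (I × I) × (I × I) =>
      (f z.2.1 z.1.1 * f z.2.1 z.1.2) * (f z.2.2 z.1.1 * f z.2.2 z.1.2)) := by
    have a1 : Measurable (fun z : (I × I) × (I × I) => f z.2.1 z.1.1) :=
      hmeas.comp ((measurable_snd.fst).prodMk (measurable_fst.fst))
    have a2 : Measurable (fun z : (I × I) × (I × I) => f z.2.1 z.1.2) :=
      hmeas.comp ((measurable_snd.fst).prodMk (measurable_fst.snd))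
    have a3 : Measurable (fun z : (I × I) × (I × I) => f z.2.2 z.1.1) :=
      hmeas.comp ((measurable_snd.snd).prodMk (measurable_fst.fst))
    have a4 : Measurable (fun z : (I × I) × (I × I) => f z.2.2 z.1.2) :=
      hmeas.comp ((measurable_snd.snd).prodMk (measurable_fst.snd))
    exact (a1.mul a2).mul (a3.mul a4)
  have hbnd4 : ∀ z : (I × I) × (I × I),
      ‖(f z.2.1 z.1.1 * f z.2.1 z.1.2) * (f z.2.2 z.1.1 * f z.2.2 z.1.2)‖ ≤ 1 := by
    intro z
    rw [norm_mul, norm_mul, norm_mul]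
    have := hfn z.2.1 z.1.1; have := hfn z.2.1 z.1.2
    have := hfn z.2.2 z.1.1; have := hfn z.2.2 z.1.2
    refine mul_le_one₀ (mul_le_one₀ ?_ (norm_nonneg _) ?_) (by positivity) (mul_le_one₀ ?_ (norm_nonneg _) ?_) <;> assumption
  have hGint : Integrable (fun z : (I × I) × (I × I) =>
      (f z.2.1 z.1.1 * f z.2.1 z.1.2) * (f z.2.2 z.1.1 * f z.2.2 z.1.2))
      ((volume : Measure (I × I)).prod (volume : Measure (I × I))) :=
    bdd_integrable hGm.aestronglyMeasurable hbnd4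
  have step4 : (∫ p : I × I, g p ^ 2)
      = ∫ w : (I × I) × I × I,
          f w.1.1 w.2.1 * f w.1.1 w.2.2 * f w.1.2 w.2.1 * f w.1.2 w.2.2 := by
    have e : ∀ p : I × I, g p ^ 2
        = ∫ q : I × I, (f q.1 p.1 * f q.1 p.2) * (f q.2 p.1 * f q.2 p.2) := by
      intro p
      rw [sq, hgdef]
      exact (integral_prod_mul (fun x => f x p.1 * f x p.2) (fun x => f x p.1 * f x p.2)).symm
    calc (∫ p : I × I, g p ^ 2)
        = ∫ p : I × I, ∫ q : I × I, (f q.1 p.1 * f q.1 p.2) * (f q.2 p.1 * f q.2 p.2) := by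
          exact integral_congr_ae (Filter.Eventually.of_forall e)
      _ = ∫ q : I × I, ∫ p : I × I, (f q.1 p.1 * f q.1 p.2) * (f q.2 p.1 * f q.2 p.2) := by
          exact integral_integral_swap hGint
      _ = ∫ w : (I × I) × I × I,
          f w.1.1 w.2.1 * f w.1.1 w.2.2 * f w.1.2 w.2.1 * f w.1.2 w.2.2 := by
          have hp := integral_prod
            (μ := (volume : Measure (I × I))) (ν := (volume : Measure (I × I)))
            (fun w : (I × I) × I × I =>
              f w.1.1 w.2.1 * f w.1.1 w.2.2 * f w.1.2 w.2.1 * f w.1.2 w.2.2) (by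
            refine bdd_integrable ?_ ?_
            · have b1 : Measurable (fun w : (I × I) × (I × I) => f w.1.1 w.2.1) :=
                hmeas.comp ((measurable_fst.fst).prodMk (measurable_snd.fst))
              have b2 : Measurable (fun w : (I × I) × (I × I) => f w.1.1 w.2.2) :=
                hmeas.comp ((measurable_fst.fst).prodMk (measurable_snd.snd))
              have b3 : Measurable (fun w : (I × I) × (I × I) => f w.1.2 w.2.1) :=
                hmeas.comp ((measurable_fst.snd).prodMk (measurable_snd.fst))
              have b4 : Measurable (fun w : (I × I) × (I × I) => f w.1.2 w.2.2) :=
                hmeas.comp ((measurable_fst.snd).prodMk (measurable_snd.snd))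
              exact (((b1.mul b2).mul b3).mul b4).aestronglyMeasurable
            · intro w
              rw [norm_mul, norm_mul, norm_mul]
              have := hfn w.1.1 w.2.1; have := hfn w.1.1 w.2.2
              have := hfn w.1.2 w.2.1; have := hfn w.1.2 w.2.2
              refine mul_le_one₀ (mul_le_one₀ (mul_le_one₀ ?_ (norm_nonneg _) ?_)
                (norm_nonneg _) ?_) (norm_nonneg _) ?_ <;> assumption)
          refine Eq.trans ?_ hp.symm
          refine integral_congr_ae (Filter.Eventually.of_forall fun q => ?_)
          refine integral_congr_ae (Filter.Eventually.of_forall fun p => ?_)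
          dsimp only
          ring
  -- putting everything together
  rw [step1]
  calc (∫ p : I × I, g p * (u p.1 * u p.2)) ^ 2
      ≤ (∫ p : I × I, g p ^ 2) * (∫ p : I × I, (u p.1 * u p.2) ^ 2) := hCS
    _ = ∫ p : I × I, g p ^ 2 := by rw [step3, mul_one]
    _ = _ := step4
end

section
/- Fix p ∈ (0,1) and d ≥ 1, and let h_p(x) = x log(x/p) + (1−x) log((1−x)/(1−p)) for x ∈ [0,1]. Suppose r ∈ (0,1) is such that (r^d, h_p(r)) lies on the convex minorant of the function x ↦ h_p(x^{1/d}) on [0,1], and moreover the convex minorant is not linear in any neighborhood of r^d. If f : [0,1]² → [0,1] is measurable with p < r and (∫ f^d)^{1/d} ≥ r, then ∫ h_p(f(x,y)) dx dy ≥ h_p(r), with equality if and only if f = r almost everywhere. -/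
open MeasureTheory unitInterval

/-- The binomial rate function `h_p(x) = x log(x/p) + (1−x) log((1−x)/(1−p))`. -/
noncomputable def hbin (p x : ℝ) : ℝ :=
  x * Real.log (x / p) + (1 - x) * Real.log ((1 - x) / (1 - p))

/-- The convex minorant on `[0,1]`: the pointwise supremum of all convex functions
lying below `ψ` on `[0,1]`. -/
noncomputable def convexMinorant (ψ : ℝ → ℝ) (x : ℝ) : ℝ :=
  sSup { y : ℝ | ∃ g : ℝ → ℝ, ConvexOn ℝ (Set.Icc 0 1) g ∧
    (∀ t ∈ Set.Icc (0 : ℝ) 1, g t ≤ ψ t) ∧ y = g x }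

lemma log_ge_aux {t : ℝ} (ht : 0 < t) : 1 - 1 / t ≤ Real.log t := by
  have h := Real.log_le_sub_one_of_pos (x := 1 / t) (by positivity)
  rw [one_div, Real.log_inv] at h
  rw [one_div]
  linarith

lemma hbin_nonneg {p x : ℝ} (hp : p ∈ Set.Ioo (0 : ℝ) 1) (hx : x ∈ Set.Icc (0 : ℝ) 1) :
    0 ≤ hbin p x := by
  obtain ⟨hp0, hp1⟩ := hp
  obtain ⟨hx0, hx1⟩ := hx
  rcases eq_or_lt_of_le hx0 with h0 | h0
  · have : hbin p x = Real.log (1 / (1 - p)) := by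
      simp [hbin, ← h0]
    rw [this]
    apply Real.log_nonneg
    rw [le_div_iff₀ (by linarith)]; linarith
  rcases eq_or_lt_of_le hx1 with h1 | h1
  · have : hbin p x = Real.log (1 / p) := by
      simp [hbin, h1]
    rw [this]
    apply Real.log_nonneg
    rw [le_div_iff₀ hp0]; linarith
  have l1 : 1 - p / x ≤ Real.log (x / p) := by
    have := log_ge_aux (t := x / p) (by positivity)
    have : (1 : ℝ) - 1 / (x / p) ≤ Real.log (x / p) := this
    rw [one_div_div] at this; exact this
  have l2 : 1 - (1 - p) / (1 - x) ≤ Real.log ((1 - x) / (1 - p)) := by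
    have := log_ge_aux (t := (1 - x) / (1 - p)) (div_pos (by linarith) (by linarith))
    rwa [one_div_div] at this
  have e1 : x * (1 - p / x) = x - p := by field_simp
  have e2 : (1 - x) * (1 - (1 - p) / (1 - x)) = p - x := by
    have hx' : (1:ℝ) - x ≠ 0 := by linarith
    field_simp; ring
  have b1 : x - p ≤ x * Real.log (x / p) := by
    calc x - p = x * (1 - p / x) := e1.symm
    _ ≤ x * Real.log (x / p) := by apply mul_le_mul_of_nonneg_left l1 h0.le
  have b2 : p - x ≤ (1 - x) * Real.log ((1 - x) / (1 - p)) := by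
    calc p - x = (1 - x) * (1 - (1 - p) / (1 - x)) := e2.symm
    _ ≤ _ := by apply mul_le_mul_of_nonneg_left l2 (by linarith)
  unfold hbin; linarith

lemma hbin_pos {p x : ℝ} (hp : p ∈ Set.Ioo (0 : ℝ) 1) (hx : x ∈ Set.Ioo (0 : ℝ) 1)
    (hne : x ≠ p) : 0 < hbin p x := by
  obtain ⟨hp0, hp1⟩ := hp
  obtain ⟨hx0, hx1⟩ := hx
  have l1 : 1 - p / x < Real.log (x / p) := by
    have h := Real.log_lt_sub_one_of_pos (x := p / x) (by positivity)
      (by intro h; apply hne; field_simp at h; linarith)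
    have h2 : Real.log (p / x) = - Real.log (x / p) := by
      rw [← Real.log_inv]; congr 1; rw [inv_div]
    rw [h2] at h; linarith
  have l2 : 1 - (1 - p) / (1 - x) ≤ Real.log ((1 - x) / (1 - p)) := by
    have := log_ge_aux (t := (1 - x) / (1 - p)) (div_pos (by linarith) (by linarith))
    rwa [one_div_div] at this
  have e1 : x * (1 - p / x) = x - p := by field_simp
  have e2 : (1 - x) * (1 - (1 - p) / (1 - x)) = p - x := by
    have hx' : (1:ℝ) - x ≠ 0 := by linarith
    field_simp; ring
  have b1 : x - p < x * Real.log (x / p) := by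
    calc x - p = x * (1 - p / x) := e1.symm
    _ < x * Real.log (x / p) := by apply mul_lt_mul_of_pos_left l1 hx0
  have b2 : p - x ≤ (1 - x) * Real.log ((1 - x) / (1 - p)) := by
    calc p - x = (1 - x) * (1 - (1 - p) / (1 - x)) := e2.symm
    _ ≤ _ := by apply mul_le_mul_of_nonneg_left l2 (by linarith)
  unfold hbin; linarith

lemma hbin_le {p x : ℝ} (hp : p ∈ Set.Ioo (0 : ℝ) 1) (hx : x ∈ Set.Icc (0 : ℝ) 1) :
    hbin p x ≤ Real.log (1 / p) + Real.log (1 / (1 - p)) := by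
  obtain ⟨hp0, hp1⟩ := hp
  obtain ⟨hx0, hx1⟩ := hx
  have hlp : 0 ≤ Real.log (1 / p) := Real.log_nonneg (by rw [le_div_iff₀ hp0]; linarith)
  have hlq : 0 ≤ Real.log (1 / (1 - p)) :=
    Real.log_nonneg (by rw [le_div_iff₀ (by linarith : (0:ℝ) < 1 - p)]; linarith)
  have b1 : x * Real.log (x / p) ≤ Real.log (1 / p) := by
    rcases eq_or_lt_of_le hx0 with h0 | h0
    · simpa [← h0] using hlp
    · have hle : Real.log (x / p) ≤ Real.log (1 / p) :=
        Real.log_le_log (by positivity) (by gcongr)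
      calc x * Real.log (x / p) ≤ x * Real.log (1 / p) :=
            mul_le_mul_of_nonneg_left hle h0.le
      _ ≤ 1 * Real.log (1 / p) := mul_le_mul_of_nonneg_right hx1 hlp
      _ = _ := one_mul _
  have b2 : (1 - x) * Real.log ((1 - x) / (1 - p)) ≤ Real.log (1 / (1 - p)) := by
    rcases eq_or_lt_of_le hx1 with h1 | h1
    · simpa [h1] using hlq
    · have hle : Real.log ((1 - x) / (1 - p)) ≤ Real.log (1 / (1 - p)) :=
        Real.log_le_log (div_pos (by linarith) (by linarith)) (by gcongr <;> linarith)
      calc (1 - x) * Real.log ((1 - x) / (1 - p)) ≤ (1 - x) * Real.log (1 / (1 - p)) :=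
            mul_le_mul_of_nonneg_left hle (by linarith)
      _ ≤ 1 * Real.log (1 / (1 - p)) := mul_le_mul_of_nonneg_right (by linarith) hlq
      _ = _ := one_mul _
  unfold hbin; linarith

lemma hbin_measurable (p : ℝ) : Measurable (hbin p) := by
  unfold hbin
  exact (measurable_id.mul (Real.measurable_log.comp (measurable_id.div_const p))).add
    ((measurable_const.sub measurable_id).mul
      (Real.measurable_log.comp ((measurable_const.sub measurable_id).div_const (1 - p))))

lemma hbin_self (p : ℝ) : hbin p p = 0 := by
  unfold hbin
  rcases eq_or_ne p 0 with h | h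
  · simp [h]
  rcases eq_or_ne p 1 with h1 | h1
  · simp [h1]
  rw [div_self h, div_self (by intro h2; apply h1; linarith)]
  simp

set_option maxHeartbeats 1000000 in
/-- If `(r^d, h_p(r))` lies on the convex minorant of `x ↦ h_p(x^{1/d})`, the minorant
is not linear near `r^d`, and `f` is a `[0,1]`-valued kernel with `‖f‖_d ≥ r` where
`p < r`, then `∫ h_p(f) ≥ h_p(r)`, with equality iff `f = r` a.e. -/
theorem hbin_integral_ge_of_Ld_ge
    (p : ℝ) (hp : p ∈ Set.Ioo (0 : ℝ) 1)
    (d : ℕ) (hd : 1 ≤ d)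
    (r : ℝ) (hr : r ∈ Set.Ioo (0 : ℝ) 1) (hpr : p < r)
    (hmin : convexMinorant (fun x => hbin p (x ^ ((1 : ℝ) / d))) (r ^ d) = hbin p r)
    (hnotlin : ∀ ε > (0 : ℝ), ¬ ∃ a b : ℝ,
      ∀ x ∈ Set.Ioo (r ^ d - ε) (r ^ d + ε) ∩ Set.Icc (0 : ℝ) 1,
        convexMinorant (fun x => hbin p (x ^ ((1 : ℝ) / d))) x = a * x + b)
    (f : I → I → ℝ)
    (hrange : ∀ x y, f x y ∈ Set.Icc (0 : ℝ) 1)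
    (hmeas : Measurable (fun z : I × I => f z.1 z.2))
    (hnorm : r ≤ (∫ z : I × I, (f z.1 z.2) ^ d) ^ ((1 : ℝ) / d)) :
    hbin p r ≤ (∫ z : I × I, hbin p (f z.1 z.2)) ∧
      ((∫ z : I × I, hbin p (f z.1 z.2)) = hbin p r ↔
        ∀ᵐ z : I × I, f z.1 z.2 = r) := by
  obtain ⟨hp0, hp1⟩ := hp
  obtain ⟨hr0, hr1⟩ := hr
  set ψ : ℝ → ℝ := fun x => hbin p (x ^ ((1 : ℝ) / d)) with hψdef
  set φ : ℝ → ℝ := convexMinorant ψ with hφdef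
  have hdne : (d : ℝ) ≠ 0 := Nat.cast_ne_zero.mpr (by omega)
  have hroot : ∀ t : ℝ, 0 ≤ t → (t ^ d) ^ ((1 : ℝ) / d) = t := by
    intro t ht
    rw [← Real.rpow_natCast t d, ← Real.rpow_mul ht]
    rw [mul_one_div, div_self hdne, Real.rpow_one]
  have hψ_pow : ∀ t : ℝ, 0 ≤ t → ψ (t ^ d) = hbin p t := by
    intro t ht; simp only [hψdef]; rw [hroot t ht]
  have hψ_nonneg : ∀ t ∈ Set.Icc (0 : ℝ) 1, 0 ≤ ψ t := by
    intro t ht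
    exact hbin_nonneg ⟨hp0, hp1⟩
      ⟨Real.rpow_nonneg ht.1 _, Real.rpow_le_one ht.1 ht.2 (by positivity)⟩
  -- basic facts about the minorant
  have hzero_mem : ∀ x : ℝ, (0 : ℝ) ∈ { y : ℝ | ∃ g : ℝ → ℝ,
      ConvexOn ℝ (Set.Icc 0 1) g ∧ (∀ t ∈ Set.Icc (0 : ℝ) 1, g t ≤ ψ t) ∧ y = g x } :=
    fun x => ⟨fun _ => 0, convexOn_const 0 (convex_Icc 0 1), fun t ht => hψ_nonneg t ht, rfl⟩
  have hbdd : ∀ x ∈ Set.Icc (0 : ℝ) 1, BddAbove { y : ℝ | ∃ g : ℝ → ℝ,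
      ConvexOn ℝ (Set.Icc 0 1) g ∧ (∀ t ∈ Set.Icc (0 : ℝ) 1, g t ≤ ψ t) ∧ y = g x } := by
    rintro x hx
    exact ⟨ψ x, by rintro y ⟨g, hg, hgle, rfl⟩; exact hgle x hx⟩
  have hφ_le : ∀ x ∈ Set.Icc (0 : ℝ) 1, φ x ≤ ψ x := by
    intro x hx
    refine csSup_le ⟨0, hzero_mem x⟩ ?_
    rintro y ⟨g, hg, hgle, rfl⟩; exact hgle x hx
  have hg_le_φ : ∀ g : ℝ → ℝ, ConvexOn ℝ (Set.Icc 0 1) g →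
      (∀ t ∈ Set.Icc (0 : ℝ) 1, g t ≤ ψ t) → ∀ x ∈ Set.Icc (0 : ℝ) 1, g x ≤ φ x := by
    intro g hg hgle x hx
    exact le_csSup (hbdd x hx) ⟨g, hg, hgle, rfl⟩
  have hφconv : ConvexOn ℝ (Set.Icc 0 1) φ := by
    refine ⟨convex_Icc 0 1, fun x hx y hy a b ha hb hab => ?_⟩
    refine csSup_le ⟨0, hzero_mem _⟩ ?_
    rintro v ⟨g, hg, hgle, rfl⟩
    calc g (a • x + b • y) ≤ a • g x + b • g y := hg.2 hx hy ha hb hab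
    _ ≤ a • φ x + b • φ y := by
        simp only [smul_eq_mul]
        exact add_le_add (mul_le_mul_of_nonneg_left (hg_le_φ g hg hgle x hx) ha)
          (mul_le_mul_of_nonneg_left (hg_le_φ g hg hgle y hy) hb)
  -- key points
  have hrd0 : (0 : ℝ) < r ^ d := by positivity
  have hrd1 : r ^ d < 1 := pow_lt_one₀ hr0.le hr1 (by omega)
  have hrd_mem : r ^ d ∈ Set.Icc (0 : ℝ) 1 := ⟨hrd0.le, hrd1.le⟩
  have hpdlt : p ^ d < r ^ d := pow_lt_pow_left₀ hpr hp0.le (by omega)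
  have hpd_mem : p ^ d ∈ Set.Icc (0 : ℝ) 1 :=
    ⟨by positivity, (pow_lt_one₀ hp0.le hp1 (by omega)).le⟩
  have hφ_rd : φ (r ^ d) = hbin p r := hmin
  have hφ_pd : φ (p ^ d) ≤ 0 := by
    have := hφ_le _ hpd_mem
    rwa [hψ_pow p hp0.le, hbin_self] at this
  have hhr_pos : 0 < hbin p r := hbin_pos ⟨hp0, hp1⟩ ⟨hr0, hr1⟩ (by linarith)
  -- the supporting line at r^d
  set T : Set ℝ := (fun x => (φ x - φ (r ^ d)) / (x - r ^ d)) '' Set.Ioc (r ^ d) 1 with hTdef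
  set c₀ : ℝ := (φ (r ^ d) - φ (p ^ d)) / (r ^ d - p ^ d) with hc₀def
  have hc₀pos : 0 < c₀ := div_pos (by rw [hφ_rd]; linarith) (by linarith)
  have hTne : T.Nonempty := ⟨_, ⟨1, ⟨hrd1, le_refl 1⟩, rfl⟩⟩
  have hTlb : ∀ y ∈ T, c₀ ≤ y := by
    rintro y ⟨x, hx, rfl⟩
    exact hφconv.slope_mono_adjacent hpd_mem ⟨by linarith [hx.1], hx.2⟩ hpdlt hx.1
  set a : ℝ := sInf T with hadef
  have haT : ∀ y ∈ T, a ≤ y := fun y hy => csInf_le ⟨c₀, hTlb⟩ hy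
  have hapos : 0 < a := hc₀pos.trans_le (le_csInf hTne hTlb)
  set L : ℝ → ℝ := fun x => hbin p r + a * (x - r ^ d) with hLdef
  have hL_le_φ : ∀ x ∈ Set.Icc (0 : ℝ) 1, L x ≤ φ x := by
    intro x hx
    rcases lt_trichotomy x (r ^ d) with h | h | h
    · have h1 : (φ (r ^ d) - φ x) / (r ^ d - x) ≤ a := by
        refine le_csInf hTne ?_
        rintro y ⟨z, hz, rfl⟩
        exact hφconv.slope_mono_adjacent hx ⟨by linarith [hz.1], hz.2⟩ h hz.1
      have h2 := (div_le_iff₀ (by linarith : (0:ℝ) < r ^ d - x)).mp h1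
      simp only [hLdef]
      rw [← hφ_rd]
      nlinarith
    · simp only [hLdef, h]
      rw [← hφ_rd]; ring_nf; simp
    · have h1 : a ≤ (φ x - φ (r ^ d)) / (x - r ^ d) := haT _ ⟨x, ⟨h, hx.2⟩, rfl⟩
      have h2 := (le_div_iff₀ (by linarith : (0:ℝ) < x - r ^ d)).mp h1
      simp only [hLdef]
      rw [← hφ_rd]
      nlinarith
  have hL_le_ψ : ∀ x ∈ Set.Icc (0 : ℝ) 1, L x ≤ ψ x :=
    fun x hx => (hL_le_φ x hx).trans (hφ_le x hx)
  -- integration setup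
  set F : I × I → ℝ := fun z => f z.1 z.2 with hFdef
  have hF01 : ∀ z, F z ∈ Set.Icc (0 : ℝ) 1 := fun z => hrange _ _
  have hFd01 : ∀ z, F z ^ d ∈ Set.Icc (0 : ℝ) 1 :=
    fun z => ⟨pow_nonneg (hF01 z).1 d, pow_le_one₀ (hF01 z).1 (hF01 z).2⟩
  have hFd_meas : Measurable fun z => F z ^ d := hmeas.pow_const d
  have hFd_int : Integrable (fun z => F z ^ d) := by
    refine Integrable.mono' (integrable_const 1) hFd_meas.aestronglyMeasurable ?_
    exact Filter.Eventually.of_forall fun z => by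
      rw [Real.norm_eq_abs, abs_of_nonneg (hFd01 z).1]; exact (hFd01 z).2
  set C : ℝ := Real.log (1 / p) + Real.log (1 / (1 - p)) with hCdef
  have hH_meas : Measurable fun z => hbin p (F z) := (hbin_measurable p).comp hmeas
  have hH_int : Integrable (fun z => hbin p (F z)) := by
    refine Integrable.mono' (integrable_const C) hH_meas.aestronglyMeasurable ?_
    refine Filter.Eventually.of_forall fun z => ?_
    rw [Real.norm_eq_abs, abs_of_nonneg (hbin_nonneg ⟨hp0, hp1⟩ (hF01 z))]
    exact hbin_le ⟨hp0, hp1⟩ (hF01 z)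
  have hLF_int : Integrable (fun z => L (F z ^ d)) := by
    have : (fun z => L (F z ^ d)) = fun z => a * (F z ^ d) + (hbin p r - a * r ^ d) := by
      funext z; simp only [hLdef]; ring
    rw [this]
    exact (hFd_int.const_mul a).add (integrable_const _)
  set m : ℝ := ∫ z : I × I, F z ^ d with hmdef
  have hm0 : 0 ≤ m := integral_nonneg fun z => (hFd01 z).1
  have hm_ge : r ^ d ≤ m := by
    calc r ^ d ≤ (m ^ ((1 : ℝ) / d)) ^ d := pow_le_pow_left₀ hr0.le hnorm d
    _ = m := by
        rw [← Real.rpow_natCast (m ^ ((1 : ℝ) / d)) d, ← Real.rpow_mul hm0]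
        rw [one_div_mul_cancel hdne, Real.rpow_one]
  have hLint : ∫ z : I × I, L (F z ^ d) = hbin p r + a * (m - r ^ d) := by
    have he : (fun z : I × I => L (F z ^ d)) =
        fun z => a * (F z ^ d) + (hbin p r - a * r ^ d) := by
      funext z; simp only [hLdef]; ring
    rw [he, integral_add (hFd_int.const_mul a) (integrable_const _),
      integral_const_mul, integral_const]
    simp only [measure_univ, ENNReal.toReal_one, probReal_univ, one_smul, ← hmdef]
    ring
  have hpoint : ∀ z : I × I, L (F z ^ d) ≤ hbin p (F z) := by
    intro z
    rw [← hψ_pow (F z) (hF01 z).1]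
    exact hL_le_ψ _ (hFd01 z)
  have hineq1 : ∫ z : I × I, L (F z ^ d) ≤ ∫ z : I × I, hbin p (F z) :=
    integral_mono hLF_int hH_int hpoint
  have hmain : hbin p r ≤ ∫ z : I × I, hbin p (F z) := by
    have h1 : 0 ≤ a * (m - r ^ d) := mul_nonneg hapos.le (by linarith)
    linarith [hineq1, hLint.symm.le]
  refine ⟨hmain, ?_, ?_⟩
  · -- equality implies f = r a.e.
    intro heq
    set G : I × I → ℝ := fun z => hbin p (F z) - L (F z ^ d) with hGdef
    have hGnn : ∀ z, 0 ≤ G z := fun z => sub_nonneg.mpr (hpoint z)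
    have hGint : Integrable G := hH_int.sub hLF_int
    have hGval : ∫ z : I × I, G z = -(a * (m - r ^ d)) := by
      simp only [hGdef]
      rw [integral_sub hH_int hLF_int, heq, hLint]; ring
    have hGnn' : 0 ≤ ∫ z : I × I, G z := integral_nonneg hGnn
    have hm_eq : m = r ^ d := by
      have : 0 ≤ -(a * (m - r ^ d)) := hGval ▸ hGnn'
      nlinarith
    have hGzero : ∫ z : I × I, G z = 0 := by rw [hGval, hm_eq]; ring
    have hae0 : ∀ᵐ z : I × I, G z = 0 := by
      have := (integral_eq_zero_iff_of_nonneg hGnn hGint).mp hGzero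
      filter_upwards [this] with z hz using hz
    have haeC : ∀ᵐ z : I × I, ψ (F z ^ d) = L (F z ^ d) := by
      filter_upwards [hae0] with z hz
      rw [hψ_pow (F z) (hF01 z).1]
      simp only [hGdef] at hz; linarith
    by_cases hsplit : (∃ x ∈ Set.Icc (0 : ℝ) 1, x < r ^ d ∧ ψ x = L x) ∧
        (∃ x ∈ Set.Icc (0 : ℝ) 1, r ^ d < x ∧ ψ x = L x)
    · exfalso
      obtain ⟨⟨x₁, hx₁I, hx₁lt, hx₁e⟩, ⟨x₂, hx₂I, hx₂lt, hx₂e⟩⟩ := hsplit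
      have hφx₁ : φ x₁ = L x₁ :=
        le_antisymm (by rw [← hx₁e]; exact hφ_le x₁ hx₁I) (hL_le_φ x₁ hx₁I)
      have hφx₂ : φ x₂ = L x₂ :=
        le_antisymm (by rw [← hx₂e]; exact hφ_le x₂ hx₂I) (hL_le_φ x₂ hx₂I)
      set ε : ℝ := min (r ^ d - x₁) (x₂ - r ^ d) with hεdef
      refine hnotlin ε (lt_min (by linarith) (by linarith)) ⟨a, hbin p r - a * r ^ d, ?_⟩
      intro x hx
      obtain ⟨hxIoo, hxIcc⟩ := hx
      have hε1 : ε ≤ r ^ d - x₁ := min_le_left _ _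
      have hε2 : ε ≤ x₂ - r ^ d := min_le_right _ _
      have hxlo : x₁ ≤ x := by have := hxIoo.1; linarith
      have hxhi : x ≤ x₂ := by have := hxIoo.2; linarith
      have hDconv : ConvexOn ℝ (Set.Icc (0:ℝ) 1) (fun x => φ x - L x) := by
        refine hφconv.sub ?_
        refine ⟨convex_Icc 0 1, fun u hu v hv s t hs ht hst => ?_⟩
        simp only [hLdef, smul_eq_mul]
        have he : s * (hbin p r + a * (u - r ^ d)) + t * (hbin p r + a * (v - r ^ d)) =
            hbin p r + a * (s * u + t * v - r ^ d) := by
          linear_combination (hbin p r - a * r ^ d) * hst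
        linarith [he.le]
      have hDx : (fun x => φ x - L x) x ≤ max ((fun x => φ x - L x) x₁) ((fun x => φ x - L x) x₂) := by
        refine hDconv.le_on_segment hx₁I hx₂I ?_
        rw [segment_eq_Icc (by linarith : x₁ ≤ x₂)]
        exact ⟨hxlo, hxhi⟩
      have : φ x ≤ L x := by
        simp only [hφx₁, hφx₂, sub_self, max_self] at hDx
        linarith [hDx]
      have hφx : φ x = L x := le_antisymm this (hL_le_φ x hxIcc)
      rw [hφx]; simp only [hLdef]; ring
    · rw [not_and_or] at hsplit
      have key : ∀ᵐ z : I × I, F z = r := by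
        rcases hsplit with hA | hB
        · push_neg at hA
          have hge : ∀ᵐ z : I × I, r ^ d ≤ F z ^ d := by
            filter_upwards [haeC] with z hz
            by_contra hlt
            push_neg at hlt
            exact hA _ (hFd01 z) hlt hz
          have h0 : ∀ᵐ z : I × I, F z ^ d - r ^ d = 0 := by
            have hint : Integrable (fun z : I × I => F z ^ d - r ^ d) :=
              hFd_int.sub (integrable_const _)
            have hnn : 0 ≤ᵐ[volume] fun z : I × I => F z ^ d - r ^ d := by
              filter_upwards [hge] with z hz using sub_nonneg.mpr hz
            have hz : ∫ z : I × I, (F z ^ d - r ^ d) = 0 := by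
              rw [integral_sub hFd_int (integrable_const _), integral_const]
              simp only [measure_univ, ENNReal.toReal_one, probReal_univ, one_smul, ← hmdef]
              rw [hm_eq]; ring
            have := (integral_eq_zero_iff_of_nonneg_ae hnn hint).mp hz
            filter_upwards [this] with z hz using hz
          filter_upwards [h0] with z hz
          have hpow : F z ^ d = r ^ d := by linarith
          exact (pow_left_inj₀ (hF01 z).1 hr0.le (by omega)).mp hpow
        · push_neg at hB
          have hge : ∀ᵐ z : I × I, F z ^ d ≤ r ^ d := by
            filter_upwards [haeC] with z hz
            by_contra hlt
            push_neg at hlt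
            exact hB _ (hFd01 z) hlt hz
          have h0 : ∀ᵐ z : I × I, r ^ d - F z ^ d = 0 := by
            have hint : Integrable (fun z : I × I => r ^ d - F z ^ d) :=
              (integrable_const _).sub hFd_int
            have hnn : 0 ≤ᵐ[volume] fun z : I × I => r ^ d - F z ^ d := by
              filter_upwards [hge] with z hz using sub_nonneg.mpr hz
            have hz : ∫ z : I × I, (r ^ d - F z ^ d) = 0 := by
              rw [integral_sub (integrable_const _) hFd_int, integral_const]
              simp only [measure_univ, ENNReal.toReal_one, probReal_univ, one_smul, ← hmdef]
              rw [hm_eq]; ring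
            have := (integral_eq_zero_iff_of_nonneg_ae hnn hint).mp hz
            filter_upwards [this] with z hz using hz
          filter_upwards [h0] with z hz
          have hpow : F z ^ d = r ^ d := by linarith
          exact (pow_left_inj₀ (hF01 z).1 hr0.le (by omega)).mp hpow
      exact key
  · -- f = r a.e. implies equality
    intro hae
    have : ∫ z : I × I, hbin p (F z) = ∫ _z : I × I, hbin p r := by
      refine integral_congr_ae ?_
      filter_upwards [hae] with z hz
      exact congrArg (hbin p) hz
    rw [this, integral_const]
    simp [measure_univ]
end

section
/- Fix γ > 1 and set p₀(γ) = (γ−1)/(γ−1 + e^{γ/(γ−1)}). If p ≥ p₀(γ), then the function x ↦ h_p(x^{1/γ}) is convex on (0,1), where h_p(x) = x log(x/p) + (1−x) log((1−x)/(1−p)). -/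
lemma hasDerivAt_hbin {p u : ℝ} (hp0 : 0 < p) (hp1 : p < 1) (hu0 : 0 < u) (hu1 : u < 1) :
    HasDerivAt (hbin p)
      (Real.log u - Real.log (1 - u) + (Real.log (1 - p) - Real.log p)) u := by
  have h1 : HasDerivAt (fun y : ℝ => y * Real.log (y / p)) (Real.log (u / p) + 1) u := by
    have := (hasDerivAt_id u).mul (((hasDerivAt_id u).div_const p).log
      (by positivity))
    refine this.congr_deriv ?_
    simp only [id, Pi.sub_apply]
    field_simp
  have h2 : HasDerivAt (fun y : ℝ => (1 - y) * Real.log ((1 - y) / (1 - p)))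
      (-Real.log ((1 - u) / (1 - p)) - 1) u := by
    have hu1' : (1 : ℝ) - u ≠ 0 := by linarith
    have hp1' : (1 : ℝ) - p ≠ 0 := by linarith
    have hr : HasDerivAt (fun y : ℝ => (1 - y) / (1 - p)) (-1 / (1 - p)) u := by
      have := ((hasDerivAt_const u (1 : ℝ)).sub (hasDerivAt_id u)).div_const (1 - p)
      refine this.congr_deriv ?_
      ring
    have := ((hasDerivAt_const u (1 : ℝ)).sub (hasDerivAt_id u)).mul
      (hr.log (by positivity))
    refine this.congr_deriv ?_
    simp only [id, Pi.sub_apply]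
    field_simp
    ring
  have := h1.add h2
  have heq : Real.log u - Real.log (1 - u) + (Real.log (1 - p) - Real.log p)
      = Real.log (u / p) + 1 + (-Real.log ((1 - u) / (1 - p)) - 1) := by
    rw [Real.log_div hu0.ne' hp0.ne', Real.log_div (by linarith) (by linarith)]
    ring
  rw [heq]
  exact this

lemma key_ineq (γ : ℝ) (hγ : 1 < γ) (p : ℝ) (hp : p ∈ Set.Ioo (0 : ℝ) 1)
    (hp0 : (γ - 1) / (γ - 1 + Real.exp (γ / (γ - 1))) ≤ p)
    {u : ℝ} (hu0 : 0 < u) (hu1 : u < 1) :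
    (γ - 1) * (Real.log u - Real.log (1 - u) + (Real.log (1 - p) - Real.log p))
      ≤ 1 / (1 - u) := by
  have hg1 : 0 < γ - 1 := by linarith
  set c : ℝ := γ / (γ - 1) with hc
  have hec : 0 < Real.exp c := Real.exp_pos c
  set p₀ : ℝ := (γ - 1) / (γ - 1 + Real.exp c) with hp₀
  have hden : 0 < γ - 1 + Real.exp c := by linarith
  have hp₀pos : 0 < p₀ := div_pos hg1 hden
  have hp₀lt : p₀ < 1 := by
    rw [hp₀, div_lt_one hden]; linarith
  -- log((1-p)/p) ≤ log((1-p₀)/p₀) = c - log(γ-1)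
  have h1p₀ : 1 - p₀ = Real.exp c / (γ - 1 + Real.exp c) := by
    rw [hp₀]; field_simp; ring
  have hlogp₀ : Real.log (1 - p₀) - Real.log p₀ = c - Real.log (γ - 1) := by
    rw [h1p₀, hp₀, Real.log_div hec.ne' hden.ne', Real.log_div hg1.ne' hden.ne',
      Real.log_exp]
    ring
  have hCle : Real.log (1 - p) - Real.log p ≤ c - Real.log (γ - 1) := by
    rw [← hlogp₀]
    have h1 : Real.log p₀ ≤ Real.log p := Real.log_le_log hp₀pos hp0
    have h2 : Real.log (1 - p) ≤ Real.log (1 - p₀) := by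
      apply Real.log_le_log (by linarith [hp.2]) (by linarith)
    linarith
  -- log(u/((γ-1)(1-u))) ≤ u/((γ-1)(1-u)) - 1
  have h1u : 0 < 1 - u := by linarith
  have ht : 0 < u / ((γ - 1) * (1 - u)) := by positivity
  have hlog := Real.log_le_sub_one_of_pos ht
  rw [Real.log_div hu0.ne' (by positivity), Real.log_mul hg1.ne' h1u.ne'] at hlog
  -- combine
  have hkey : Real.log u - Real.log (1 - u) + (Real.log (1 - p) - Real.log p)
      ≤ u / ((γ - 1) * (1 - u)) - 1 + c := by
    have := hCle
    nlinarith [hlog]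
  calc (γ - 1) * (Real.log u - Real.log (1 - u) + (Real.log (1 - p) - Real.log p))
      ≤ (γ - 1) * (u / ((γ - 1) * (1 - u)) - 1 + c) := by
        exact mul_le_mul_of_nonneg_left hkey hg1.le
    _ = 1 / (1 - u) := by
        rw [hc]; field_simp; ring

/-- For `γ > 1` and `p ≥ p₀(γ) = (γ−1)/(γ−1+e^{γ/(γ−1)})`, the function
`x ↦ h_p(x^{1/γ})` is convex on `(0,1)`. -/
theorem convexOn_hbin_rpow_of_p_ge
    (γ : ℝ) (hγ : 1 < γ)
    (p : ℝ) (hp : p ∈ Set.Ioo (0 : ℝ) 1)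
    (hp0 : (γ - 1) / (γ - 1 + Real.exp (γ / (γ - 1))) ≤ p) :
    ConvexOn ℝ (Set.Ioo (0 : ℝ) 1) (fun x => hbin p (x ^ (1 / γ))) := by
  have hγ0 : (0 : ℝ) < γ := by linarith
  set C : ℝ := Real.log (1 - p) - Real.log p with hC
  set f' : ℝ → ℝ := fun x =>
    (Real.log (x ^ (1 / γ)) - Real.log (1 - x ^ (1 / γ)) + C) * (1 / γ * x ^ (1 / γ - 1))
    with hf'def
  set f'' : ℝ → ℝ := fun x =>
    (x ^ (1 / γ) / (x ^ 2 * γ ^ 2)) *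
      (1 / (1 - x ^ (1 / γ)) -
        (γ - 1) * (Real.log (x ^ (1 / γ)) - Real.log (1 - x ^ (1 / γ)) + C)) with hf''def
  -- basic facts about u = x^(1/γ)
  have hu : ∀ x ∈ Set.Ioo (0 : ℝ) 1, 0 < x ^ (1 / γ) ∧ x ^ (1 / γ) < 1 := by
    intro x hx
    refine ⟨Real.rpow_pos_of_pos hx.1 _, ?_⟩
    exact Real.rpow_lt_one hx.1.le hx.2 (by positivity)
  have hd1 : ∀ x ∈ Set.Ioo (0 : ℝ) 1,
      HasDerivAt (fun x => hbin p (x ^ (1 / γ))) (f' x) x := by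
    intro x hx
    obtain ⟨hu0, hu1⟩ := hu x hx
    have hr : HasDerivAt (fun x : ℝ => x ^ (1 / γ)) (1 / γ * x ^ (1 / γ - 1)) x :=
      Real.hasDerivAt_rpow_const (Or.inl hx.1.ne')
    exact (hasDerivAt_hbin hp.1 hp.2 hu0 hu1).comp x hr
  have hd2 : ∀ x ∈ Set.Ioo (0 : ℝ) 1, HasDerivAt f' (f'' x) x := by
    intro x hx
    obtain ⟨hu0, hu1⟩ := hu x hx
    have hx0 : (0 : ℝ) < x := hx.1
    have h1u : (0 : ℝ) < 1 - x ^ (1 / γ) := by linarith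
    have hr : HasDerivAt (fun x : ℝ => x ^ (1 / γ)) (1 / γ * x ^ (1 / γ - 1)) x :=
      Real.hasDerivAt_rpow_const (Or.inl hx0.ne')
    have hA : HasDerivAt
        (fun x : ℝ => Real.log (x ^ (1 / γ)) - Real.log (1 - x ^ (1 / γ)) + C)
        ((1 / γ * x ^ (1 / γ - 1)) / x ^ (1 / γ)
          + (1 / γ * x ^ (1 / γ - 1)) / (1 - x ^ (1 / γ))) x := by
      have h1 : HasDerivAt (fun x : ℝ => Real.log (x ^ (1 / γ)))
          ((1 / γ * x ^ (1 / γ - 1)) / x ^ (1 / γ)) x := hr.log hu0.ne'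
      have h2 : HasDerivAt (fun x : ℝ => Real.log (1 - x ^ (1 / γ)))
          ((0 - 1 / γ * x ^ (1 / γ - 1)) / (1 - x ^ (1 / γ))) x :=
        (((hasDerivAt_const x (1 : ℝ)).sub hr).log h1u.ne')
      have := (h1.sub h2).add_const C
      refine this.congr_deriv ?_
      ring
    have hB : HasDerivAt (fun x : ℝ => 1 / γ * x ^ (1 / γ - 1))
        (1 / γ * ((1 / γ - 1) * x ^ (1 / γ - 1 - 1))) x :=
      (Real.hasDerivAt_rpow_const (Or.inl hx0.ne')).const_mul (1 / γ)
    have hmul := hA.mul hB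
    refine hmul.congr_deriv ?_
    have e1 : x ^ (1 / γ - 1) = x ^ (1 / γ) / x := by
      rw [Real.rpow_sub hx0, Real.rpow_one]
    have e2 : x ^ (1 / γ - 1 - 1) = x ^ (1 / γ) / x / x := by
      rw [Real.rpow_sub hx0, Real.rpow_one, Real.rpow_sub hx0, Real.rpow_one]
    simp only [hf''def, e1, e2]
    field_simp
    ring
  have hnn : ∀ x ∈ Set.Ioo (0 : ℝ) 1, 0 ≤ f'' x := by
    intro x hx
    obtain ⟨hu0, hu1⟩ := hu x hx
    have hkey := key_ineq γ hγ p hp hp0 hu0 hu1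
    have h1 : (0 : ℝ) ≤ x ^ (1 / γ) / (x ^ 2 * γ ^ 2) := by positivity
    have h2 : (0 : ℝ) ≤ 1 / (1 - x ^ (1 / γ)) -
        (γ - 1) * (Real.log (x ^ (1 / γ)) - Real.log (1 - x ^ (1 / γ)) + C) := by
      rw [hC]; linarith
    exact mul_nonneg h1 h2
  have hint : interior (Set.Ioo (0 : ℝ) 1) = Set.Ioo (0 : ℝ) 1 :=
    interior_Ioo
  refine convexOn_of_hasDerivWithinAt2_nonneg (f' := f') (f'' := f'') (convex_Ioo 0 1)
    (fun x hx => (hd1 x hx).continuousAt.continuousWithinAt)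
    (fun x hx => ?_) (fun x hx => ?_) (fun x hx => ?_)
  · rw [hint] at hx ⊢
    exact (hd1 x hx).hasDerivWithinAt
  · rw [hint] at hx ⊢
    exact (hd2 x hx).hasDerivWithinAt
  · rw [hint] at hx
    exact hnn x hx
end
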